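/- arXiv:1805.00616 — 7 statements merged into one kernel-verified Lean document; each statement's English description precedes it below -/
import Mathlib

section
/- Let ŵ be any minimizer over W of the truncated empirical risk R̂_{ψ∘ℓ1}, and let w* be any minimizer over W of R_{ℓ1}. Then for every ε > 0 and every 0 < δ < 1/2, with probability at least 1 − 2δ over the i.i.d. sample, R_{ℓ1}(ŵ) − R_{ℓ1}(w*) ≤ 2ε·E[‖x‖] + α·ε²·E[‖x‖²] + (3α/2)·sup_{w∈W} R_{ℓ2}(w) + (1/(nα))·log(N(W,ε)/δ²). -/
open MeasureTheory Real

/-- The ℓ1-risk `R_{ℓ1}(w) = E_{(x,y)∼P}[|y − ⟨x,w⟩|]`. -/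
noncomputable def l1Risk {H : Type*} [NormedAddCommGroup H] [InnerProductSpace ℝ H]
    [MeasurableSpace H] (P : Measure (H × ℝ)) (w : H) : ℝ :=
  ∫ z, |z.2 - (inner ℝ z.1 w : ℝ)| ∂P

/-- The ℓ2-risk `R_{ℓ2}(w) = E_{(x,y)∼P}[(y − ⟨x,w⟩)²]`. -/
noncomputable def l2Risk {H : Type*} [NormedAddCommGroup H] [InnerProductSpace ℝ H]
    [MeasurableSpace H] (P : Measure (H × ℝ)) (w : H) : ℝ :=
  ∫ z, (z.2 - (inner ℝ z.1 w : ℝ)) ^ 2 ∂P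

/-- The truncated empirical risk `R̂_{ψ∘ℓ1}(w) = (1/(nα)) Σ_i ψ(α|y_i − ⟨x_i,w⟩|)`. -/
noncomputable def truncEmpRisk {H : Type*} [NormedAddCommGroup H] [InnerProductSpace ℝ H]
    (ψ : ℝ → ℝ) (α : ℝ) (n : ℕ) (ω : Fin n → H × ℝ) (w : H) : ℝ :=
  (1 / (n * α)) * ∑ i, ψ (α * |(ω i).2 - (inner ℝ (ω i).1 w : ℝ)|)

/-- The covering number `N(W, ε)`: the minimal cardinality of a finite ε-net of `W`
consisting of points of `W`. -/
noncomputable def coveringNumber {H : Type*} [NormedAddCommGroup H] (W : Set H) (ε : ℝ) : ℕ :=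
  sInf {k | ∃ N : Finset H, ↑N ⊆ W ∧ N.card = k ∧ ∀ w ∈ W, ∃ v ∈ N, ‖w - v‖ ≤ ε}

theorem quad_pos1 (x : ℝ) : 0 < 1 + x + x ^ 2 / 2 := by nlinarith [sq_nonneg (x + 1)]
theorem quad_pos2 (x : ℝ) : 0 < 1 - x + x ^ 2 / 2 := by nlinarith [sq_nonneg (x - 1)]

theorem aux_conc {Z : Type*} [MeasurableSpace Z] (P : Measure Z) [IsProbabilityMeasure P]
    (n : ℕ) (h G : Z → ℝ) (hm : Measurable h) (hG : Integrable G P)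
    (hle : ∀ z, Real.exp (h z) ≤ G z) (c t : ℝ) (hc : ∫ z, G z ∂P ≤ Real.exp c) :
    Measure.pi (fun _ : Fin n => P) {ω | ↑n * c + t ≤ ∑ i, h (ω i)} ≤
      ENNReal.ofReal (Real.exp (-t)) := by
  letI : MeasureSpace Z := ⟨P⟩
  haveI : IsProbabilityMeasure (volume : Measure Z) := ‹IsProbabilityMeasure P›
  have hexpInt : Integrable (fun z => Real.exp (h z)) P :=
    hG.mono' hm.exp.aestronglyMeasurable (Filter.Eventually.of_forall fun z => by
      rw [Real.norm_eq_abs, abs_of_pos (Real.exp_pos _)]; exact hle z)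
  have hvol : (Measure.pi fun _ : Fin n => P) = (volume : Measure (Fin n → Z)) :=
    (volume_pi).symm
  have hFint : Integrable (fun ω : Fin n → Z => ∏ i, Real.exp (h (ω i)))
      (Measure.pi fun _ : Fin n => P) := by
    rw [hvol]
    exact Integrable.fintype_prod (f := fun _ : Fin n => fun z => Real.exp (h z))
      fun i => hexpInt
  have hprod : ∫ ω : Fin n → Z, ∏ i, Real.exp (h (ω i)) ∂(Measure.pi fun _ : Fin n => P)
      = (∫ z, Real.exp (h z) ∂P) ^ n := by
    rw [hvol]
    simpa [hvol] using MeasureTheory.integral_fintype_prod_eq_pow (ι := Fin n) (μ := P)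
      (fun z => Real.exp (h z))
  have hIpos : (0:ℝ) ≤ ∫ z, Real.exp (h z) ∂P := integral_nonneg fun z => (Real.exp_pos _).le
  have hIc : ∫ z, Real.exp (h z) ∂P ≤ Real.exp c :=
    le_trans (integral_mono hexpInt hG hle) hc
  have hFbound : ∫ ω : Fin n → Z, ∏ i, Real.exp (h (ω i)) ∂(Measure.pi fun _ : Fin n => P)
      ≤ Real.exp ((n:ℝ) * c) := by
    rw [hprod, Real.exp_nat_mul]
    exact pow_le_pow_left₀ hIpos hIc n
  have markov := mul_meas_ge_le_integral_of_nonneg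
    (μ := Measure.pi fun _ : Fin n => P)
    (Filter.Eventually.of_forall fun ω => Finset.prod_nonneg fun i _ => (Real.exp_pos _).le)
    hFint (Real.exp ((n:ℝ) * c + t))
  have hset : {ω : Fin n → Z | ↑n * c + t ≤ ∑ i, h (ω i)}
      = {ω : Fin n → Z | Real.exp ((n:ℝ)*c + t) ≤ ∏ i, Real.exp (h (ω i))} := by
    ext ω
    simp [← Real.exp_sum, Real.exp_le_exp]
  rw [hset]
  have hne : (Measure.pi fun _ : Fin n => P)
      {ω : Fin n → Z | Real.exp ((n:ℝ)*c + t) ≤ ∏ i, Real.exp (h (ω i))} ≠ ⊤ :=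
    measure_ne_top _ _
  rw [ENNReal.le_ofReal_iff_toReal_le hne (Real.exp_pos _).le]
  have hpos := Real.exp_pos ((n:ℝ)*c + t)
  have hchain := le_trans markov hFbound
  have hkey : Real.exp ((n:ℝ)*c) = Real.exp ((n:ℝ)*c + t) * Real.exp (-t) := by
    rw [← Real.exp_add]; ring_nf
  rw [hkey] at hchain
  exact (mul_le_mul_iff_right₀ hpos).mp hchain

theorem net_event_bound {H : Type*} [NormedAddCommGroup H] [InnerProductSpace ℝ H]
    [MeasurableSpace H] [BorelSpace H]
    (P : Measure (H × ℝ)) [IsProbabilityMeasure P] (ψ : ℝ → ℝ)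
    (hψmono : Monotone ψ) (hψlb : ∀ x : ℝ, -Real.log (1 - x + x ^ 2 / 2) ≤ ψ x)
    (n : ℕ) (α ε : ℝ) (hα : 0 < α) (v : H)
    (hxInt : Integrable (fun z : H × ℝ => ‖z.1‖) P)
    (hI1 : Integrable (fun z : H × ℝ => |z.2 - (inner ℝ z.1 v : ℝ)|) P)
    (hu2 : Integrable (fun z : H × ℝ => (|z.2 - (inner ℝ z.1 v : ℝ)| - ε * ‖z.1‖) ^ 2) P)
    (q t : ℝ)
    (hq : ∫ z, (|z.2 - (inner ℝ z.1 v : ℝ)| - ε * ‖z.1‖) ^ 2 ∂P ≤ q) :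
    Measure.pi (fun _ : Fin n => P)
      {ω | ↑n * (-(α * ((∫ z, |z.2 - (inner ℝ z.1 v : ℝ)| ∂P) - ε * ∫ z, ‖z.1‖ ∂P))
            + α ^ 2 * q / 2) + t ≤
        ∑ i, -ψ (α * (|(ω i).2 - (inner ℝ (ω i).1 v : ℝ)| - ε * ‖(ω i).1‖))} ≤
      ENNReal.ofReal (Real.exp (-t)) := by
  have hcont : Continuous fun z : H × ℝ => (inner ℝ z.1 v : ℝ) :=
    Continuous.inner continuous_fst continuous_const
  have hmU : Measurable fun z : H × ℝ => |z.2 - (inner ℝ z.1 v : ℝ)| - ε * ‖z.1‖ :=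
    ((measurable_snd.sub hcont.measurable).abs).sub (measurable_fst.norm.const_mul ε)
  have Iu : Integrable (fun z : H × ℝ => |z.2 - (inner ℝ z.1 v : ℝ)| - ε * ‖z.1‖) P :=
    hI1.sub (hxInt.const_mul ε)
  have hm : Measurable fun z : H × ℝ =>
      -ψ (α * (|z.2 - (inner ℝ z.1 v : ℝ)| - ε * ‖z.1‖)) :=
    (hψmono.measurable.comp (hmU.const_mul α)).neg
  have hG1 : Integrable (fun z : H × ℝ =>
      1 - α * (|z.2 - (inner ℝ z.1 v : ℝ)| - ε * ‖z.1‖)) P :=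
    (integrable_const 1).sub (Iu.const_mul α)
  have hG2 : Integrable (fun z : H × ℝ =>
      α ^ 2 / 2 * (|z.2 - (inner ℝ z.1 v : ℝ)| - ε * ‖z.1‖) ^ 2) P :=
    hu2.const_mul (α ^ 2 / 2)
  have hG : Integrable (fun z : H × ℝ =>
      1 - α * (|z.2 - (inner ℝ z.1 v : ℝ)| - ε * ‖z.1‖)
        + α ^ 2 / 2 * (|z.2 - (inner ℝ z.1 v : ℝ)| - ε * ‖z.1‖) ^ 2) P :=
    hG1.add hG2
  have hle : ∀ z : H × ℝ,
      Real.exp (-ψ (α * (|z.2 - (inner ℝ z.1 v : ℝ)| - ε * ‖z.1‖)))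
        ≤ 1 - α * (|z.2 - (inner ℝ z.1 v : ℝ)| - ε * ‖z.1‖)
          + α ^ 2 / 2 * (|z.2 - (inner ℝ z.1 v : ℝ)| - ε * ‖z.1‖) ^ 2 := by
    intro z
    set x := α * (|z.2 - (inner ℝ z.1 v : ℝ)| - ε * ‖z.1‖) with hx
    have h1 : Real.exp (-ψ x) ≤ 1 - x + x ^ 2 / 2 := by
      have h2 := Real.exp_le_exp.2 (neg_le.mp (hψlb x))
      rwa [Real.exp_log (quad_pos2 x)] at h2
    calc Real.exp (-ψ x) ≤ 1 - x + x ^ 2 / 2 := h1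
      _ = 1 - α * (|z.2 - (inner ℝ z.1 v : ℝ)| - ε * ‖z.1‖)
          + α ^ 2 / 2 * (|z.2 - (inner ℝ z.1 v : ℝ)| - ε * ‖z.1‖) ^ 2 := by
        rw [hx]; ring
  have hc : ∫ z, (1 - α * (|z.2 - (inner ℝ z.1 v : ℝ)| - ε * ‖z.1‖)
        + α ^ 2 / 2 * (|z.2 - (inner ℝ z.1 v : ℝ)| - ε * ‖z.1‖) ^ 2) ∂P
      ≤ Real.exp (-(α * ((∫ z, |z.2 - (inner ℝ z.1 v : ℝ)| ∂P) - ε * ∫ z, ‖z.1‖ ∂P))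
          + α ^ 2 * q / 2) := by
    have ib : ∫ z, (1 - α * (|z.2 - (inner ℝ z.1 v : ℝ)| - ε * ‖z.1‖)) ∂P
        = 1 - α * ∫ z, (|z.2 - (inner ℝ z.1 v : ℝ)| - ε * ‖z.1‖) ∂P := by
      have i1 : Integrable (fun _ : H × ℝ => (1:ℝ)) P := integrable_const 1
      have i2 : Integrable (fun z : H × ℝ =>
          α * (|z.2 - (inner ℝ z.1 v : ℝ)| - ε * ‖z.1‖)) P := Iu.const_mul α
      rw [integral_sub i1 i2, integral_const_mul, integral_const]
      simp
    have e1 : ∫ z, (1 - α * (|z.2 - (inner ℝ z.1 v : ℝ)| - ε * ‖z.1‖)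
          + α ^ 2 / 2 * (|z.2 - (inner ℝ z.1 v : ℝ)| - ε * ‖z.1‖) ^ 2) ∂P
        = 1 - α * ∫ z, (|z.2 - (inner ℝ z.1 v : ℝ)| - ε * ‖z.1‖) ∂P
          + α ^ 2 / 2 * ∫ z, (|z.2 - (inner ℝ z.1 v : ℝ)| - ε * ‖z.1‖) ^ 2 ∂P := by
      rw [integral_add hG1 hG2, integral_const_mul, ib]
    have e2 : ∫ z, (|z.2 - (inner ℝ z.1 v : ℝ)| - ε * ‖z.1‖) ∂P
        = (∫ z, |z.2 - (inner ℝ z.1 v : ℝ)| ∂P) - ε * ∫ z, ‖z.1‖ ∂P := by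
      have i3 : Integrable (fun z : H × ℝ => ε * ‖z.1‖) P := hxInt.const_mul ε
      rw [integral_sub hI1 i3, integral_const_mul]
    rw [e1, e2]
    set A : ℝ := (∫ z, |z.2 - (inner ℝ z.1 v : ℝ)| ∂P) - ε * ∫ z, ‖z.1‖ ∂P
    set B : ℝ := ∫ z, (|z.2 - (inner ℝ z.1 v : ℝ)| - ε * ‖z.1‖) ^ 2 ∂P
    have h3 : 1 - α * A + α ^ 2 / 2 * B ≤ Real.exp (-(α * A) + α ^ 2 / 2 * B) := by
      have := Real.add_one_le_exp (-(α * A) + α ^ 2 / 2 * B)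
      linarith
    have h4 : Real.exp (-(α * A) + α ^ 2 / 2 * B) ≤ Real.exp (-(α * A) + α ^ 2 * q / 2) := by
      apply Real.exp_le_exp.2
      have : α ^ 2 / 2 * B ≤ α ^ 2 / 2 * q :=
        mul_le_mul_of_nonneg_left hq (by positivity)
      linarith
    linarith
  exact aux_conc P n _ _ hm hG hle _ t hc

theorem star_event_bound {H : Type*} [NormedAddCommGroup H] [InnerProductSpace ℝ H]
    [MeasurableSpace H] [BorelSpace H]
    (P : Measure (H × ℝ)) [IsProbabilityMeasure P] (ψ : ℝ → ℝ)
    (hψmono : Monotone ψ) (hψub : ∀ x : ℝ, ψ x ≤ Real.log (1 + x + x ^ 2 / 2))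
    (n : ℕ) (α : ℝ) (hα : 0 < α) (w : H)
    (hI1 : Integrable (fun z : H × ℝ => |z.2 - (inner ℝ z.1 w : ℝ)|) P)
    (hI2 : Integrable (fun z : H × ℝ => (z.2 - (inner ℝ z.1 w : ℝ)) ^ 2) P)
    (t : ℝ) :
    Measure.pi (fun _ : Fin n => P)
      {ω | ↑n * (α * (∫ z, |z.2 - (inner ℝ z.1 w : ℝ)| ∂P)
            + α ^ 2 * (∫ z, (z.2 - (inner ℝ z.1 w : ℝ)) ^ 2 ∂P) / 2) + t ≤
        ∑ i, ψ (α * |(ω i).2 - (inner ℝ (ω i).1 w : ℝ)|)} ≤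
      ENNReal.ofReal (Real.exp (-t)) := by
  have hcont : Continuous fun z : H × ℝ => (inner ℝ z.1 w : ℝ) :=
    Continuous.inner continuous_fst continuous_const
  have hmL : Measurable fun z : H × ℝ => |z.2 - (inner ℝ z.1 w : ℝ)| :=
    (measurable_snd.sub hcont.measurable).abs
  have hm : Measurable fun z : H × ℝ => ψ (α * |z.2 - (inner ℝ z.1 w : ℝ)|) :=
    hψmono.measurable.comp (hmL.const_mul α)
  have hG1 : Integrable (fun z : H × ℝ => 1 + α * |z.2 - (inner ℝ z.1 w : ℝ)|) P :=
    (integrable_const 1).add (hI1.const_mul α)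
  have hG2 : Integrable (fun z : H × ℝ =>
      α ^ 2 / 2 * (z.2 - (inner ℝ z.1 w : ℝ)) ^ 2) P := hI2.const_mul (α ^ 2 / 2)
  have hG : Integrable (fun z : H × ℝ => 1 + α * |z.2 - (inner ℝ z.1 w : ℝ)|
      + α ^ 2 / 2 * (z.2 - (inner ℝ z.1 w : ℝ)) ^ 2) P := hG1.add hG2
  have hle : ∀ z : H × ℝ, Real.exp (ψ (α * |z.2 - (inner ℝ z.1 w : ℝ)|))
      ≤ 1 + α * |z.2 - (inner ℝ z.1 w : ℝ)| + α ^ 2 / 2 * (z.2 - (inner ℝ z.1 w : ℝ)) ^ 2 := by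
    intro z
    set x := α * |z.2 - (inner ℝ z.1 w : ℝ)| with hx
    have h1 : Real.exp (ψ x) ≤ 1 + x + x ^ 2 / 2 := by
      have h2 := Real.exp_le_exp.2 (hψub x)
      rwa [Real.exp_log (quad_pos1 x)] at h2
    have h3 : x ^ 2 = α ^ 2 * (z.2 - (inner ℝ z.1 w : ℝ)) ^ 2 := by
      rw [hx, mul_pow, sq_abs]
    calc Real.exp (ψ x) ≤ 1 + x + x ^ 2 / 2 := h1
      _ = 1 + α * |z.2 - (inner ℝ z.1 w : ℝ)|
          + α ^ 2 / 2 * (z.2 - (inner ℝ z.1 w : ℝ)) ^ 2 := by rw [h3, hx]; ring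
  have hc : ∫ z, (1 + α * |z.2 - (inner ℝ z.1 w : ℝ)|
        + α ^ 2 / 2 * (z.2 - (inner ℝ z.1 w : ℝ)) ^ 2) ∂P
      ≤ Real.exp (α * (∫ z, |z.2 - (inner ℝ z.1 w : ℝ)| ∂P)
          + α ^ 2 * (∫ z, (z.2 - (inner ℝ z.1 w : ℝ)) ^ 2 ∂P) / 2) := by
    have ib : ∫ z, (1 + α * |z.2 - (inner ℝ z.1 w : ℝ)|) ∂P
        = 1 + α * ∫ z, |z.2 - (inner ℝ z.1 w : ℝ)| ∂P := by
      rw [integral_add (integrable_const (1:ℝ)) (hI1.const_mul α), integral_const_mul,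
        integral_const]
      simp
    have e1 : ∫ z, (1 + α * |z.2 - (inner ℝ z.1 w : ℝ)|
          + α ^ 2 / 2 * (z.2 - (inner ℝ z.1 w : ℝ)) ^ 2) ∂P
        = 1 + α * ∫ z, |z.2 - (inner ℝ z.1 w : ℝ)| ∂P
          + α ^ 2 / 2 * ∫ z, (z.2 - (inner ℝ z.1 w : ℝ)) ^ 2 ∂P := by
      rw [integral_add hG1 hG2, integral_const_mul, ib]
    rw [e1]
    set A : ℝ := ∫ z, |z.2 - (inner ℝ z.1 w : ℝ)| ∂P
    set B : ℝ := ∫ z, (z.2 - (inner ℝ z.1 w : ℝ)) ^ 2 ∂P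
    have h3 := Real.add_one_le_exp (α * A + α ^ 2 * B / 2)
    have h4 : 1 + α * A + α ^ 2 / 2 * B = (α * A + α ^ 2 * B / 2) + 1 := by ring
    linarith
  exact aux_conc P n _ _ hm hG hle _ t hc

theorem u2_facts {H : Type*} [NormedAddCommGroup H] [InnerProductSpace ℝ H]
    [MeasurableSpace H] [BorelSpace H]
    (P : Measure (H × ℝ)) [IsProbabilityMeasure P] (v : H) (ε : ℝ) (hε : 0 ≤ ε)
    (hxInt : Integrable (fun z : H × ℝ => ‖z.1‖) P)
    (hA2 : Integrable (fun z : H × ℝ => ‖z.1‖ ^ 2) P)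
    (hI2 : Integrable (fun z : H × ℝ => (z.2 - (inner ℝ z.1 v : ℝ)) ^ 2) P) :
    Integrable (fun z : H × ℝ => (|z.2 - (inner ℝ z.1 v : ℝ)| - ε * ‖z.1‖) ^ 2) P ∧
      ∫ z, (|z.2 - (inner ℝ z.1 v : ℝ)| - ε * ‖z.1‖) ^ 2 ∂P
        ≤ (∫ z, (z.2 - (inner ℝ z.1 v : ℝ)) ^ 2 ∂P) + ε ^ 2 * ∫ z, ‖z.1‖ ^ 2 ∂P := by
  have hcont : Continuous fun z : H × ℝ => (inner ℝ z.1 v : ℝ) :=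
    Continuous.inner continuous_fst continuous_const
  have hmL : Measurable fun z : H × ℝ => |z.2 - (inner ℝ z.1 v : ℝ)| :=
    (measurable_snd.sub hcont.measurable).abs
  have hGdom : Integrable (fun z : H × ℝ =>
      (1:ℝ)/2 * ((z.2 - (inner ℝ z.1 v : ℝ)) ^ 2 + ‖z.1‖ ^ 2)) P :=
    (hI2.add hA2).const_mul ((1:ℝ)/2)
  have hcross : Integrable (fun z : H × ℝ => |z.2 - (inner ℝ z.1 v : ℝ)| * ‖z.1‖) P := by
    apply hGdom.mono' ((hmL.mul measurable_fst.norm).aestronglyMeasurable)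
    refine Filter.Eventually.of_forall fun z => ?_
    have h1 : (0:ℝ) ≤ |z.2 - (inner ℝ z.1 v : ℝ)| * ‖z.1‖ :=
      mul_nonneg (abs_nonneg _) (norm_nonneg _)
    show ‖|z.2 - (inner ℝ z.1 v : ℝ)| * ‖z.1‖‖ ≤ _
    rw [Real.norm_eq_abs, abs_of_nonneg h1]
    nlinarith [sq_nonneg (|z.2 - (inner ℝ z.1 v : ℝ)| - ‖z.1‖), sq_abs (z.2 - (inner ℝ z.1 v : ℝ))]
  have hdecomp : (fun z : H × ℝ => (|z.2 - (inner ℝ z.1 v : ℝ)| - ε * ‖z.1‖) ^ 2)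
      = fun z : H × ℝ => (z.2 - (inner ℝ z.1 v : ℝ)) ^ 2
          - 2 * ε * (|z.2 - (inner ℝ z.1 v : ℝ)| * ‖z.1‖) + ε ^ 2 * ‖z.1‖ ^ 2 := by
    funext z
    rw [sub_sq, sq_abs]
    ring
  have h1 : Integrable (fun z : H × ℝ => (z.2 - (inner ℝ z.1 v : ℝ)) ^ 2
      - 2 * ε * (|z.2 - (inner ℝ z.1 v : ℝ)| * ‖z.1‖)) P := hI2.sub (hcross.const_mul (2 * ε))
  have h2 : Integrable (fun z : H × ℝ => ε ^ 2 * ‖z.1‖ ^ 2) P := hA2.const_mul (ε ^ 2)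
  have Iu2 : Integrable (fun z : H × ℝ =>
      (|z.2 - (inner ℝ z.1 v : ℝ)| - ε * ‖z.1‖) ^ 2) P := by
    rw [hdecomp]; exact h1.add h2
  refine ⟨Iu2, ?_⟩
  have hb : ∫ z, (|z.2 - (inner ℝ z.1 v : ℝ)| - ε * ‖z.1‖) ^ 2 ∂P
      ≤ ∫ z, ((z.2 - (inner ℝ z.1 v : ℝ)) ^ 2 + ε ^ 2 * ‖z.1‖ ^ 2) ∂P := by
    apply integral_mono Iu2 (hI2.add h2)
    intro z
    have h3 : (0:ℝ) ≤ ε * (|z.2 - (inner ℝ z.1 v : ℝ)| * ‖z.1‖) :=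
      mul_nonneg hε (mul_nonneg (abs_nonneg _) (norm_nonneg _))
    have h4 : (|z.2 - (inner ℝ z.1 v : ℝ)| - ε * ‖z.1‖) ^ 2
        = (z.2 - (inner ℝ z.1 v : ℝ)) ^ 2 - 2 * ε * (|z.2 - (inner ℝ z.1 v : ℝ)| * ‖z.1‖)
          + ε ^ 2 * ‖z.1‖ ^ 2 := by rw [sub_sq, sq_abs]; ring
    simp only [Pi.add_apply, h4]
    linarith
  rwa [integral_add hI2 h2, integral_const_mul] at hb

set_option maxHeartbeats 2000000 in
set_option synthInstance.maxHeartbeats 1000000 in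
/-- Theorem 1 of the paper (first part): with probability at least `1 − 2δ`,
`R_{ℓ1}(ŵ) − R_{ℓ1}(w*) ≤ 2ε E‖x‖ + αε² E‖x‖² + (3α/2) sup_{w∈W} R_{ℓ2}(w)
  + (1/(nα)) log(N(W,ε)/δ²)`. -/
theorem truncated_min_excess_risk
    {H : Type*} [NormedAddCommGroup H] [InnerProductSpace ℝ H] [CompleteSpace H]
    [MeasurableSpace H] [BorelSpace H]
    (P : Measure (H × ℝ)) [IsProbabilityMeasure P]
    (W : Set H) (ψ : ℝ → ℝ)
    (hψmono : Monotone ψ)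
    (hψlb : ∀ x : ℝ, -Real.log (1 - x + x ^ 2 / 2) ≤ ψ x)
    (hψub : ∀ x : ℝ, ψ x ≤ Real.log (1 + x + x ^ 2 / 2))
    (n : ℕ) (hn : 0 < n) (α : ℝ) (hα : 0 < α)
    -- (A1): W is totally bounded: for every ε > 0 there is a finite ε-net of W
    (hA1 : ∀ ε > (0 : ℝ), ∃ N : Finset H, ↑N ⊆ W ∧ ∀ w ∈ W, ∃ v ∈ N, ‖w - v‖ ≤ ε)
    -- (A2): E‖x‖² < ∞ (and hence E‖x‖ < ∞)
    (hxInt : Integrable (fun z : H × ℝ => ‖z.1‖) P)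
    (hA2 : Integrable (fun z : H × ℝ => ‖z.1‖ ^ 2) P)
    -- risks are well defined on W
    (hInt1 : ∀ w ∈ W, Integrable (fun z : H × ℝ => |z.2 - (inner ℝ z.1 w : ℝ)|) P)
    (hInt2 : ∀ w ∈ W, Integrable (fun z : H × ℝ => (z.2 - (inner ℝ z.1 w : ℝ)) ^ 2) P)
    -- (A3): sup_{w ∈ W} R_{ℓ2}(w) < ∞
    (hA3 : BddAbove (l2Risk P '' W))
    -- ŵ : any minimizer of the truncated empirical risk over W
    (what : (Fin n → H × ℝ) → H)
    (hwhatW : ∀ ω, what ω ∈ W)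
    (hwhatMin : ∀ ω, ∀ w ∈ W, truncEmpRisk ψ α n ω (what ω) ≤ truncEmpRisk ψ α n ω w)
    -- w* : any minimizer of the ℓ1-risk over W
    (wstar : H) (hwstarW : wstar ∈ W)
    (hwstarMin : ∀ w ∈ W, l1Risk P wstar ≤ l1Risk P w)
    (ε δ : ℝ) (hε : 0 < ε) (hδ : 0 < δ) (hδ' : δ < 1 / 2) :
    ENNReal.ofReal (1 - 2 * δ) ≤
      Measure.pi (fun _ : Fin n => P)
        {ω | l1Risk P (what ω) - l1Risk P wstar ≤
          2 * ε * (∫ z, ‖z.1‖ ∂P) + α * ε ^ 2 * (∫ z, ‖z.1‖ ^ 2 ∂P)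
          + 3 * α / 2 * sSup (l2Risk P '' W)
          + 1 / (n * α) * Real.log ((coveringNumber W ε : ℝ) / δ ^ 2)} := by
  classical
  -- minimal covering net
  obtain ⟨T, hTW, hTcard, hTcov⟩ : ∃ T : Finset H, ↑T ⊆ W ∧ T.card = coveringNumber W ε ∧
      ∀ w ∈ W, ∃ v ∈ T, ‖w - v‖ ≤ ε := by
    have hne : {k | ∃ N : Finset H, ↑N ⊆ W ∧ N.card = k ∧
        ∀ w ∈ W, ∃ v ∈ N, ‖w - v‖ ≤ ε}.Nonempty := by
      obtain ⟨N, hNW, hNcov⟩ := hA1 ε hε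
      exact ⟨N.card, N, hNW, rfl, hNcov⟩
    obtain ⟨N, hNW, hNcard, hNcov⟩ := Nat.sInf_mem hne
    exact ⟨N, hNW, hNcard, hNcov⟩
  have hNpos : 0 < coveringNumber W ε := by
    obtain ⟨v, hv, -⟩ := hTcov wstar hwstarW
    rw [← hTcard]
    exact Finset.card_pos.2 ⟨v, hv⟩
  have l1eq : ∀ w : H, l1Risk P w = ∫ z, |z.2 - (inner ℝ z.1 w : ℝ)| ∂P := fun _ => rfl
  have l2eq : ∀ w : H, l2Risk P w = ∫ z, (z.2 - (inner ℝ z.1 w : ℝ)) ^ 2 ∂P := fun _ => rfl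
  set Nr : ℝ := (coveringNumber W ε : ℝ) with hNrdef
  have hNr : (0:ℝ) < Nr := by rw [hNrdef]; exact_mod_cast hNpos
  set Ex : ℝ := ∫ z, ‖z.1‖ ∂P with hExdef
  set Ex2 : ℝ := ∫ z, ‖z.1‖ ^ 2 ∂P with hEx2def
  set S : ℝ := sSup (l2Risk P '' W) with hSdef
  have hEx2nn : 0 ≤ Ex2 := by
    rw [hEx2def]; exact integral_nonneg fun z => sq_nonneg _
  have hl2nn : ∀ w ∈ W, 0 ≤ l2Risk P w := fun w _ =>
    integral_nonneg fun z => sq_nonneg _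
  have hl2S : ∀ w ∈ W, l2Risk P w ≤ S := fun w hw => le_csSup hA3 ⟨w, hw, rfl⟩
  have hS0 : (0:ℝ) ≤ S := le_trans (hl2nn wstar hwstarW) (hl2S wstar hwstarW)
  have hn' : (0:ℝ) < (n:ℝ) := by exact_mod_cast hn
  have hna : (0:ℝ) < (n:ℝ) * α := mul_pos hn' hα
  set tstar : ℝ := Real.log (1 / δ) with htstardef
  set tv : ℝ := Real.log (Nr / δ) with htvdef
  set cstar : ℝ := α * l1Risk P wstar + α ^ 2 * l2Risk P wstar / 2 with hcstardef
  set cv : H → ℝ := fun v =>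
    -(α * (l1Risk P v - ε * Ex)) + α ^ 2 * (S + ε ^ 2 * Ex2) / 2 with hcvdef
  set Estar : Set (Fin n → H × ℝ) :=
    {ω | ↑n * cstar + tstar ≤ ∑ i, ψ (α * |(ω i).2 - (inner ℝ (ω i).1 wstar : ℝ)|)}
    with hEstardef
  set Ev : H → Set (Fin n → H × ℝ) := fun v =>
    {ω | ↑n * cv v + tv ≤
      ∑ i, -ψ (α * (|(ω i).2 - (inner ℝ (ω i).1 v : ℝ)| - ε * ‖(ω i).1‖))} with hEvdef
  set μ := Measure.pi (fun _ : Fin n => P) with hμdef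
  haveI hμprob : IsProbabilityMeasure μ := by
    rw [hμdef]; exact MeasureTheory.Measure.pi.instIsProbabilityMeasure _
  -- exp identities
  have hexpstar : Real.exp (-tstar) = δ := by
    rw [htstardef, one_div, Real.log_inv, neg_neg, Real.exp_log hδ]
  have hexpv : Real.exp (-tv) = δ / Nr := by
    rw [htvdef, ← Real.log_inv, inv_div, Real.exp_log (div_pos hδ hNr)]
  -- measure of the star event
  have hEstarBound : μ Estar ≤ ENNReal.ofReal δ := by
    have h := star_event_bound P ψ hψmono hψub n α hα wstar (hInt1 wstar hwstarW)
      (hInt2 wstar hwstarW) tstar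
    rw [← l1eq wstar, ← l2eq wstar, ← hcstardef, hexpstar] at h
    exact h
  -- measure of the net events
  have hEvBound : ∀ v ∈ T, μ (Ev v) ≤ ENNReal.ofReal (δ / Nr) := by
    intro v hvT
    have hvW : v ∈ W := hTW hvT
    obtain ⟨Iu2, hu2b⟩ := u2_facts P v ε hε.le hxInt hA2 (hInt2 v hvW)
    have hq : ∫ z, (|z.2 - (inner ℝ z.1 v : ℝ)| - ε * ‖z.1‖) ^ 2 ∂P ≤ S + ε ^ 2 * Ex2 := by
      rw [← l2eq v, ← hEx2def] at hu2b
      have := hl2S v hvW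
      linarith
    have h := net_event_bound P ψ hψmono hψlb n α ε hα v hxInt (hInt1 v hvW)
      Iu2 (S + ε ^ 2 * Ex2) tv hq
    rw [← l1eq v, ← hExdef, hexpv] at h
    exact h
  -- union bound
  have hBadBound : μ (Estar ∪ ⋃ v ∈ T, Ev v) ≤ ENNReal.ofReal (2 * δ) := by
    calc μ (Estar ∪ ⋃ v ∈ T, Ev v)
        ≤ μ Estar + μ (⋃ v ∈ T, Ev v) := measure_union_le _ _
      _ ≤ ENNReal.ofReal δ + ∑ v ∈ T, μ (Ev v) :=
          add_le_add hEstarBound (measure_biUnion_finset_le T Ev)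
      _ ≤ ENNReal.ofReal δ + ∑ v ∈ T, ENNReal.ofReal (δ / Nr) :=
          add_le_add le_rfl (Finset.sum_le_sum hEvBound)
      _ = ENNReal.ofReal δ + T.card * ENNReal.ofReal (δ / Nr) := by
          rw [Finset.sum_const, nsmul_eq_mul]
      _ = ENNReal.ofReal (2 * δ) := by
          rw [hTcard]
          have hcast : ((coveringNumber W ε : ℕ) : ENNReal) = ENNReal.ofReal Nr := by
            rw [hNrdef, ENNReal.ofReal_natCast]
          rw [hcast, ← ENNReal.ofReal_mul hNr.le]
          have : Nr * (δ / Nr) = δ := by field_simp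
          rw [this, ← ENNReal.ofReal_add hδ.le hδ.le]
          norm_num [two_mul]
  -- complement bound
  have hCompl : ENNReal.ofReal (1 - 2 * δ) ≤ μ (Estar ∪ ⋃ v ∈ T, Ev v)ᶜ := by
    have h1 : (1:ENNReal) ≤ μ (Estar ∪ ⋃ v ∈ T, Ev v) + μ (Estar ∪ ⋃ v ∈ T, Ev v)ᶜ := by
      have h2 : (Set.univ : Set (Fin n → H × ℝ))
          = (Estar ∪ ⋃ v ∈ T, Ev v) ∪ (Estar ∪ ⋃ v ∈ T, Ev v)ᶜ :=
        (Set.union_compl_self _).symm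
      calc (1:ENNReal) = μ Set.univ := (measure_univ (μ := μ)).symm
        _ ≤ _ := by rw [h2]; exact measure_union_le _ _
    have h3 : ENNReal.ofReal (1 - 2 * δ) = 1 - ENNReal.ofReal (2 * δ) := by
      rw [ENNReal.ofReal_sub 1 (by positivity), ENNReal.ofReal_one]
    rw [h3]
    exact le_trans (tsub_le_tsub_left hBadBound 1) (tsub_le_iff_left.mpr h1)
  refine le_trans hCompl (measure_mono ?_)
  -- deterministic part
  intro ω hω
  have hω1 : ω ∉ Estar := fun h => hω (Set.mem_union_left _ h)
  have hω2 : ∀ v ∈ T, ω ∉ Ev v := fun v hv h =>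
    hω (Set.mem_union_right _ (Set.mem_biUnion hv h))
  obtain ⟨v, hvT, hvnear⟩ := hTcov (what ω) (hwhatW ω)
  have hvW : v ∈ W := hTW hvT
  -- event inequalities
  have h1 : ∑ i, ψ (α * |(ω i).2 - (inner ℝ (ω i).1 wstar : ℝ)|) < ↑n * cstar + tstar := by
    have := hω1
    rw [hEstardef, Set.mem_setOf_eq, not_le] at this
    exact this
  have h2 : -(↑n * cv v + tv) <
      ∑ i, ψ (α * (|(ω i).2 - (inner ℝ (ω i).1 v : ℝ)| - ε * ‖(ω i).1‖)) := by
    have h2a := hω2 v hvT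
    rw [hEvdef] at h2a
    simp only [Set.mem_setOf_eq, not_le] at h2a
    have h2b : ∑ i, -ψ (α * (|(ω i).2 - (inner ℝ (ω i).1 v : ℝ)| - ε * ‖(ω i).1‖))
        = -∑ i, ψ (α * (|(ω i).2 - (inner ℝ (ω i).1 v : ℝ)| - ε * ‖(ω i).1‖)) := by
      rw [Finset.sum_neg_distrib]
    rw [h2b] at h2a
    linarith
  -- Lipschitz comparisons
  have hd : ∀ z : H × ℝ,
      |(|z.2 - (inner ℝ z.1 (what ω) : ℝ)| - |z.2 - (inner ℝ z.1 v : ℝ)|)| ≤ ε * ‖z.1‖ := by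
    intro z
    have h4 := abs_abs_sub_abs_le_abs_sub (z.2 - (inner ℝ z.1 (what ω) : ℝ))
      (z.2 - (inner ℝ z.1 v : ℝ))
    have h5 : (z.2 - (inner ℝ z.1 (what ω) : ℝ)) - (z.2 - (inner ℝ z.1 v : ℝ))
        = (inner ℝ z.1 (v - what ω) : ℝ) := by
      rw [inner_sub_right]; ring
    rw [h5] at h4
    have h6 := abs_real_inner_le_norm z.1 (v - what ω)
    have h7 : ‖v - what ω‖ = ‖what ω - v‖ := norm_sub_rev _ _
    have h8 : ‖z.1‖ * ‖v - what ω‖ ≤ ‖z.1‖ * ε := by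
      rw [h7]; exact mul_le_mul_of_nonneg_left hvnear (norm_nonneg _)
    calc |(|z.2 - (inner ℝ z.1 (what ω) : ℝ)| - |z.2 - (inner ℝ z.1 v : ℝ)|)|
        ≤ |(inner ℝ z.1 (v - what ω) : ℝ)| := h4
      _ ≤ ‖z.1‖ * ‖v - what ω‖ := h6
      _ ≤ ‖z.1‖ * ε := h8
      _ = ε * ‖z.1‖ := mul_comm _ _
  have h3 : ∀ i : Fin n, ψ (α * (|(ω i).2 - (inner ℝ (ω i).1 v : ℝ)| - ε * ‖(ω i).1‖))
      ≤ ψ (α * |(ω i).2 - (inner ℝ (ω i).1 (what ω) : ℝ)|) := by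
    intro i
    apply hψmono
    apply mul_le_mul_of_nonneg_left _ hα.le
    have := abs_le.mp (hd (ω i))
    linarith [this.1, this.2]
  -- empirical minimality
  have h4 : ∑ i, ψ (α * |(ω i).2 - (inner ℝ (ω i).1 (what ω) : ℝ)|)
      ≤ ∑ i, ψ (α * |(ω i).2 - (inner ℝ (ω i).1 wstar : ℝ)|) := by
    have h5 := hwhatMin ω wstar hwstarW
    unfold truncEmpRisk at h5
    have h6 : (0:ℝ) < 1 / ((n:ℝ) * α) := by positivity
    exact (mul_le_mul_iff_right₀ h6).mp h5
  have hchain : -(↑n * cv v + tv) < ↑n * cstar + tstar := by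
    calc -(↑n * cv v + tv)
        < ∑ i, ψ (α * (|(ω i).2 - (inner ℝ (ω i).1 v : ℝ)| - ε * ‖(ω i).1‖)) := h2
      _ ≤ ∑ i, ψ (α * |(ω i).2 - (inner ℝ (ω i).1 (what ω) : ℝ)|) :=
          Finset.sum_le_sum fun i _ => h3 i
      _ ≤ ∑ i, ψ (α * |(ω i).2 - (inner ℝ (ω i).1 wstar : ℝ)|) := h4
      _ < ↑n * cstar + tstar := h1
  -- population Lipschitz step
  have hnear : l1Risk P (what ω) ≤ l1Risk P v + ε * Ex := by
    have hmono := integral_mono (hInt1 (what ω) (hwhatW ω))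
      ((hInt1 v hvW).add (hxInt.const_mul ε))
      (fun z => by
        have := abs_le.mp (hd z)
        simp only [Pi.add_apply]
        linarith [this.1, this.2])
    have hsplit : ∫ z, (|z.2 - (inner ℝ z.1 v : ℝ)| + ε * ‖z.1‖) ∂P
        = l1Risk P v + ε * Ex := by
      rw [integral_add (hInt1 v hvW) (hxInt.const_mul ε), integral_const_mul,
        ← l1eq v, ← hExdef]
    rw [l1eq (what ω)]
    calc ∫ z, |z.2 - (inner ℝ z.1 (what ω) : ℝ)| ∂P
        ≤ ∫ z, (|z.2 - (inner ℝ z.1 v : ℝ)| + ε * ‖z.1‖) ∂P := hmono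
      _ = l1Risk P v + ε * Ex := hsplit
  -- arithmetic conclusion
  have hlogsum : tstar + tv = Real.log (Nr / δ ^ 2) := by
    rw [htstardef, htvdef, ← Real.log_mul (by positivity) (by positivity)]
    congr 1
    ring
  have hXle : l1Risk P v ≤ l1Risk P wstar + ε * Ex + α * (S + ε ^ 2 * Ex2) / 2
      + α * l2Risk P wstar / 2 + (tstar + tv) / ((n:ℝ) * α) := by
    have h8 : (l1Risk P v - (l1Risk P wstar + ε * Ex + α * (S + ε ^ 2 * Ex2) / 2
        + α * l2Risk P wstar / 2)) * ((n:ℝ) * α) ≤ tstar + tv := by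
      rw [hcstardef, hcvdef] at hchain
      nlinarith [hchain]
    have h9 := (le_div_iff₀ hna).mpr h8
    linarith
  have hA4 : α * l2Risk P wstar ≤ α * S :=
    mul_le_mul_of_nonneg_left (hl2S wstar hwstarW) hα.le
  have hA5 : (0:ℝ) ≤ α * S := mul_nonneg hα.le hS0
  have hA6 : (0:ℝ) ≤ α * ε ^ 2 * Ex2 :=
    mul_nonneg (mul_nonneg hα.le (sq_nonneg ε)) hEx2nn
  have hA3 : (tstar + tv) / ((n:ℝ) * α) = 1 / ((n:ℝ) * α) * Real.log (Nr / δ ^ 2) := by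
    rw [hlogsum]; ring
  show l1Risk P (what ω) - l1Risk P wstar ≤ 2 * ε * Ex + α * ε ^ 2 * Ex2
    + 3 * α / 2 * S + 1 / (↑n * α) * Real.log (Nr / δ ^ 2)
  nlinarith [hXle, hnear, hA4, hA5, hA6, hA3]
end

section
/- Let ŵ be any minimizer over W of the truncated empirical risk R̂_{ψ∘ℓ1}, and let w* be any minimizer over W of R_{ℓ1}. Fix ε > 0 and 0 < δ < 1/2, and set α = sqrt((1/n)·log(N(W,ε)/δ²)). Then with probability at least 1 − 2δ over the i.i.d. sample, R_{ℓ1}(ŵ) − R_{ℓ1}(w*) ≤ 2ε·E[‖x‖] + sqrt((1/n)·log(N(W,ε)/δ²)) · ( ε²·E[‖x‖²] + (3/2)·sup_{w∈W} R_{ℓ2}(w) + 1 ). -/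
open MeasureTheory Real

open MeasureTheory Real

lemma exp_sum_le_pow_integral {E : Type*} [MeasurableSpace E] (P : Measure E)
    [IsProbabilityMeasure P] (n : ℕ) (g φ : E → ℝ)
    (hgm : AEStronglyMeasurable g P) (hφ : Integrable φ P)
    (hle : ∀ z, Real.exp (g z) ≤ φ z) (c s : ℝ)
    (hc : (∫ z, φ z ∂P) ≤ Real.exp c) (hs : 0 < s) :
    Measure.pi (fun _ : Fin n => P)
      {ω | (n : ℝ) * c + Real.log (1 / s) < ∑ i, g (ω i)} ≤ ENNReal.ofReal s := by
  letI : MeasureSpace E := ⟨P⟩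
  haveI : IsProbabilityMeasure (volume : Measure E) := ‹_›
  have hvol : Measure.pi (fun _ : Fin n => P) = (volume : Measure (Fin n → E)) :=
    (MeasureTheory.volume_pi).symm
  rw [hvol]
  set eg : E → ℝ := fun z => Real.exp (g z) with heg_def
  have heg : Integrable eg P := by
    refine hφ.mono' (Real.continuous_exp.comp_aestronglyMeasurable hgm) ?_
    filter_upwards with z
    rw [Real.norm_eq_abs, abs_of_pos (Real.exp_pos _)]
    exact hle z
  have hegint_le : ∫ z, eg z ∂P ≤ Real.exp c := le_trans (integral_mono heg hφ hle) hc
  have hegint_nonneg : 0 ≤ ∫ z, eg z ∂P := integral_nonneg fun z => (Real.exp_pos _).le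
  set X : (Fin n → E) → ℝ := fun ω => ∏ i, eg (ω i) with hX_def
  have hXint : Integrable X := Integrable.fintype_prod (f := fun _ : Fin n => eg) fun _ => heg
  have hXval : ∫ ω, X ω = (∫ z, eg z ∂P) ^ n := by
    rw [hX_def]
    rw [MeasureTheory.integral_fintype_prod_volume_eq_pow (ι := Fin n) eg, Fintype.card_fin]
    rfl
  have hXle : ∫ ω, X ω ≤ Real.exp ((n : ℝ) * c) := by
    rw [hXval, mul_comm, Real.exp_mul, Real.rpow_natCast]
    exact pow_le_pow_left₀ hegint_nonneg hegint_le n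
  have hsub : {ω : Fin n → E | (n : ℝ) * c + Real.log (1 / s) < ∑ i, g (ω i)} ⊆
      {ω | Real.exp ((n : ℝ) * c) / s ≤ X ω} := by
    intro ω hω
    have h1 : Real.exp ((n : ℝ) * c + Real.log (1 / s)) ≤ Real.exp (∑ i, g (ω i)) :=
      Real.exp_le_exp.mpr (le_of_lt hω)
    have h2 : Real.exp ((n : ℝ) * c + Real.log (1 / s)) = Real.exp ((n : ℝ) * c) / s := by
      rw [Real.exp_add, Real.exp_log (by positivity : (0:ℝ) < 1 / s)]
      ring
    have h3 : Real.exp (∑ i, g (ω i)) = X ω := by rw [Real.exp_sum]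
    rw [h2, h3] at h1
    exact h1
  refine le_trans (measure_mono hsub) ?_
  have hmar := mul_meas_ge_le_integral_of_nonneg
    (μ := (volume : Measure (Fin n → E)))
    (Filter.Eventually.of_forall fun ω => Finset.prod_nonneg fun i _ => (Real.exp_pos _).le)
    hXint (Real.exp ((n : ℝ) * c) / s)
  set m := (volume : Measure (Fin n → E)) {ω | Real.exp ((n : ℝ) * c) / s ≤ X ω}
  have hm_fin : m ≠ ⊤ := (measure_lt_top _ _).ne
  have hpos : (0:ℝ) < Real.exp ((n : ℝ) * c) / s := by positivity
  have htoReal : m.toReal ≤ s := by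
    have h4 : Real.exp ((n : ℝ) * c) / s * m.toReal ≤ Real.exp ((n : ℝ) * c) :=
      le_trans hmar hXle
    have hexp : (0:ℝ) < Real.exp ((n : ℝ) * c) := Real.exp_pos _
    rw [div_mul_eq_mul_div, div_le_iff₀ hs] at h4
    nlinarith
  calc m = ENNReal.ofReal m.toReal := (ENNReal.ofReal_toReal hm_fin).symm
    _ ≤ ENNReal.ofReal s := ENNReal.ofReal_le_ofReal htoReal

lemma exp_psi_le {ψ : ℝ → ℝ} (hψub : ∀ x : ℝ, ψ x ≤ Real.log (1 + x + x ^ 2 / 2)) (x : ℝ) :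
    Real.exp (ψ x) ≤ 1 + x + x ^ 2 / 2 := by
  have hpos : (0:ℝ) < 1 + x + x ^ 2 / 2 := by nlinarith [sq_nonneg (x + 1)]
  calc Real.exp (ψ x) ≤ Real.exp (Real.log (1 + x + x ^ 2 / 2)) :=
        Real.exp_le_exp.mpr (hψub x)
    _ = 1 + x + x ^ 2 / 2 := Real.exp_log hpos

lemma exp_neg_psi_le {ψ : ℝ → ℝ} (hψlb : ∀ x : ℝ, -Real.log (1 - x + x ^ 2 / 2) ≤ ψ x) (x : ℝ) :
    Real.exp (-ψ x) ≤ 1 - x + x ^ 2 / 2 := by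
  have hpos : (0:ℝ) < 1 - x + x ^ 2 / 2 := by nlinarith [sq_nonneg (x - 1)]
  calc Real.exp (-ψ x) ≤ Real.exp (Real.log (1 - x + x ^ 2 / 2)) :=
        Real.exp_le_exp.mpr (by linarith [hψlb x])
    _ = 1 - x + x ^ 2 / 2 := Real.exp_log hpos

lemma phi_ub_bound {ψ : ℝ → ℝ} (hψub : ∀ x : ℝ, ψ x ≤ Real.log (1 + x + x ^ 2 / 2))
    (α t : ℝ) :
    Real.exp (ψ (α * |t|)) ≤ 1 + α * |t| + α ^ 2 / 2 * t ^ 2 := by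
  have h := exp_psi_le hψub (α * |t|)
  have hsq : (α * |t|) ^ 2 = α ^ 2 * t ^ 2 := by rw [mul_pow, sq_abs]
  nlinarith [h]

lemma phi_lb_bound {ψ : ℝ → ℝ} (hψlb : ∀ x : ℝ, -Real.log (1 - x + x ^ 2 / 2) ≤ ψ x)
    (α ε t u : ℝ) (hu : 0 ≤ u) (hε : 0 ≤ ε) :
    Real.exp (-ψ (α * (|t| - ε * u))) ≤
      1 - α * (|t| - ε * u) + α ^ 2 / 2 * (t ^ 2 + ε ^ 2 * u ^ 2) := by
  have h := exp_neg_psi_le hψlb (α * (|t| - ε * u))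
  have h1 : (|t| - ε * u) ^ 2 ≤ t ^ 2 + ε ^ 2 * u ^ 2 := by
    nlinarith [sq_abs t, mul_nonneg (mul_nonneg hε (abs_nonneg t)) hu]
  have h2 : α ^ 2 * (|t| - ε * u) ^ 2 ≤ α ^ 2 * (t ^ 2 + ε ^ 2 * u ^ 2) :=
    mul_le_mul_of_nonneg_left h1 (sq_nonneg α)
  have h3 : (α * (|t| - ε * u)) ^ 2 = α ^ 2 * (|t| - ε * u) ^ 2 := by ring
  nlinarith [h]

set_option maxHeartbeats 1000000 in
set_option synthInstance.maxHeartbeats 1000000 in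
/-- Theorem 1 of the paper (second part): with the tuned choice
`α = sqrt((1/n) log(N(W,ε)/δ²))`, with probability at least `1 − 2δ`,
`R_{ℓ1}(ŵ) − R_{ℓ1}(w*) ≤ 2ε E‖x‖
  + sqrt((1/n) log(N(W,ε)/δ²)) (ε² E‖x‖² + (3/2) sup_{w∈W} R_{ℓ2}(w) + 1)`. -/
theorem truncated_min_excess_risk_tuned
    {H : Type*} [NormedAddCommGroup H] [InnerProductSpace ℝ H] [CompleteSpace H]
    [MeasurableSpace H] [BorelSpace H]
    (P : Measure (H × ℝ)) [IsProbabilityMeasure P]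
    (W : Set H) (ψ : ℝ → ℝ)
    (hψmono : Monotone ψ)
    (hψlb : ∀ x : ℝ, -Real.log (1 - x + x ^ 2 / 2) ≤ ψ x)
    (hψub : ∀ x : ℝ, ψ x ≤ Real.log (1 + x + x ^ 2 / 2))
    (n : ℕ) (hn : 0 < n)
    (ε δ : ℝ) (hε : 0 < ε) (hδ : 0 < δ) (hδ' : δ < 1 / 2)
    -- the tuned choice of α
    (α : ℝ)
    (hαdef : α = Real.sqrt ((1 / n) * Real.log ((coveringNumber W ε : ℝ) / δ ^ 2)))
    -- (A1): W is totally bounded: for every ε > 0 there is a finite ε-net of W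
    (hA1 : ∀ ε' > (0 : ℝ), ∃ N : Finset H, ↑N ⊆ W ∧ ∀ w ∈ W, ∃ v ∈ N, ‖w - v‖ ≤ ε')
    -- (A2): E‖x‖² < ∞ (and hence E‖x‖ < ∞)
    (hxInt : Integrable (fun z : H × ℝ => ‖z.1‖) P)
    (hA2 : Integrable (fun z : H × ℝ => ‖z.1‖ ^ 2) P)
    -- risks are well defined on W
    (hInt1 : ∀ w ∈ W, Integrable (fun z : H × ℝ => |z.2 - (inner ℝ z.1 w : ℝ)|) P)
    (hInt2 : ∀ w ∈ W, Integrable (fun z : H × ℝ => (z.2 - (inner ℝ z.1 w : ℝ)) ^ 2) P)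
    -- (A3): sup_{w ∈ W} R_{ℓ2}(w) < ∞
    (hA3 : BddAbove (l2Risk P '' W))
    -- ŵ : any minimizer of the truncated empirical risk over W
    (what : (Fin n → H × ℝ) → H)
    (hwhatW : ∀ ω, what ω ∈ W)
    (hwhatMin : ∀ ω, ∀ w ∈ W, truncEmpRisk ψ α n ω (what ω) ≤ truncEmpRisk ψ α n ω w)
    -- w* : any minimizer of the ℓ1-risk over W
    (wstar : H) (hwstarW : wstar ∈ W)
    (hwstarMin : ∀ w ∈ W, l1Risk P wstar ≤ l1Risk P w) :
    ENNReal.ofReal (1 - 2 * δ) ≤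
      Measure.pi (fun _ : Fin n => P)
        {ω | l1Risk P (what ω) - l1Risk P wstar ≤
          2 * ε * (∫ z, ‖z.1‖ ∂P)
          + Real.sqrt ((1 / n) * Real.log ((coveringNumber W ε : ℝ) / δ ^ 2)) *
            (ε ^ 2 * (∫ z, ‖z.1‖ ^ 2 ∂P) + 3 / 2 * sSup (l2Risk P '' W) + 1)} := by
  -- abbreviations
  set m1 : ℝ := ∫ z, ‖z.1‖ ∂P with hm1def
  set m2 : ℝ := ∫ z, ‖z.1‖ ^ 2 ∂P with hm2def
  set S : ℝ := sSup (l2Risk P '' W) with hSdef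
  set Nc : ℕ := coveringNumber W ε with hNcdef
  set Pr : Measure (Fin n → H × ℝ) := Measure.pi (fun _ : Fin n => P) with hPrdef
  rw [← hαdef]
  -- the optimal net
  obtain ⟨T, hTW, hTcard, hTcov⟩ : ∃ T : Finset H, ↑T ⊆ W ∧ T.card = Nc ∧
      ∀ w ∈ W, ∃ v ∈ T, ‖w - v‖ ≤ ε := by
    obtain ⟨T₀, hT₀W, hT₀cov⟩ := hA1 ε hε
    have hmem : Nc ∈ {k | ∃ N : Finset H, ↑N ⊆ W ∧ N.card = k ∧
        ∀ w ∈ W, ∃ v ∈ N, ‖w - v‖ ≤ ε} := by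
      rw [hNcdef, coveringNumber]
      exact Nat.sInf_mem ⟨T₀.card, T₀, hT₀W, rfl, hT₀cov⟩
    obtain ⟨T, h1, h2, h3⟩ := hmem
    exact ⟨T, h1, h2, h3⟩
  have hTne : T.Nonempty := by
    obtain ⟨v, hv, -⟩ := hTcov wstar hwstarW
    exact ⟨v, hv⟩
  have hNc1 : 1 ≤ Nc := hTcard ▸ Finset.card_pos.mpr hTne
  have hNcR : (0:ℝ) < (Nc : ℝ) := by exact_mod_cast hNc1
  have hδ2 : δ ^ 2 < 1 := by nlinarith
  have hratio : (1:ℝ) < (Nc : ℝ) / δ ^ 2 := by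
    rw [lt_div_iff₀ (by positivity)]
    have : (1:ℝ) ≤ (Nc:ℝ) := by exact_mod_cast hNc1
    nlinarith
  have hlogpos : 0 < Real.log ((Nc : ℝ) / δ ^ 2) := Real.log_pos hratio
  have hnR : (0:ℝ) < (n : ℝ) := by exact_mod_cast hn
  have hα : 0 < α := by
    rw [hαdef]
    exact Real.sqrt_pos.mpr (by positivity)
  have hαsq : (n:ℝ) * α ^ 2 = Real.log ((Nc : ℝ) / δ ^ 2) := by
    rw [hαdef, Real.sq_sqrt (by positivity)]
    field_simp
  -- measurability of the basic functions
  have hLmeas : ∀ w : H, Measurable fun z : H × ℝ => |z.2 - (inner ℝ z.1 w : ℝ)| := fun w =>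
    (continuous_snd.sub (Continuous.inner continuous_fst continuous_const)).abs.measurable
  have hψmeas : Measurable ψ := hψmono.measurable
  -- risks are nonneg
  have hm1 : 0 ≤ m1 := integral_nonneg fun z => norm_nonneg _
  have hm2 : 0 ≤ m2 := integral_nonneg fun z => sq_nonneg _
  have hl2nonneg : ∀ w, 0 ≤ l2Risk P w := fun w => integral_nonneg fun z => sq_nonneg _
  have hl2S : ∀ w ∈ W, l2Risk P w ≤ S := fun w hw => le_csSup hA3 ⟨w, hw, rfl⟩
  have hS : 0 ≤ S := le_trans (hl2nonneg wstar) (hl2S wstar hwstarW)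
  -- the events
  set g0 : H × ℝ → ℝ := fun z => ψ (α * |z.2 - (inner ℝ z.1 wstar : ℝ)|) with hg0def
  set c0 : ℝ := α * l1Risk P wstar + α ^ 2 / 2 * l2Risk P wstar with hc0def
  set Bad0 : Set (Fin n → H × ℝ) :=
    {ω | (n : ℝ) * c0 + Real.log (1 / δ) < ∑ i, g0 (ω i)} with hBad0def
  set gv : H → H × ℝ → ℝ :=
    fun v z => -ψ (α * (|z.2 - (inner ℝ z.1 v : ℝ)| - ε * ‖z.1‖)) with hgvdef
  set cv : H → ℝ := fun v => -(α * (l1Risk P v - ε * m1))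
      + α ^ 2 / 2 * (l2Risk P v + ε ^ 2 * m2) with hcvdef
  set Bad : H → Set (Fin n → H × ℝ) :=
    fun v => {ω | (n : ℝ) * cv v + Real.log (1 / (δ / Nc)) < ∑ i, gv v (ω i)} with hBaddef
  have hδNc : 0 < δ / (Nc : ℝ) := by positivity
  -- measure of Bad0
  have hBad0meas : MeasurableSet Bad0 := by
    refine measurableSet_lt measurable_const ?_
    exact Finset.measurable_sum _ fun i _ =>
      (hψmeas.comp (measurable_const.mul (hLmeas wstar))).comp (measurable_pi_apply i)
  have hBad0le : Pr Bad0 ≤ ENNReal.ofReal δ := by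
    have hA : Integrable (fun z : H × ℝ => 1 + α * |z.2 - (inner ℝ z.1 wstar : ℝ)|) P := by
      apply Integrable.add
      · exact integrable_const 1
      · exact (hInt1 wstar hwstarW).const_mul α
    have hφ0int : Integrable (fun z : H × ℝ => 1 + α * |z.2 - (inner ℝ z.1 wstar : ℝ)|
        + α ^ 2 / 2 * (z.2 - (inner ℝ z.1 wstar : ℝ)) ^ 2) P := by
      apply Integrable.add
      · exact hA
      · exact (hInt2 wstar hwstarW).const_mul (α ^ 2 / 2)
    refine exp_sum_le_pow_integral P n g0
      (fun z => 1 + α * |z.2 - (inner ℝ z.1 wstar : ℝ)|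
        + α ^ 2 / 2 * (z.2 - (inner ℝ z.1 wstar : ℝ)) ^ 2)
      (hψmeas.comp (measurable_const.mul (hLmeas wstar))).aestronglyMeasurable
      hφ0int
      ?_ c0 δ ?_ hδ
    · intro z
      exact phi_ub_bound hψub α (z.2 - (inner ℝ z.1 wstar : ℝ))
    · have hval : (∫ z, (1 + α * |z.2 - (inner ℝ z.1 wstar : ℝ)|
          + α ^ 2 / 2 * (z.2 - (inner ℝ z.1 wstar : ℝ)) ^ 2) ∂P) = 1 + c0 := by
        rw [integral_add hA ((hInt2 wstar hwstarW).const_mul (α ^ 2 / 2)),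
          integral_add (integrable_const 1) ((hInt1 wstar hwstarW).const_mul α),
          integral_const, integral_const_mul, integral_const_mul]
        simp only [measure_univ, probReal_univ, ENNReal.toReal_one, smul_eq_mul, one_mul, mul_one]
        simp only [hc0def, l1Risk, l2Risk]
        ring
      rw [hval]
      linarith [Real.add_one_le_exp c0]
  -- measure of Bad v
  have hBadmeas : ∀ v ∈ T, MeasurableSet (Bad v) := by
    intro v hv
    refine measurableSet_lt measurable_const ?_
    exact Finset.measurable_sum _ fun i _ =>
      ((hψmeas.comp (measurable_const.mul
        ((hLmeas v).sub (measurable_const.mul continuous_fst.norm.measurable)))).neg).comp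
        (measurable_pi_apply i)
  have hBadle : ∀ v ∈ T, Pr (Bad v) ≤ ENNReal.ofReal (δ / Nc) := by
    intro v hv
    have hvW : v ∈ W := hTW hv
    have hq : Integrable (fun z : H × ℝ => |z.2 - (inner ℝ z.1 v : ℝ)| - ε * ‖z.1‖) P :=
      (hInt1 v hvW).sub (hxInt.const_mul ε)
    have hr : Integrable (fun z : H × ℝ => (z.2 - (inner ℝ z.1 v : ℝ)) ^ 2 + ε ^ 2 * ‖z.1‖ ^ 2) P := by
      apply Integrable.add
      · exact hInt2 v hvW
      · exact hA2.const_mul (ε ^ 2)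
    have hB : Integrable (fun z : H × ℝ => 1 - α * (|z.2 - (inner ℝ z.1 v : ℝ)| - ε * ‖z.1‖)) P := by
      apply Integrable.sub
      · exact integrable_const 1
      · exact hq.const_mul α
    have hφvint : Integrable (fun z : H × ℝ => 1 - α * (|z.2 - (inner ℝ z.1 v : ℝ)| - ε * ‖z.1‖)
        + α ^ 2 / 2 * ((z.2 - (inner ℝ z.1 v : ℝ)) ^ 2 + ε ^ 2 * ‖z.1‖ ^ 2)) P := by
      apply Integrable.add
      · exact hB
      · exact hr.const_mul (α ^ 2 / 2)
    have hgvm : Measurable (gv v) := (hψmeas.comp (measurable_const.mul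
        ((hLmeas v).sub (measurable_const.mul continuous_fst.norm.measurable)))).neg
    refine exp_sum_le_pow_integral P n (gv v)
      (fun z => 1 - α * (|z.2 - (inner ℝ z.1 v : ℝ)| - ε * ‖z.1‖)
        + α ^ 2 / 2 * ((z.2 - (inner ℝ z.1 v : ℝ)) ^ 2 + ε ^ 2 * ‖z.1‖ ^ 2))
      hgvm.aestronglyMeasurable hφvint
      ?_ (cv v) (δ / Nc) ?_ hδNc
    · intro z
      exact phi_lb_bound hψlb α ε (z.2 - (inner ℝ z.1 v : ℝ)) ‖z.1‖ (norm_nonneg _) hε.le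
    · have hval : (∫ z, (1 - α * (|z.2 - (inner ℝ z.1 v : ℝ)| - ε * ‖z.1‖)
          + α ^ 2 / 2 * ((z.2 - (inner ℝ z.1 v : ℝ)) ^ 2 + ε ^ 2 * ‖z.1‖ ^ 2)) ∂P)
          = 1 + cv v := by
        rw [integral_add hB (hr.const_mul (α ^ 2 / 2)),
          integral_sub (integrable_const 1) (hq.const_mul α),
          integral_const, integral_const_mul, integral_const_mul,
          integral_sub (hInt1 v hvW) (hxInt.const_mul ε),
          integral_add (hInt2 v hvW) (hA2.const_mul (ε ^ 2)),
          integral_const_mul, integral_const_mul]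
        simp only [measure_univ, probReal_univ, ENNReal.toReal_one, smul_eq_mul, one_mul, mul_one]
        simp only [hcvdef, l1Risk, l2Risk]
        rw [hm1def, hm2def]
        ring
      rw [hval]
      linarith [Real.add_one_le_exp (cv v)]
  -- the good event
  set G : Set (Fin n → H × ℝ) := Bad0ᶜ ∩ ⋂ v ∈ T, (Bad v)ᶜ with hGdef
  have hGmeas : MeasurableSet G :=
    hBad0meas.compl.inter (MeasurableSet.biInter T.countable_toSet
      fun v hv => (hBadmeas v hv).compl)
  -- measure of the complement
  have hGc : Pr Gᶜ ≤ ENNReal.ofReal (2 * δ) := by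
    have hGc_eq : Gᶜ = Bad0 ∪ ⋃ v ∈ T, Bad v := by
      rw [hGdef]
      simp [Set.compl_inter, Set.compl_iInter]
    rw [hGc_eq]
    refine le_trans (measure_union_le _ _) ?_
    have hb : Pr (⋃ v ∈ T, Bad v) ≤ ∑ v ∈ T, Pr (Bad v) := measure_biUnion_finset_le T Bad
    have hb2 : ∑ v ∈ T, Pr (Bad v) ≤ ∑ _v ∈ T, ENNReal.ofReal (δ / Nc) :=
      Finset.sum_le_sum hBadle
    have hb3 : ∑ _v ∈ T, ENNReal.ofReal (δ / Nc) = ENNReal.ofReal δ := by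
      rw [Finset.sum_const, hTcard, nsmul_eq_mul]
      rw [← ENNReal.ofReal_natCast Nc, ← ENNReal.ofReal_mul (by positivity)]
      congr 1
      field_simp
    calc Pr Bad0 + Pr (⋃ v ∈ T, Bad v) ≤ ENNReal.ofReal δ + ENNReal.ofReal δ := by
          exact add_le_add hBad0le ((hb.trans hb2).trans_eq hb3)
      _ = ENNReal.ofReal (2 * δ) := by
          rw [← ENNReal.ofReal_add hδ.le hδ.le]; congr 1; ring
  -- the deterministic part : G is contained in the target event
  have hGsub : G ⊆ {ω | l1Risk P (what ω) - l1Risk P wstar ≤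
      2 * ε * m1 + α * (ε ^ 2 * m2 + 3 / 2 * S + 1)} := by
    intro ω hω
    obtain ⟨hω0, hωv⟩ := hω
    set w : H := what ω with hwdef
    have hwW : w ∈ W := hwhatW ω
    obtain ⟨v, hvT, hvw⟩ := hTcov w hwW
    have hvW : v ∈ W := hTW hvT
    have hωv' : ω ∈ (Bad v)ᶜ := by
      exact Set.mem_iInter₂.mp hωv v hvT
    -- pointwise comparison of losses
    have hpoint : ∀ a b : H, ‖a - b‖ ≤ ε → ∀ z : H × ℝ,
        |z.2 - (inner ℝ z.1 a : ℝ)| - ε * ‖z.1‖ ≤ |z.2 - (inner ℝ z.1 b : ℝ)| := by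
      intro a b hab z
      have h1 : |z.2 - (inner ℝ z.1 a : ℝ)| ≤ |z.2 - (inner ℝ z.1 b : ℝ)|
          + |(inner ℝ z.1 b : ℝ) - (inner ℝ z.1 a : ℝ)| := by
        have := abs_sub_abs_le_abs_sub (z.2 - (inner ℝ z.1 a : ℝ)) (z.2 - (inner ℝ z.1 b : ℝ))
        have h2 := abs_sub (z.2 - (inner ℝ z.1 a : ℝ)) (z.2 - (inner ℝ z.1 b : ℝ))
        calc |z.2 - (inner ℝ z.1 a : ℝ)|
            = |(z.2 - (inner ℝ z.1 b : ℝ)) + ((inner ℝ z.1 b : ℝ) - (inner ℝ z.1 a : ℝ))| := by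
              ring_nf
          _ ≤ _ := abs_add_le _ _
      have h3 : |(inner ℝ z.1 b : ℝ) - (inner ℝ z.1 a : ℝ)| ≤ ‖z.1‖ * ‖b - a‖ := by
        rw [← inner_sub_right]
        exact abs_real_inner_le_norm z.1 (b - a)
      have h4 : ‖z.1‖ * ‖b - a‖ ≤ ‖z.1‖ * ε := by
        rw [norm_sub_rev] at hab
        exact mul_le_mul_of_nonneg_left hab (norm_nonneg _)
      nlinarith [h1]
    -- sum comparisons
    have hsum1 : ∑ i, ψ (α * (|(ω i).2 - (inner ℝ (ω i).1 v : ℝ)| - ε * ‖(ω i).1‖))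
        ≤ ∑ i, ψ (α * |(ω i).2 - (inner ℝ (ω i).1 w : ℝ)|) := by
      refine Finset.sum_le_sum fun i _ => hψmono ?_
      exact mul_le_mul_of_nonneg_left (hpoint v w (by rwa [norm_sub_rev]) (ω i)) hα.le
    have hsum2 : ∑ i, ψ (α * |(ω i).2 - (inner ℝ (ω i).1 w : ℝ)|)
        ≤ ∑ i, ψ (α * |(ω i).2 - (inner ℝ (ω i).1 wstar : ℝ)|) := by
      have hmin := hwhatMin ω wstar hwstarW
      rw [truncEmpRisk, truncEmpRisk] at hmin
      have hpos : (0:ℝ) < 1 / ((n:ℝ) * α) := by positivity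
      exact le_of_mul_le_mul_left (by rw [← hwdef] at hmin; exact hmin) hpos
    -- event bounds
    have hub : ∑ i, ψ (α * |(ω i).2 - (inner ℝ (ω i).1 wstar : ℝ)|)
        ≤ (n : ℝ) * c0 + Real.log (1 / δ) := not_lt.mp hω0
    have hlb : -((n : ℝ) * cv v) - Real.log (1 / (δ / Nc))
        ≤ ∑ i, ψ (α * (|(ω i).2 - (inner ℝ (ω i).1 v : ℝ)| - ε * ‖(ω i).1‖)) := by
      have hnot' : ∑ i, -ψ (α * (|(ω i).2 - (inner ℝ (ω i).1 v : ℝ)| - ε * ‖(ω i).1‖))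
          ≤ (n : ℝ) * cv v + Real.log (1 / (δ / Nc)) := not_lt.mp hωv'
      rw [Finset.sum_neg_distrib] at hnot'
      linarith
    -- the key scalar inequality
    have hkey : -((n : ℝ) * cv v) - Real.log (1 / (δ / Nc))
        ≤ (n : ℝ) * c0 + Real.log (1 / δ) :=
      le_trans hlb (le_trans hsum1 (le_trans hsum2 hub))
    -- log identity
    have hlogs : Real.log (1 / (δ / Nc)) + Real.log (1 / δ) = (n : ℝ) * α ^ 2 := by
      have h5 : Real.log ((Nc : ℝ) / δ ^ 2) = Real.log (Nc : ℝ) - 2 * Real.log δ := by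
        rw [Real.log_div hNcR.ne' (pow_ne_zero 2 hδ.ne'), Real.log_pow]
        push_cast; ring
      rw [hαsq, h5, one_div, Real.log_inv, one_div, Real.log_inv,
        Real.log_div hδ.ne' hNcR.ne']
      ring
    -- l1-risk comparison between w and v
    have hii : l1Risk P w ≤ l1Risk P v + ε * m1 := by
      have hmono : ∀ z : H × ℝ, |z.2 - (inner ℝ z.1 w : ℝ)|
          ≤ |z.2 - (inner ℝ z.1 v : ℝ)| + ε * ‖z.1‖ := by
        intro z
        have := hpoint w v hvw z
        linarith
      calc l1Risk P w ≤ ∫ z, (|z.2 - (inner ℝ z.1 v : ℝ)| + ε * ‖z.1‖) ∂P :=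
            integral_mono (hInt1 w hwW) ((hInt1 v hvW).add (hxInt.const_mul ε)) hmono
        _ = l1Risk P v + ε * m1 := by
            rw [integral_add (hInt1 v hvW) (hxInt.const_mul ε), integral_const_mul,
              l1Risk, hm1def]
    -- put everything together
    have hA2S : l2Risk P wstar ≤ S := hl2S wstar hwstarW
    have hB2S : l2Risk P v ≤ S := hl2S v hvW
    -- expand hkey
    have hkey' : (n:ℝ) * α * l1Risk P v ≤ (n:ℝ) * α *
        (l1Risk P wstar + ε * m1 + α / 2 *
          (l2Risk P wstar + l2Risk P v + ε ^ 2 * m2) + α) := by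
      rw [hcvdef, hc0def] at hkey
      simp only at hkey
      nlinarith [hkey, hlogs]
    have hstep : l1Risk P v ≤ l1Risk P wstar + ε * m1 + α / 2 *
        (l2Risk P wstar + l2Risk P v + ε ^ 2 * m2) + α := by
      have hnα : (0:ℝ) < (n:ℝ) * α := by positivity
      exact le_of_mul_le_mul_left (by
        calc (n:ℝ) * α * l1Risk P v ≤ _ := hkey'
        ) hnα
    show l1Risk P w - l1Risk P wstar ≤ 2 * ε * m1 + α * (ε ^ 2 * m2 + 3 / 2 * S + 1)
    nlinarith [hii, hstep, mul_le_mul_of_nonneg_left hA2S hα.le,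
      mul_le_mul_of_nonneg_left hB2S hα.le,
      mul_nonneg hα.le (mul_nonneg (sq_nonneg ε) hm2)]
  -- final assembly
  haveI : IsProbabilityMeasure Pr := by
    rw [hPrdef]
    exact MeasureTheory.Measure.pi.instIsProbabilityMeasure (μ := fun _ : Fin n => P)
  have hGge : ENNReal.ofReal (1 - 2 * δ) ≤ Pr G := by
    have h1 : Pr G = 1 - Pr Gᶜ := by
      have := prob_compl_eq_one_sub (μ := Pr) hGmeas.compl
      rw [compl_compl] at this
      exact this
    rw [h1]
    have h2 : (1 : ENNReal) - ENNReal.ofReal (2 * δ) ≤ 1 - Pr Gᶜ :=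
      tsub_le_tsub_left hGc 1
    refine le_trans ?_ h2
    rw [← ENNReal.ofReal_one, ← ENNReal.ofReal_sub _ (by positivity)]
  exact le_trans hGge (measure_mono hGsub)
end

section
/- Let W ⊆ ℝ^d with ‖w‖ ≤ B for all w ∈ W, let ŵ be any minimizer over W of the truncated empirical risk R̂_{ψ∘ℓ1} with parameter α = sqrt((1/n)·log(N(W,1/n)/δ²)), and let w* be any minimizer over W of R_{ℓ1}. Then for every 0 < δ < 1/2, with probability at least 1 − 2δ over the i.i.d. sample, R_{ℓ1}(ŵ) − R_{ℓ1}(w*) ≤ (2/n)·E[‖x‖] + sqrt( (1/n)·( d·log(6nB) + log(1/δ²) ) ) · ( (1/n²)·E[‖x‖²] + (3/2)·sup_{w∈W} R_{ℓ2}(w) + 1 ). -/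
open MeasureTheory Real
open scoped ENNReal NNReal

/-- Generic Chernoff bound for i.i.d. sums. -/
lemma my_chernoff {Z : Type*} [MeasurableSpace Z] (P : Measure Z) [IsProbabilityMeasure P]
    (n : ℕ) (f h : Z → ℝ) (hint : Integrable h P)
    (hfh : ∀ z, Real.exp (f z) ≤ h z) (c a : ℝ) (hc : ∫ z, h z ∂P ≤ Real.exp c) :
    Measure.pi (fun _ : Fin n => P) {ω | n * c + a ≤ ∑ i, f (ω i)} ≤
      ENNReal.ofReal (Real.exp (-a)) := by
  letI : MeasureSpace Z := ⟨P⟩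
  haveI : IsProbabilityMeasure (volume : Measure Z) := ‹_›
  have hμ : Measure.pi (fun _ : Fin n => P) = (volume : Measure (Fin n → Z)) :=
    (volume_pi).symm
  rw [hμ]
  set F : (Fin n → Z) → ℝ := fun ω => ∏ i, h (ω i) with hF
  have hFint : Integrable F := Integrable.fintype_prod (f := fun _ : Fin n => h) (fun _ => hint)
  have hFnn : ∀ ω, 0 ≤ F ω := fun ω =>
    Finset.prod_nonneg fun i _ => le_trans (Real.exp_nonneg _) (hfh _)
  have hsub : {ω : Fin n → Z | (n : ℝ) * c + a ≤ ∑ i, f (ω i)} ⊆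
      {ω | Real.exp ((n : ℝ) * c + a) ≤ F ω} := by
    intro ω hω
    have h1 : Real.exp ((n : ℝ) * c + a) ≤ Real.exp (∑ i, f (ω i)) := Real.exp_le_exp.2 hω
    have h2 : Real.exp (∑ i, f (ω i)) = ∏ i, Real.exp (f (ω i)) := Real.exp_sum _ _
    refine le_trans h1 (le_trans (le_of_eq h2) ?_)
    exact Finset.prod_le_prod (fun i _ => Real.exp_nonneg _) (fun i _ => hfh _)
  have hmarkov := mul_meas_ge_le_integral_of_nonneg
    (μ := (volume : Measure (Fin n → Z))) (f := F)
    (Filter.Eventually.of_forall hFnn) hFint (Real.exp ((n : ℝ) * c + a))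
  have hintF : ∫ ω, F ω = (∫ z, h z ∂P) ^ n := by
    rw [hF]
    rw [← hμ]; simpa using integral_fintype_prod_eq_pow (𝕜 := ℝ) (ι := Fin n) (μ := P) h
  have hhnn : 0 ≤ ∫ z, h z ∂P :=
    integral_nonneg fun z => le_trans (Real.exp_nonneg _) (hfh z)
  have hpow : (∫ z, h z ∂P) ^ n ≤ Real.exp ((n : ℝ) * c) := by
    rw [Real.exp_nat_mul]
    exact pow_le_pow_left₀ hhnn hc n
  have hne : (volume : Measure (Fin n → Z)) {ω | Real.exp ((n : ℝ) * c + a) ≤ F ω} ≠ ⊤ :=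
    measure_ne_top _ _
  have htoReal : ((volume : Measure (Fin n → Z))
      {ω | Real.exp ((n : ℝ) * c + a) ≤ F ω}).toReal ≤ Real.exp (-a) := by
    have hb : (0 : ℝ) < Real.exp ((n : ℝ) * c + a) := Real.exp_pos _
    have := le_trans hmarkov (hintF ▸ hpow)
    calc ((volume : Measure (Fin n → Z)) {ω | Real.exp ((n : ℝ) * c + a) ≤ F ω}).toReal
        ≤ Real.exp ((n : ℝ) * c) / Real.exp ((n : ℝ) * c + a) := by
          rw [le_div_iff₀ hb]; rw [measureReal_def] at this; linarith [this]
      _ = Real.exp (-a) := by rw [← Real.exp_sub]; ring_nf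
  calc (volume : Measure (Fin n → Z)) {ω | (n : ℝ) * c + a ≤ ∑ i, f (ω i)}
      ≤ (volume : Measure (Fin n → Z)) {ω | Real.exp ((n : ℝ) * c + a) ≤ F ω} :=
        measure_mono hsub
    _ ≤ ENNReal.ofReal (Real.exp (-a)) :=
        (ENNReal.le_ofReal_iff_toReal_le hne (Real.exp_nonneg _)).2 htoReal

/-- Packing bound for separated sets in a Euclidean ball. -/
lemma my_pack {d : ℕ} (hd : 0 < d) {T : Finset (EuclideanSpace ℝ (Fin d))} {B ε : ℝ}
    (hε : 0 < ε) (hB : 0 ≤ B) (hTB : ∀ v ∈ T, ‖v‖ ≤ B)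
    (hsep : ∀ a ∈ T, ∀ b ∈ T, a ≠ b → ε < dist a b) :
    (T.card : ℝ) ≤ ((2 * B + ε) / ε) ^ d := by
  haveI : Nonempty (Fin d) := ⟨⟨0, hd⟩⟩
  have hdisj : (↑T : Set (EuclideanSpace ℝ (Fin d))).PairwiseDisjoint
      (fun v => Metric.ball v (ε / 2)) := by
    intro a ha b hb hab
    exact Metric.ball_disjoint_ball (by linarith [hsep a ha b hb hab])
  have hmeas := measure_biUnion_finset (μ := (volume : Measure (EuclideanSpace ℝ (Fin d)))) hdisj
    (fun v _ => measurableSet_ball)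
  have hsub : (⋃ v ∈ T, Metric.ball v (ε / 2)) ⊆
      Metric.ball (0 : EuclideanSpace ℝ (Fin d)) (B + ε / 2) := by
    intro x hx
    simp only [Set.mem_iUnion] at hx
    obtain ⟨v, hv, hxv⟩ := hx
    rw [Metric.mem_ball] at hxv ⊢
    have h1 : dist x 0 ≤ dist x v + dist v 0 := dist_triangle _ _ _
    have h2 : dist v 0 = ‖v‖ := by simp [dist_eq_norm]
    have := hTB v hv
    linarith
  have hball : ∀ v : EuclideanSpace ℝ (Fin d), volume (Metric.ball v (ε / 2)) =
      volume (Metric.ball (0 : EuclideanSpace ℝ (Fin d)) (ε / 2)) := fun v => by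
    rw [EuclideanSpace.volume_ball, EuclideanSpace.volume_ball]
  have key : (T.card : ENNReal) *
      volume (Metric.ball (0 : EuclideanSpace ℝ (Fin d)) (ε / 2)) ≤
      volume (Metric.ball (0 : EuclideanSpace ℝ (Fin d)) (B + ε / 2)) := by
    calc (T.card : ENNReal) * volume (Metric.ball (0 : EuclideanSpace ℝ (Fin d)) (ε / 2))
        = ∑ v ∈ T, volume (Metric.ball v (ε / 2)) := by
          rw [Finset.sum_congr rfl fun v _ => hball v, Finset.sum_const, nsmul_eq_mul]
      _ = volume (⋃ v ∈ T, Metric.ball v (ε / 2)) := hmeas.symm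
      _ ≤ _ := measure_mono hsub
  set C : ℝ := Real.sqrt π ^ Fintype.card (Fin d) / Gamma (Fintype.card (Fin d) / 2 + 1) with hC
  have hCpos : 0 < C := by
    apply div_pos (pow_pos (Real.sqrt_pos.2 Real.pi_pos) _)
    apply Real.Gamma_pos_of_pos
    positivity
  rw [EuclideanSpace.volume_ball, EuclideanSpace.volume_ball] at key
  have hfin : (ENNReal.ofReal (B + ε / 2)) ^ Fintype.card (Fin d) * ENNReal.ofReal C ≠ ⊤ := by
    exact ENNReal.mul_ne_top (ENNReal.pow_ne_top ENNReal.ofReal_ne_top) ENNReal.ofReal_ne_top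
  have key2 := ENNReal.toReal_mono hfin key
  rw [ENNReal.toReal_mul, ENNReal.toReal_mul, ENNReal.toReal_mul, ENNReal.toReal_pow,
    ENNReal.toReal_pow, ENNReal.toReal_ofReal (by positivity : (0:ℝ) ≤ ε / 2),
    ENNReal.toReal_ofReal (by positivity : (0:ℝ) ≤ B + ε / 2),
    ENNReal.toReal_ofReal hCpos.le, ENNReal.toReal_natCast] at key2
  have hcard : (T.card : ℝ) * (ε / 2) ^ d ≤ (B + ε / 2) ^ d := by
    have hd' : Fintype.card (Fin d) = d := Fintype.card_fin d
    rw [hd'] at key2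
    nlinarith [key2, hCpos]
  have hpow : (0:ℝ) < (ε / 2) ^ d := by positivity
  rw [show ((2 * B + ε) / ε : ℝ) = (B + ε / 2) / (ε / 2) by field_simp, div_pow]
  exact (le_div_iff₀ hpow).mpr (by linarith)
lemma my_exists_net {d : ℕ} (hd : 0 < d) (W : Set (EuclideanSpace ℝ (Fin d))) {B ε : ℝ}
    (hε : 0 < ε) (hB : 0 ≤ B) (hWB : ∀ w ∈ W, ‖w‖ ≤ B) :
    ∃ Net : Finset (EuclideanSpace ℝ (Fin d)), ↑Net ⊆ W ∧
      Net.card = coveringNumber W ε ∧ (∀ w ∈ W, ∃ v ∈ Net, ‖w - v‖ ≤ ε) ∧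
      ((coveringNumber W ε : ℝ) ≤ ((2 * B + ε) / ε) ^ d) := by
  classical
  set C : Set ℕ := {k | ∃ T : Finset (EuclideanSpace ℝ (Fin d)), ↑T ⊆ W ∧
    (∀ a ∈ T, ∀ b ∈ T, a ≠ b → ε < dist a b) ∧ T.card = k} with hCdef
  have h0 : 0 ∈ C := ⟨∅, by simp⟩
  have hboundC : ∀ k ∈ C, (k : ℝ) ≤ ((2 * B + ε) / ε) ^ d := by
    rintro k ⟨T, hTW, hTs, rfl⟩
    exact my_pack hd hε hB (fun v hv => hWB v (hTW hv)) hTs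
  have hbdd : BddAbove C :=
    ⟨Nat.floor (((2 * B + ε) / ε) ^ d), fun k hk => Nat.le_floor (hboundC k hk)⟩
  obtain ⟨T, hTW, hTs, hTcard⟩ := Nat.sSup_mem ⟨0, h0⟩ hbdd
  have hnet : ∀ w ∈ W, ∃ v ∈ T, ‖w - v‖ ≤ ε := by
    intro w hw
    by_contra hcon
    push_neg at hcon
    have hwT : w ∉ T := by
      intro hwT
      have := hcon w hwT
      simp only [sub_self, norm_zero] at this
      linarith
    have hsep' : ∀ a ∈ insert w T, ∀ b ∈ insert w T, a ≠ b → ε < dist a b := by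
      intro a ha b hb hab
      rcases Finset.mem_insert.1 ha with rfl | ha' <;>
        rcases Finset.mem_insert.1 hb with rfl | hb'
      · exact absurd rfl hab
      · rw [dist_eq_norm]; exact hcon b hb'
      · rw [dist_comm, dist_eq_norm]; exact hcon a ha'
      · exact hTs a ha' b hb' hab
    have hmemC : T.card + 1 ∈ C := by
      refine ⟨insert w T, ?_, hsep', Finset.card_insert_of_notMem hwT⟩
      rw [Finset.coe_insert]
      exact Set.insert_subset hw hTW
    have := le_csSup hbdd hmemC
    omega
  have hCNmem := Nat.sInf_mem (⟨T.card, T, hTW, rfl, hnet⟩ : Set.Nonempty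
    {k | ∃ N : Finset (EuclideanSpace ℝ (Fin d)), ↑N ⊆ W ∧ N.card = k ∧
      ∀ w ∈ W, ∃ v ∈ N, ‖w - v‖ ≤ ε})
  obtain ⟨Net, hNW, hNc, hNnet⟩ := hCNmem
  have hle : coveringNumber W ε ≤ T.card := Nat.sInf_le ⟨T, hTW, rfl, hnet⟩
  refine ⟨Net, hNW, hNc, hNnet, ?_⟩
  calc ((coveringNumber W ε : ℝ)) ≤ (T.card : ℝ) := Nat.cast_le.2 hle
    _ ≤ _ := hboundC _ ⟨T, hTW, hTs, rfl⟩

/-- Lipschitz property of the ℓ1 risk. -/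
lemma my_l1_lip {d : ℕ} (P : Measure (EuclideanSpace ℝ (Fin d) × ℝ)) [IsProbabilityMeasure P]
    (w w' : EuclideanSpace ℝ (Fin d))
    (h0 : Integrable (fun z : EuclideanSpace ℝ (Fin d) × ℝ => |z.2 - (inner ℝ z.1 w : ℝ)|) P)
    (h1 : Integrable (fun z : EuclideanSpace ℝ (Fin d) × ℝ => |z.2 - (inner ℝ z.1 w' : ℝ)|) P)
    (hx : Integrable (fun z : EuclideanSpace ℝ (Fin d) × ℝ => ‖z.1‖) P) :
    l1Risk P w ≤ l1Risk P w' + ‖w - w'‖ * ∫ z, ‖z.1‖ ∂P := by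
  have hpt : ∀ z : EuclideanSpace ℝ (Fin d) × ℝ,
      |z.2 - (inner ℝ z.1 w : ℝ)| ≤ |z.2 - (inner ℝ z.1 w' : ℝ)| + ‖w - w'‖ * ‖z.1‖ := by
    intro z
    have h2 : (inner ℝ z.1 w' : ℝ) - (inner ℝ z.1 w : ℝ) = (inner ℝ z.1 (w' - w) : ℝ) :=
      (inner_sub_right _ _ _).symm
    have h3 : |(inner ℝ z.1 (w' - w) : ℝ)| ≤ ‖z.1‖ * ‖w' - w‖ := abs_real_inner_le_norm _ _
    have h4 : |z.2 - (inner ℝ z.1 w : ℝ)| ≤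
        |z.2 - (inner ℝ z.1 w' : ℝ)| + |(inner ℝ z.1 (w' - w) : ℝ)| := by
      have : z.2 - (inner ℝ z.1 w : ℝ) =
          (z.2 - (inner ℝ z.1 w' : ℝ)) + ((inner ℝ z.1 w' : ℝ) - (inner ℝ z.1 w : ℝ)) := by ring
      rw [this, h2]
      exact abs_add_le _ _
    have h5 : ‖w' - w‖ = ‖w - w'‖ := norm_sub_rev _ _
    calc |z.2 - (inner ℝ z.1 w : ℝ)| ≤
        |z.2 - (inner ℝ z.1 w' : ℝ)| + |(inner ℝ z.1 (w' - w) : ℝ)| := h4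
      _ ≤ |z.2 - (inner ℝ z.1 w' : ℝ)| + ‖z.1‖ * ‖w' - w‖ := by linarith
      _ = |z.2 - (inner ℝ z.1 w' : ℝ)| + ‖w - w'‖ * ‖z.1‖ := by rw [h5]; ring
  calc l1Risk P w ≤ ∫ z, (|z.2 - (inner ℝ z.1 w' : ℝ)| + ‖w - w'‖ * ‖z.1‖) ∂P :=
      integral_mono h0 (h1.add (hx.const_mul _)) hpt
    _ = l1Risk P w' + ‖w - w'‖ * ∫ z, ‖z.1‖ ∂P := by
      rw [integral_add h1 (hx.const_mul _), MeasureTheory.integral_const_mul]; rfl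


lemma my_psi_ub (ψ : ℝ → ℝ) (hψub : ∀ x : ℝ, ψ x ≤ Real.log (1 + x + x ^ 2 / 2)) (t : ℝ) :
    Real.exp (ψ t) ≤ 1 + t + t^2/2 := by
  have hpos : 0 < 1 + t + t^2/2 := by nlinarith [sq_nonneg (t+1)]
  calc Real.exp (ψ t) ≤ Real.exp (Real.log (1 + t + t^2/2)) := by
        apply Real.exp_le_exp.2
        have := hψub t
        convert this using 3 <;> ring
    _ = 1 + t + t^2/2 := Real.exp_log hpos

lemma my_psi_lb (ψ : ℝ → ℝ) (hψlb : ∀ x : ℝ, -Real.log (1 - x + x ^ 2 / 2) ≤ ψ x) (t : ℝ) :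
    Real.exp (-ψ t) ≤ 1 - t + t^2/2 := by
  have hpos : 0 < 1 - t + t^2/2 := by nlinarith [sq_nonneg (t-1)]
  have hneg : -ψ t ≤ Real.log (1 - t + t^2/2) := by
    have := hψlb t
    have heq : Real.log (1 - t + t ^ 2 / 2) = Real.log (1 - t + t^2/2) := by norm_num
    linarith [heq.le, heq.ge]
  calc Real.exp (-ψ t) ≤ Real.exp (Real.log (1 - t + t^2/2)) := Real.exp_le_exp.2 hneg
    _ = 1 - t + t^2/2 := Real.exp_log hpos

set_option maxHeartbeats 2000000

/-- Corollary 1 of the paper: for `W ⊆ ℝ^d` of radius at most `B`, with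
`α = sqrt((1/n) log(N(W,1/n)/δ²))`, with probability at least `1 − 2δ`,
`R_{ℓ1}(ŵ) − R_{ℓ1}(w*) ≤ (2/n) E‖x‖
  + sqrt((1/n)(d log(6nB) + log(1/δ²))) ((1/n²) E‖x‖² + (3/2) sup_{w∈W} R_{ℓ2}(w) + 1)`. -/
theorem truncated_min_excess_risk_euclidean
    (d : ℕ) (P : Measure (EuclideanSpace ℝ (Fin d) × ℝ)) [IsProbabilityMeasure P]
    (W : Set (EuclideanSpace ℝ (Fin d))) (ψ : ℝ → ℝ)
    (hψmono : Monotone ψ)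
    (hψlb : ∀ x : ℝ, -Real.log (1 - x + x ^ 2 / 2) ≤ ψ x)
    (hψub : ∀ x : ℝ, ψ x ≤ Real.log (1 + x + x ^ 2 / 2))
    (n : ℕ) (hn : 0 < n)
    (δ : ℝ) (hδ : 0 < δ) (hδ' : δ < 1 / 2)
    -- (A5): the radius of W is bounded by B
    (B : ℝ) (hA5 : ∀ w ∈ W, ‖w‖ ≤ B)
    -- the tuned choice of α
    (α : ℝ)
    (hαdef : α = Real.sqrt ((1 / n) * Real.log ((coveringNumber W (1 / n) : ℝ) / δ ^ 2)))
    -- (A2): E‖x‖² < ∞ (and hence E‖x‖ < ∞)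
    (hxInt : Integrable (fun z : EuclideanSpace ℝ (Fin d) × ℝ => ‖z.1‖) P)
    (hA2 : Integrable (fun z : EuclideanSpace ℝ (Fin d) × ℝ => ‖z.1‖ ^ 2) P)
    -- risks are well defined on W
    (hInt1 : ∀ w ∈ W,
      Integrable (fun z : EuclideanSpace ℝ (Fin d) × ℝ => |z.2 - (inner ℝ z.1 w : ℝ)|) P)
    (hInt2 : ∀ w ∈ W,
      Integrable (fun z : EuclideanSpace ℝ (Fin d) × ℝ => (z.2 - (inner ℝ z.1 w : ℝ)) ^ 2) P)
    -- (A3): sup_{w ∈ W} R_{ℓ2}(w) < ∞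
    (hA3 : BddAbove (l2Risk P '' W))
    -- ŵ : any minimizer of the truncated empirical risk over W
    (what : (Fin n → EuclideanSpace ℝ (Fin d) × ℝ) → EuclideanSpace ℝ (Fin d))
    (hwhatW : ∀ ω, what ω ∈ W)
    (hwhatMin : ∀ ω, ∀ w ∈ W, truncEmpRisk ψ α n ω (what ω) ≤ truncEmpRisk ψ α n ω w)
    -- w* : any minimizer of the ℓ1-risk over W
    (wstar : EuclideanSpace ℝ (Fin d)) (hwstarW : wstar ∈ W)
    (hwstarMin : ∀ w ∈ W, l1Risk P wstar ≤ l1Risk P w) :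
    ENNReal.ofReal (1 - 2 * δ) ≤
      Measure.pi (fun _ : Fin n => P)
        {ω | l1Risk P (what ω) - l1Risk P wstar ≤
          2 / n * (∫ z, ‖z.1‖ ∂P)
          + Real.sqrt ((1 / n) * (d * Real.log (6 * n * B) + Real.log (1 / δ ^ 2))) *
            (1 / n ^ 2 * (∫ z, ‖z.1‖ ^ 2 ∂P) + 3 / 2 * sSup (l2Risk P '' W) + 1)} := by
  
  classical
  have hn' : (0:ℝ) < n := Nat.cast_pos.2 hn
  have hB0 : 0 ≤ B := le_trans (norm_nonneg wstar) (hA5 wstar hwstarW)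
  have hI1 : 0 ≤ ∫ z, ‖z.1‖ ∂P := integral_nonneg fun z => norm_nonneg _
  have hI2 : 0 ≤ ∫ z, ‖z.1‖^2 ∂P := integral_nonneg fun z => sq_nonneg _
  have hl2nonneg : ∀ w, 0 ≤ l2Risk P w := fun w => integral_nonneg fun z => sq_nonneg _
  have hS0 : 0 ≤ sSup (l2Risk P '' W) :=
    le_trans (hl2nonneg wstar) (le_csSup hA3 ⟨wstar, hwstarW, rfl⟩)
  have hSle : ∀ w ∈ W, l2Risk P w ≤ sSup (l2Risk P '' W) := fun w hw => le_csSup hA3 ⟨w, hw, rfl⟩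
  have hsqrt0 : 0 ≤ Real.sqrt ((1/(n:ℝ)) * (d * Real.log (6*n*B) + Real.log (1/δ^2))) :=
    Real.sqrt_nonneg _
  have hMul0 : 0 ≤ 1/(n:ℝ)^2 * (∫ z, ‖z.1‖^2 ∂P) + 3/2 * sSup (l2Risk P '' W) + 1 := by
    have h1 : 0 ≤ 1/(n:ℝ)^2 * (∫ z, ‖z.1‖^2 ∂P) :=
      mul_nonneg (by positivity) hI2
    linarith
  have htriv : (∀ ω : Fin n → (EuclideanSpace ℝ (Fin d) × ℝ),
      l1Risk P (what ω) - l1Risk P wstar ≤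
        2 / n * (∫ z, ‖z.1‖ ∂P)
        + Real.sqrt ((1 / n) * (d * Real.log (6 * n * B) + Real.log (1 / δ ^ 2))) *
          (1 / n ^ 2 * (∫ z, ‖z.1‖ ^ 2 ∂P) + 3 / 2 * sSup (l2Risk P '' W) + 1)) →
      ENNReal.ofReal (1 - 2 * δ) ≤
        Measure.pi (fun _ : Fin n => P)
          {ω | l1Risk P (what ω) - l1Risk P wstar ≤
            2 / n * (∫ z, ‖z.1‖ ∂P)
            + Real.sqrt ((1 / n) * (d * Real.log (6 * n * B) + Real.log (1 / δ ^ 2))) *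
              (1 / n ^ 2 * (∫ z, ‖z.1‖ ^ 2 ∂P) + 3 / 2 * sSup (l2Risk P '' W) + 1)} := by
    intro hall
    have huniv : {ω : Fin n → (EuclideanSpace ℝ (Fin d) × ℝ) |
        l1Risk P (what ω) - l1Risk P wstar ≤
          2 / n * (∫ z, ‖z.1‖ ∂P)
          + Real.sqrt ((1 / n) * (d * Real.log (6 * n * B) + Real.log (1 / δ ^ 2))) *
            (1 / n ^ 2 * (∫ z, ‖z.1‖ ^ 2 ∂P) + 3 / 2 * sSup (l2Risk P '' W) + 1)} =
        Set.univ := Set.eq_univ_iff_forall.2 hall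
    rw [huniv, measure_univ]
    exact ENNReal.ofReal_le_one.2 (by linarith)
  rcases Nat.eq_zero_or_pos d with hd0 | hd
  · -- dimension 0 : everything is trivial
    apply htriv
    intro ω
    have hww : what ω = wstar := by
      subst hd0
      have h0 : ‖what ω - wstar‖ = 0 := by
        simp [EuclideanSpace.norm_eq]
      exact sub_eq_zero.1 (norm_eq_zero.1 h0)
    rw [hww, sub_self]
    have := mul_nonneg hsqrt0 hMul0
    have h2 : 0 ≤ 2/(n:ℝ) * (∫ z, ‖z.1‖ ∂P) := mul_nonneg (by positivity) hI1
    linarith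
  by_cases hBn : B ≤ 1/(n:ℝ)
  · -- small radius : deterministic bound
    apply htriv
    intro ω
    have hlip := my_l1_lip P (what ω) wstar (hInt1 _ (hwhatW ω)) (hInt1 _ hwstarW) hxInt
    have hnorm : ‖what ω - wstar‖ ≤ 2/(n:ℝ) := by
      calc ‖what ω - wstar‖ ≤ ‖what ω‖ + ‖wstar‖ := norm_sub_le _ _
        _ ≤ B + B := add_le_add (hA5 _ (hwhatW ω)) (hA5 _ hwstarW)
        _ ≤ 2/(n:ℝ) := by rw [show (2:ℝ)/n = 1/n + 1/n by ring]; exact add_le_add hBn hBn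
    have hmul : ‖what ω - wstar‖ * (∫ z, ‖z.1‖ ∂P) ≤ 2/(n:ℝ) * (∫ z, ‖z.1‖ ∂P) :=
      mul_le_mul_of_nonneg_right hnorm hI1
    have h2 : 0 ≤ Real.sqrt ((1/(n:ℝ)) * (d * Real.log (6*n*B) + Real.log (1/δ^2))) *
        (1/(n:ℝ)^2 * (∫ z, ‖z.1‖^2 ∂P) + 3/2 * sSup (l2Risk P '' W) + 1) :=
      mul_nonneg hsqrt0 hMul0
    linarith
  -- main case
  push_neg at hBn
  have hnB : 1 < (n:ℝ) * B := by
    rw [div_lt_iff₀ hn'] at hBn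
    linarith
  obtain ⟨Net, hNetW, hNetcard, hNetcover, hNbound⟩ :=
    my_exists_net hd W (by positivity : (0:ℝ) < 1/(n:ℝ)) hB0 hA5
  have hNge1 : 1 ≤ coveringNumber W (1/(n:ℝ)) := by
    obtain ⟨v, hv, -⟩ := hNetcover wstar hwstarW
    rw [← hNetcard]
    exact Finset.card_pos.2 ⟨v, hv⟩
  have hNpos : (0:ℝ) < (coveringNumber W (1/(n:ℝ)) : ℝ) := by
    exact_mod_cast Nat.lt_of_lt_of_le Nat.zero_lt_one hNge1
  have hN6 : ((coveringNumber W (1/(n:ℝ)) : ℝ)) ≤ (6*n*B)^d := by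
    refine le_trans hNbound ?_
    have hbase : ((2*B + 1/(n:ℝ))/(1/(n:ℝ)) : ℝ) = 2*n*B + 1 := by
      field_simp
    rw [hbase]
    exact pow_le_pow_left₀ (by nlinarith) (by nlinarith) d
  have hδ2 : (0:ℝ) < δ^2 := by positivity
  have hNge1' : (1:ℝ) ≤ (coveringNumber W (1/(n:ℝ)) : ℝ) := by exact_mod_cast hNge1
  have hLpos : 0 < Real.log ((coveringNumber W (1/(n:ℝ)) : ℝ) / δ^2) := by
    apply Real.log_pos
    rw [lt_div_iff₀ hδ2]
    nlinarith [hNge1', hδ, hδ']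
  have hαpos : 0 < α := by
    rw [hαdef]
    exact Real.sqrt_pos.2 (by positivity)
  have hα2 : (n:ℝ) * α^2 = Real.log ((coveringNumber W (1/(n:ℝ)) : ℝ) / δ^2) := by
    rw [hαdef, Real.sq_sqrt (by positivity)]
    field_simp
  have hααh : α ≤ Real.sqrt ((1/(n:ℝ)) * (d * Real.log (6*n*B) + Real.log (1/δ^2))) := by
    rw [hαdef]
    apply Real.sqrt_le_sqrt
    have hlogN : Real.log ((coveringNumber W (1/(n:ℝ)) : ℝ)) ≤ d * Real.log (6*n*B) := by
      rw [← Real.log_pow]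
      exact Real.log_le_log hNpos hN6
    have hsplit : Real.log ((coveringNumber W (1/(n:ℝ)) : ℝ) / δ^2) =
        Real.log ((coveringNumber W (1/(n:ℝ)) : ℝ)) + Real.log (1/δ^2) := by
      rw [Real.log_div hNpos.ne' (ne_of_gt hδ2), Real.log_div one_ne_zero (ne_of_gt hδ2),
        Real.log_one]
      ring
    have h1n : 0 ≤ 1/(n:ℝ) := by positivity
    rw [hsplit]
    apply mul_le_mul_of_nonneg_left _ h1n
    linarith
  -- upper tail bound at wstar
  have hupper : Measure.pi (fun _ : Fin n => P)
      {ω | (n:ℝ) * (α * l1Risk P wstar + α^2 * l2Risk P wstar / 2) + Real.log (1/δ) ≤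
        ∑ i, (fun z : EuclideanSpace ℝ (Fin d) × ℝ =>
          ψ (α * |z.2 - (inner ℝ z.1 wstar : ℝ)|)) (ω i)} ≤ ENNReal.ofReal δ := by
    have hint : Integrable (fun z : EuclideanSpace ℝ (Fin d) × ℝ =>
        1 + α * |z.2 - (inner ℝ z.1 wstar : ℝ)| + α^2 * (z.2 - (inner ℝ z.1 wstar : ℝ))^2 / 2) P :=
      ((integrable_const 1).add ((hInt1 wstar hwstarW).const_mul α)).add
        (((hInt2 wstar hwstarW).const_mul (α^2)).div_const 2)
    have hfh : ∀ z : EuclideanSpace ℝ (Fin d) × ℝ,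
        Real.exp (ψ (α * |z.2 - (inner ℝ z.1 wstar : ℝ)|)) ≤
          1 + α * |z.2 - (inner ℝ z.1 wstar : ℝ)| + α^2 * (z.2 - (inner ℝ z.1 wstar : ℝ))^2 / 2 := by
      intro z
      have h2 := my_psi_ub ψ hψub (α * |z.2 - (inner ℝ z.1 wstar : ℝ)|)
      have heq : (α * |z.2 - (inner ℝ z.1 wstar : ℝ)|)^2 =
          α^2 * (z.2 - (inner ℝ z.1 wstar : ℝ))^2 := by rw [mul_pow, sq_abs]
      linarith [h2, heq.le, heq.ge]
    have hc : ∫ z, (1 + α * |z.2 - (inner ℝ z.1 wstar : ℝ)| +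
        α^2 * (z.2 - (inner ℝ z.1 wstar : ℝ))^2 / 2) ∂P ≤
        Real.exp (α * l1Risk P wstar + α^2 * l2Risk P wstar / 2) := by
      have heval : ∫ z, (1 + α * |z.2 - (inner ℝ z.1 wstar : ℝ)| +
          α^2 * (z.2 - (inner ℝ z.1 wstar : ℝ))^2 / 2) ∂P =
          1 + α * l1Risk P wstar + α^2 * l2Risk P wstar / 2 := by
        have ha0 : Integrable (fun _ : EuclideanSpace ℝ (Fin d) × ℝ => (1:ℝ)) P :=
          integrable_const 1
        have ha1 : Integrable (fun z : EuclideanSpace ℝ (Fin d) × ℝ =>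
            α * |z.2 - (inner ℝ z.1 wstar : ℝ)|) P := (hInt1 wstar hwstarW).const_mul α
        have ha01 : Integrable (fun z : EuclideanSpace ℝ (Fin d) × ℝ =>
            1 + α * |z.2 - (inner ℝ z.1 wstar : ℝ)|) P := ha0.add ha1
        have ha2 : Integrable (fun z : EuclideanSpace ℝ (Fin d) × ℝ =>
            α^2 * (z.2 - (inner ℝ z.1 wstar : ℝ))^2 / 2) P :=
          ((hInt2 wstar hwstarW).const_mul (α^2)).div_const 2
        rw [integral_add ha01 ha2, integral_add ha0 ha1,
          integral_const, integral_div, MeasureTheory.integral_const_mul,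
          MeasureTheory.integral_const_mul]
        simp [l1Risk, l2Risk]
      rw [heval]
      have := Real.add_one_le_exp (α * l1Risk P wstar + α^2 * l2Risk P wstar / 2)
      linarith
    refine le_trans (my_chernoff P n _ _ hint hfh _ _ hc) (le_of_eq ?_)
    rw [one_div, Real.log_inv, neg_neg, Real.exp_log hδ]
  -- lower tail bounds on the net
  have hlow : ∀ v ∈ Net, Measure.pi (fun _ : Fin n => P)
      {ω | (n:ℝ) * (-(α * (l1Risk P v - (∫ z, ‖z.1‖ ∂P)/n)) +
          α^2 * (l2Risk P v + (∫ z, ‖z.1‖^2 ∂P)/(n:ℝ)^2)/2) +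
          Real.log ((coveringNumber W (1/(n:ℝ)) : ℝ)/δ) ≤
        ∑ i, (fun z : EuclideanSpace ℝ (Fin d) × ℝ =>
          -ψ (α * (|z.2 - (inner ℝ z.1 v : ℝ)| - ‖z.1‖/n))) (ω i)} ≤
      ENNReal.ofReal (δ / (coveringNumber W (1/(n:ℝ)) : ℝ)) := by
    intro v hv
    have hvW : v ∈ W := hNetW hv
    have hcontg : Continuous (fun z : EuclideanSpace ℝ (Fin d) × ℝ =>
        |z.2 - (inner ℝ z.1 v : ℝ)| - ‖z.1‖/(n:ℝ)) :=
      ((continuous_snd.sub (Continuous.inner continuous_fst continuous_const)).abs).sub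
        ((continuous_fst.norm).div_const _)
    have hgint : Integrable (fun z : EuclideanSpace ℝ (Fin d) × ℝ =>
        |z.2 - (inner ℝ z.1 v : ℝ)| - ‖z.1‖/(n:ℝ)) P := (hInt1 v hvW).sub (hxInt.div_const _)
    have hD : Integrable (fun z : EuclideanSpace ℝ (Fin d) × ℝ =>
        (z.2 - (inner ℝ z.1 v : ℝ))^2 + ‖z.1‖^2/(n:ℝ)^2) P := (hInt2 v hvW).add (hA2.div_const _)
    have hptD : ∀ z : EuclideanSpace ℝ (Fin d) × ℝ,
        (|z.2 - (inner ℝ z.1 v : ℝ)| - ‖z.1‖/(n:ℝ))^2 ≤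
          (z.2 - (inner ℝ z.1 v : ℝ))^2 + ‖z.1‖^2/(n:ℝ)^2 := by
      intro z
      have h1 : |z.2 - (inner ℝ z.1 v : ℝ)|^2 = (z.2 - (inner ℝ z.1 v : ℝ))^2 := sq_abs _
      have h2 : (‖z.1‖/(n:ℝ))^2 = ‖z.1‖^2/(n:ℝ)^2 := div_pow _ _ _
      nlinarith [abs_nonneg (z.2 - (inner ℝ z.1 v : ℝ)), norm_nonneg z.1,
        mul_nonneg (abs_nonneg (z.2 - (inner ℝ z.1 v : ℝ)))
          (div_nonneg (norm_nonneg z.1) hn'.le)]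
    have hg2 : Integrable (fun z : EuclideanSpace ℝ (Fin d) × ℝ =>
        (|z.2 - (inner ℝ z.1 v : ℝ)| - ‖z.1‖/(n:ℝ))^2) P := by
      refine hD.mono ((hcontg.pow 2).aestronglyMeasurable)
        (Filter.Eventually.of_forall fun z => ?_)
      have h1 : ‖(|z.2 - (inner ℝ z.1 v : ℝ)| - ‖z.1‖/(n:ℝ))^2‖ =
          (|z.2 - (inner ℝ z.1 v : ℝ)| - ‖z.1‖/(n:ℝ))^2 := Real.norm_of_nonneg (sq_nonneg _)
      have h2 : ‖(z.2 - (inner ℝ z.1 v : ℝ))^2 + ‖z.1‖^2/(n:ℝ)^2‖ =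
          (z.2 - (inner ℝ z.1 v : ℝ))^2 + ‖z.1‖^2/(n:ℝ)^2 :=
        Real.norm_of_nonneg (by positivity)
      rw [h1, h2]
      exact hptD z
    have hint : Integrable (fun z : EuclideanSpace ℝ (Fin d) × ℝ =>
        1 - α * (|z.2 - (inner ℝ z.1 v : ℝ)| - ‖z.1‖/(n:ℝ)) +
          α^2 * (|z.2 - (inner ℝ z.1 v : ℝ)| - ‖z.1‖/(n:ℝ))^2 / 2) P :=
      ((integrable_const 1).sub (hgint.const_mul α)).add ((hg2.const_mul (α^2)).div_const 2)
    have hfh : ∀ z : EuclideanSpace ℝ (Fin d) × ℝ,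
        Real.exp (-ψ (α * (|z.2 - (inner ℝ z.1 v : ℝ)| - ‖z.1‖/(n:ℝ)))) ≤
          1 - α * (|z.2 - (inner ℝ z.1 v : ℝ)| - ‖z.1‖/(n:ℝ)) +
            α^2 * (|z.2 - (inner ℝ z.1 v : ℝ)| - ‖z.1‖/(n:ℝ))^2 / 2 := by
      intro z
      have h2 := my_psi_lb ψ hψlb (α * (|z.2 - (inner ℝ z.1 v : ℝ)| - ‖z.1‖/(n:ℝ)))
      have heq : (α * (|z.2 - (inner ℝ z.1 v : ℝ)| - ‖z.1‖/(n:ℝ)))^2 =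
          α^2 * (|z.2 - (inner ℝ z.1 v : ℝ)| - ‖z.1‖/(n:ℝ))^2 := mul_pow _ _ _
      linarith [h2, heq.le, heq.ge]
    have hc : ∫ z, (1 - α * (|z.2 - (inner ℝ z.1 v : ℝ)| - ‖z.1‖/(n:ℝ)) +
        α^2 * (|z.2 - (inner ℝ z.1 v : ℝ)| - ‖z.1‖/(n:ℝ))^2 / 2) ∂P ≤
        Real.exp (-(α * (l1Risk P v - (∫ z, ‖z.1‖ ∂P)/n)) +
          α^2 * (l2Risk P v + (∫ z, ‖z.1‖^2 ∂P)/(n:ℝ)^2)/2) := by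
      have hintg : ∫ z, (|z.2 - (inner ℝ z.1 v : ℝ)| - ‖z.1‖/(n:ℝ)) ∂P =
          l1Risk P v - (∫ z, ‖z.1‖ ∂P)/n := by
        rw [integral_sub (hInt1 v hvW) (hxInt.div_const _), integral_div]
        rfl
      have hintg2 : ∫ z, (|z.2 - (inner ℝ z.1 v : ℝ)| - ‖z.1‖/(n:ℝ))^2 ∂P ≤
          l2Risk P v + (∫ z, ‖z.1‖^2 ∂P)/(n:ℝ)^2 := by
        have hmono := integral_mono hg2 hD hptD
        rwa [integral_add (hInt2 v hvW) (hA2.div_const _), integral_div] at hmono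
      have heval : ∫ z, (1 - α * (|z.2 - (inner ℝ z.1 v : ℝ)| - ‖z.1‖/(n:ℝ)) +
          α^2 * (|z.2 - (inner ℝ z.1 v : ℝ)| - ‖z.1‖/(n:ℝ))^2 / 2) ∂P =
          1 - α * (l1Risk P v - (∫ z, ‖z.1‖ ∂P)/n) +
            α^2 * (∫ z, (|z.2 - (inner ℝ z.1 v : ℝ)| - ‖z.1‖/(n:ℝ))^2 ∂P) / 2 := by
        have hb0 : Integrable (fun _ : EuclideanSpace ℝ (Fin d) × ℝ => (1:ℝ)) P :=
          integrable_const 1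
        have hb1 : Integrable (fun z : EuclideanSpace ℝ (Fin d) × ℝ =>
            α * (|z.2 - (inner ℝ z.1 v : ℝ)| - ‖z.1‖/(n:ℝ))) P := hgint.const_mul α
        have hb01 : Integrable (fun z : EuclideanSpace ℝ (Fin d) × ℝ =>
            1 - α * (|z.2 - (inner ℝ z.1 v : ℝ)| - ‖z.1‖/(n:ℝ))) P := hb0.sub hb1
        have hb2 : Integrable (fun z : EuclideanSpace ℝ (Fin d) × ℝ =>
            α^2 * (|z.2 - (inner ℝ z.1 v : ℝ)| - ‖z.1‖/(n:ℝ))^2 / 2) P :=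
          (hg2.const_mul (α^2)).div_const 2
        rw [integral_add hb01 hb2, integral_sub hb0 hb1,
          integral_const, integral_div, MeasureTheory.integral_const_mul,
          MeasureTheory.integral_const_mul, hintg]
        simp
      rw [heval]
      have hsq : α^2 * (∫ z, (|z.2 - (inner ℝ z.1 v : ℝ)| - ‖z.1‖/(n:ℝ))^2 ∂P) / 2 ≤
          α^2 * (l2Risk P v + (∫ z, ‖z.1‖^2 ∂P)/(n:ℝ)^2) / 2 := by
        have := mul_le_mul_of_nonneg_left hintg2 (sq_nonneg α)
        linarith
      have hexp := Real.add_one_le_exp (-(α * (l1Risk P v - (∫ z, ‖z.1‖ ∂P)/n)) +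
          α^2 * (l2Risk P v + (∫ z, ‖z.1‖^2 ∂P)/(n:ℝ)^2)/2)
      linarith
    refine le_trans (my_chernoff P n _ _ hint hfh _ _ hc) (le_of_eq ?_)
    rw [Real.exp_neg, Real.exp_log (by positivity), inv_div]
  -- union bound
  set BadU : Set (Fin n → EuclideanSpace ℝ (Fin d) × ℝ) :=
    {ω | (n:ℝ) * (α * l1Risk P wstar + α^2 * l2Risk P wstar / 2) + Real.log (1/δ) ≤
      ∑ i, (fun z : EuclideanSpace ℝ (Fin d) × ℝ =>
        ψ (α * |z.2 - (inner ℝ z.1 wstar : ℝ)|)) (ω i)} with hBadU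
  set BadL : EuclideanSpace ℝ (Fin d) → Set (Fin n → EuclideanSpace ℝ (Fin d) × ℝ) :=
    fun v => {ω | (n:ℝ) * (-(α * (l1Risk P v - (∫ z, ‖z.1‖ ∂P)/n)) +
        α^2 * (l2Risk P v + (∫ z, ‖z.1‖^2 ∂P)/(n:ℝ)^2)/2) +
        Real.log ((coveringNumber W (1/(n:ℝ)) : ℝ)/δ) ≤
      ∑ i, (fun z : EuclideanSpace ℝ (Fin d) × ℝ =>
        -ψ (α * (|z.2 - (inner ℝ z.1 v : ℝ)| - ‖z.1‖/n))) (ω i)} with hBadL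
  have hBadAll : Measure.pi (fun _ : Fin n => P) (BadU ∪ ⋃ v ∈ Net, BadL v) ≤
      ENNReal.ofReal (2*δ) := by
    calc Measure.pi (fun _ : Fin n => P) (BadU ∪ ⋃ v ∈ Net, BadL v) ≤
        Measure.pi (fun _ : Fin n => P) BadU +
          Measure.pi (fun _ : Fin n => P) (⋃ v ∈ Net, BadL v) := measure_union_le _ _
      _ ≤ ENNReal.ofReal δ + ∑ v ∈ Net, Measure.pi (fun _ : Fin n => P) (BadL v) :=
          add_le_add hupper (measure_biUnion_finset_le _ _)
      _ ≤ ENNReal.ofReal δ + ∑ _v ∈ Net,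
            ENNReal.ofReal (δ / (coveringNumber W (1/(n:ℝ)) : ℝ)) :=
          add_le_add le_rfl (Finset.sum_le_sum fun v hv => hlow v hv)
      _ = ENNReal.ofReal (2*δ) := by
          rw [Finset.sum_const, hNetcard, nsmul_eq_mul]
          rw [show ((coveringNumber W (1/(n:ℝ)) : ℕ) : ℝ≥0∞) =
              ENNReal.ofReal ((coveringNumber W (1/(n:ℝ)) : ℝ)) from
            (ENNReal.ofReal_natCast _).symm]
          rw [← ENNReal.ofReal_mul hNpos.le]
          rw [show (coveringNumber W (1/(n:ℝ)) : ℝ) *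
              (δ / (coveringNumber W (1/(n:ℝ)) : ℝ)) = δ by field_simp]
          rw [← ENNReal.ofReal_add hδ.le hδ.le]
          ring_nf
  -- the good event is contained in the target event
  have hinc : (BadU ∪ ⋃ v ∈ Net, BadL v)ᶜ ⊆
      {ω | l1Risk P (what ω) - l1Risk P wstar ≤
        2 / n * (∫ z, ‖z.1‖ ∂P)
        + Real.sqrt ((1 / n) * (d * Real.log (6 * n * B) + Real.log (1 / δ ^ 2))) *
          (1 / n ^ 2 * (∫ z, ‖z.1‖ ^ 2 ∂P) + 3 / 2 * sSup (l2Risk P '' W) + 1)} := by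
    intro ω hω
    have hU : ω ∉ BadU := fun h => hω (Or.inl h)
    have hLmem : ∀ v ∈ Net, ω ∉ BadL v := fun v hv h => hω (Or.inr (Set.mem_biUnion hv h))
    obtain ⟨v, hvNet, hvclose⟩ := hNetcover (what ω) (hwhatW ω)
    have hvW : v ∈ W := hNetW hvNet
    have hUlt : ∑ i, ψ (α * |(ω i).2 - (inner ℝ (ω i).1 wstar : ℝ)|) <
        (n:ℝ) * (α * l1Risk P wstar + α^2 * l2Risk P wstar / 2) + Real.log (1/δ) := by
      have hmem := hU
      rw [hBadU, Set.mem_setOf_eq] at hmem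
      exact not_le.1 hmem
    have hLlt : ∑ i, -ψ (α * (|(ω i).2 - (inner ℝ (ω i).1 v : ℝ)| - ‖(ω i).1‖/n)) <
        (n:ℝ) * (-(α * (l1Risk P v - (∫ z, ‖z.1‖ ∂P)/n)) +
          α^2 * (l2Risk P v + (∫ z, ‖z.1‖^2 ∂P)/(n:ℝ)^2)/2) +
          Real.log ((coveringNumber W (1/(n:ℝ)) : ℝ)/δ) := by
      have hmem := hLmem v hvNet
      rw [hBadL] at hmem
      rw [Set.mem_setOf_eq] at hmem
      exact not_le.1 hmem
    have hsum1 : ∑ i, ψ (α * (|(ω i).2 - (inner ℝ (ω i).1 v : ℝ)| - ‖(ω i).1‖/n)) ≤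
        ∑ i, ψ (α * |(ω i).2 - (inner ℝ (ω i).1 (what ω) : ℝ)|) := by
      apply Finset.sum_le_sum
      intro i _
      apply hψmono
      apply mul_le_mul_of_nonneg_left _ hαpos.le
      have hinner : (inner ℝ (ω i).1 (what ω) : ℝ) - (inner ℝ (ω i).1 v : ℝ) =
          (inner ℝ (ω i).1 (what ω - v) : ℝ) := (inner_sub_right _ _ _).symm
      have habs : |(inner ℝ (ω i).1 (what ω - v) : ℝ)| ≤ ‖(ω i).1‖ * ‖what ω - v‖ :=
        abs_real_inner_le_norm _ _
      have hxn : ‖(ω i).1‖ * ‖what ω - v‖ ≤ ‖(ω i).1‖ * (1/n) :=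
        mul_le_mul_of_nonneg_left hvclose (norm_nonneg _)
      have htri : |(ω i).2 - (inner ℝ (ω i).1 v : ℝ)| ≤
          |(ω i).2 - (inner ℝ (ω i).1 (what ω) : ℝ)| +
            |(inner ℝ (ω i).1 (what ω) : ℝ) - (inner ℝ (ω i).1 v : ℝ)| := by
        have heq : (ω i).2 - (inner ℝ (ω i).1 v : ℝ) =
            ((ω i).2 - (inner ℝ (ω i).1 (what ω) : ℝ)) +
              ((inner ℝ (ω i).1 (what ω) : ℝ) - (inner ℝ (ω i).1 v : ℝ)) := by ring
        rw [heq]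
        exact abs_add_le _ _
      rw [hinner] at htri
      have hmo : ‖(ω i).1‖ * (1/n) = ‖(ω i).1‖/n := by ring
      linarith [le_trans habs (hmo ▸ hxn), htri]
    have hsum2 : ∑ i, ψ (α * |(ω i).2 - (inner ℝ (ω i).1 (what ω) : ℝ)|) ≤
        ∑ i, ψ (α * |(ω i).2 - (inner ℝ (ω i).1 wstar : ℝ)|) := by
      have h := hwhatMin ω wstar hwstarW
      rw [truncEmpRisk, truncEmpRisk] at h
      have hpos : (0:ℝ) < 1/((n:ℝ)*α) := by positivity
      exact le_of_mul_le_mul_left (by exact_mod_cast h) hpos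
    have hLlt' : -((n:ℝ) * (-(α * (l1Risk P v - (∫ z, ‖z.1‖ ∂P)/n)) +
        α^2 * (l2Risk P v + (∫ z, ‖z.1‖^2 ∂P)/(n:ℝ)^2)/2) +
        Real.log ((coveringNumber W (1/(n:ℝ)) : ℝ)/δ)) <
        ∑ i, ψ (α * (|(ω i).2 - (inner ℝ (ω i).1 v : ℝ)| - ‖(ω i).1‖/n)) := by
      have hs : ∑ i, -ψ (α * (|(ω i).2 - (inner ℝ (ω i).1 v : ℝ)| - ‖(ω i).1‖/n)) =
          -∑ i, ψ (α * (|(ω i).2 - (inner ℝ (ω i).1 v : ℝ)| - ‖(ω i).1‖/n)) :=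
        Finset.sum_neg_distrib _
      rw [hs] at hLlt
      linarith
    have hlogsum : Real.log ((coveringNumber W (1/(n:ℝ)) : ℝ)/δ) + Real.log (1/δ) =
        Real.log ((coveringNumber W (1/(n:ℝ)) : ℝ)/δ^2) := by
      rw [Real.log_div hNpos.ne' hδ.ne', Real.log_div one_ne_zero hδ.ne', Real.log_one,
        Real.log_div hNpos.ne' (ne_of_gt hδ2), Real.log_pow]
      push_cast
      ring
    have hcomb : -((n:ℝ) * (-(α * (l1Risk P v - (∫ z, ‖z.1‖ ∂P)/n)) +
        α^2 * (l2Risk P v + (∫ z, ‖z.1‖^2 ∂P)/(n:ℝ)^2)/2)) -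
        (n:ℝ) * (α * l1Risk P wstar + α^2 * l2Risk P wstar / 2) < (n:ℝ) * α^2 := by
      rw [hα2, ← hlogsum]
      linarith [lt_of_lt_of_le (lt_of_lt_of_le hLlt' hsum1) (le_of_lt (lt_of_le_of_lt hsum2 hUlt))]
    have hXneg : l1Risk P v - l1Risk P wstar - (∫ z, ‖z.1‖ ∂P)/n -
        α*((l2Risk P v + (∫ z, ‖z.1‖^2 ∂P)/(n:ℝ)^2) + l2Risk P wstar)/2 - α < 0 := by
      by_contra hcon
      push_neg at hcon
      nlinarith [mul_pos hn' hαpos, hcomb]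
    have hlip2 : l1Risk P (what ω) ≤ l1Risk P v + (1/n) * (∫ z, ‖z.1‖ ∂P) := by
      have hl := my_l1_lip P (what ω) v (hInt1 _ (hwhatW ω)) (hInt1 v hvW) hxInt
      have h2 : ‖what ω - v‖ * (∫ z, ‖z.1‖ ∂P) ≤ (1/n) * (∫ z, ‖z.1‖ ∂P) :=
        mul_le_mul_of_nonneg_right hvclose hI1
      linarith
    have hend : α*((l2Risk P v + (∫ z, ‖z.1‖^2 ∂P)/(n:ℝ)^2) + l2Risk P wstar)/2 + α ≤
        Real.sqrt ((1/(n:ℝ)) * (d * Real.log (6*n*B) + Real.log (1/δ^2))) *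
          (1/(n:ℝ)^2 * (∫ z, ‖z.1‖^2 ∂P) + 3/2 * sSup (l2Risk P '' W) + 1) := by
      have hAC : ((l2Risk P v + (∫ z, ‖z.1‖^2 ∂P)/(n:ℝ)^2) + l2Risk P wstar)/2 + 1 ≤
          1/(n:ℝ)^2 * (∫ z, ‖z.1‖^2 ∂P) + 3/2 * sSup (l2Risk P '' W) + 1 := by
        have ht2 : 0 ≤ (∫ z, ‖z.1‖^2 ∂P)/(n:ℝ)^2 := by positivity
        have h1 := hSle v hvW
        have h2 := hSle wstar hwstarW
        have heqd : (∫ z, ‖z.1‖^2 ∂P)/(n:ℝ)^2 = 1/(n:ℝ)^2 * (∫ z, ‖z.1‖^2 ∂P) := by ring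
        rw [heqd] at ht2 ⊢
        linarith
      calc α*((l2Risk P v + (∫ z, ‖z.1‖^2 ∂P)/(n:ℝ)^2) + l2Risk P wstar)/2 + α =
            α * (((l2Risk P v + (∫ z, ‖z.1‖^2 ∂P)/(n:ℝ)^2) + l2Risk P wstar)/2 + 1) := by ring
        _ ≤ α * (1/(n:ℝ)^2 * (∫ z, ‖z.1‖^2 ∂P) + 3/2 * sSup (l2Risk P '' W) + 1) :=
            mul_le_mul_of_nonneg_left hAC hαpos.le
        _ ≤ _ := mul_le_mul_of_nonneg_right hααh hMul0
    show l1Risk P (what ω) - l1Risk P wstar ≤ _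
    have hfin : (2:ℝ)/n * (∫ z, ‖z.1‖ ∂P) = (1/n) * (∫ z, ‖z.1‖ ∂P) + (∫ z, ‖z.1‖ ∂P)/n := by
      ring
    linarith [hXneg, hlip2, hend]
  -- conclusion
  have h2 : (1:ℝ≥0∞) ≤ Measure.pi (fun _ : Fin n => P)
      {ω | l1Risk P (what ω) - l1Risk P wstar ≤
        2 / n * (∫ z, ‖z.1‖ ∂P)
        + Real.sqrt ((1 / n) * (d * Real.log (6 * n * B) + Real.log (1 / δ ^ 2))) *
          (1 / n ^ 2 * (∫ z, ‖z.1‖ ^ 2 ∂P) + 3 / 2 * sSup (l2Risk P '' W) + 1)} +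
        ENNReal.ofReal (2*δ) := by
    have hsplit : (Set.univ : Set (Fin n → EuclideanSpace ℝ (Fin d) × ℝ)) ⊆
        {ω | l1Risk P (what ω) - l1Risk P wstar ≤
          2 / n * (∫ z, ‖z.1‖ ∂P)
          + Real.sqrt ((1 / n) * (d * Real.log (6 * n * B) + Real.log (1 / δ ^ 2))) *
            (1 / n ^ 2 * (∫ z, ‖z.1‖ ^ 2 ∂P) + 3 / 2 * sSup (l2Risk P '' W) + 1)} ∪
          (BadU ∪ ⋃ v ∈ Net, BadL v) := by
      intro ω _
      by_cases hb : ω ∈ BadU ∪ ⋃ v ∈ Net, BadL v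
      · exact Or.inr hb
      · exact Or.inl (hinc hb)
    calc (1:ℝ≥0∞) = Measure.pi (fun _ : Fin n => P) Set.univ := measure_univ.symm
      _ ≤ Measure.pi (fun _ : Fin n => P) ({ω | l1Risk P (what ω) - l1Risk P wstar ≤
            2 / n * (∫ z, ‖z.1‖ ∂P)
            + Real.sqrt ((1 / n) * (d * Real.log (6 * n * B) + Real.log (1 / δ ^ 2))) *
              (1 / n ^ 2 * (∫ z, ‖z.1‖ ^ 2 ∂P) + 3 / 2 * sSup (l2Risk P '' W) + 1)} ∪
            (BadU ∪ ⋃ v ∈ Net, BadL v)) := measure_mono hsplit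
      _ ≤ _ := le_trans (measure_union_le _ _) (add_le_add le_rfl hBadAll)
  have hofr : ENNReal.ofReal (1 - 2*δ) = 1 - ENNReal.ofReal (2*δ) := by
    rw [ENNReal.ofReal_sub _ (by positivity), ENNReal.ofReal_one]
  rw [hofr]
  exact tsub_le_iff_right.2 h2
end

section
/- Let w* ∈ W be a fixed vector (independent of the sample) with R_{ℓ2}(w*) < ∞. Then for every 0 < δ < 1, with probability at least 1 − δ over the i.i.d. sample, R̂_{ψ∘ℓ1}(w*) ≤ R_{ℓ1}(w*) + (α/2)·R_{ℓ2}(w*) + (1/(nα))·log(1/δ). -/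
open MeasureTheory Real

set_option maxHeartbeats 1000000 in
set_option synthInstance.maxHeartbeats 200000 in
/-- Lemma 1 of the paper: for a fixed `w* ∈ W` with `R_{ℓ2}(w*) < ∞`, with probability
at least `1 − δ`, `R̂_{ψ∘ℓ1}(w*) ≤ R_{ℓ1}(w*) + (α/2) R_{ℓ2}(w*) + (1/(nα)) log(1/δ)`. -/
theorem trunc_emp_risk_upper_bound_fixed
    {H : Type*} [NormedAddCommGroup H] [InnerProductSpace ℝ H] [CompleteSpace H]
    [MeasurableSpace H] [BorelSpace H]
    (P : Measure (H × ℝ)) [IsProbabilityMeasure P]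
    (W : Set H) (ψ : ℝ → ℝ)
    (hψmono : Monotone ψ)
    (hψlb : ∀ x : ℝ, -Real.log (1 - x + x ^ 2 / 2) ≤ ψ x)
    (hψub : ∀ x : ℝ, ψ x ≤ Real.log (1 + x + x ^ 2 / 2))
    (n : ℕ) (hn : 0 < n) (α : ℝ) (hα : 0 < α)
    -- w* : a fixed vector of W, independent of the sample
    (wstar : H) (hwstarW : wstar ∈ W)
    -- R_{ℓ2}(w*) < ∞ (so in particular R_{ℓ1}(w*) is well defined as well)
    (hInt2 : Integrable (fun z : H × ℝ => (z.2 - (inner ℝ z.1 wstar : ℝ)) ^ 2) P)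
    (hInt1 : Integrable (fun z : H × ℝ => |z.2 - (inner ℝ z.1 wstar : ℝ)|) P)
    (δ : ℝ) (hδ : 0 < δ) (hδ' : δ < 1) :
    ENNReal.ofReal (1 - δ) ≤
      Measure.pi (fun _ : Fin n => P)
        {ω | truncEmpRisk ψ α n ω wstar ≤
          l1Risk P wstar + α / 2 * l2Risk P wstar + 1 / (n * α) * Real.log (1 / δ)} := by
  classical
  letI : MeasureSpace (H × ℝ) := ⟨P⟩
  haveI hPvol : IsProbabilityMeasure (volume : Measure (H × ℝ)) :=
    (inferInstance : IsProbabilityMeasure P)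
  haveI : SigmaFinite (volume : Measure (H × ℝ)) := inferInstance
  set e : H × ℝ → ℝ := fun z => z.2 - (inner ℝ z.1 wstar : ℝ) with he
  have hemeas : Measurable e :=
    measurable_snd.sub (continuous_fst.inner continuous_const).measurable
  set f : H × ℝ → ℝ := fun z => 1 + (α * |e z| + α ^ 2 / 2 * e z ^ 2) with hf
  have hInt1' : Integrable (fun z => α * |e z|) P := hInt1.const_mul α
  have hInt2' : Integrable (fun z => α ^ 2 / 2 * e z ^ 2) P := hInt2.const_mul _
  have hf_int : Integrable f P := (integrable_const 1).add (hInt1'.add hInt2')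
  set R1 := l1Risk P wstar with hR1
  set R2 := l2Risk P wstar with hR2
  have hR1nn : 0 ≤ R1 := integral_nonneg fun z => abs_nonneg _
  have hR2nn : 0 ≤ R2 := integral_nonneg fun z => sq_nonneg _
  set E := ∫ z, f z ∂P with hE
  have hE_eq : E = 1 + (α * R1 + α ^ 2 / 2 * R2) := by
    have h1 : ∫ z, (α * |e z| + α ^ 2 / 2 * e z ^ 2) ∂P
        = ∫ z, α * |e z| ∂P + ∫ z, α ^ 2 / 2 * e z ^ 2 ∂P := integral_add hInt1' hInt2'
    have h2 : ∫ z, (1 + (α * |e z| + α ^ 2 / 2 * e z ^ 2)) ∂P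
        = ∫ (_ : H × ℝ), (1:ℝ) ∂P + ∫ z, (α * |e z| + α ^ 2 / 2 * e z ^ 2) ∂P :=
      integral_add (integrable_const 1) (hInt1'.add hInt2')
    rw [hE]
    show ∫ z, (1 + (α * |e z| + α ^ 2 / 2 * e z ^ 2)) ∂P = _
    rw [h2, h1, integral_const_mul, integral_const_mul, integral_const]
    simp [hR1, hR2, l1Risk, l2Risk, he]
  have hEpos : (0:ℝ) < E := by
    have t1 : 0 ≤ α * R1 := mul_nonneg hα.le hR1nn
    have t2 : 0 ≤ α ^ 2 / 2 * R2 := mul_nonneg (by positivity) hR2nn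
    rw [hE_eq]
    linarith
  have hlogE : Real.log E ≤ α * R1 + α ^ 2 / 2 * R2 := by
    have := Real.log_le_sub_one_of_pos hEpos
    linarith
  -- the sum and its exponential
  set μ := (volume : Measure (Fin n → H × ℝ)) with hμ
  haveI : IsProbabilityMeasure μ := by
    rw [hμ, volume_pi]
    exact MeasureTheory.Measure.pi.instIsProbabilityMeasure _
  set S : (Fin n → H × ℝ) → ℝ := fun ω => ∑ i, ψ (α * |e (ω i)|) with hS
  have hSmeas : Measurable S := by
    apply Finset.measurable_sum
    intro i _
    exact hψmono.measurable.comp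
      ((measurable_const.mul (hemeas.comp (measurable_pi_apply i)).abs))
  set g : (Fin n → H × ℝ) → ℝ := fun ω => Real.exp (S ω) with hg
  have hgmeas : Measurable g := Real.measurable_exp.comp hSmeas
  -- pointwise bound exp(ψ(αx)) ≤ f
  have hptwise : ∀ z : H × ℝ, Real.exp (ψ (α * |e z|)) ≤ f z := by
    intro z
    have hxnn : 0 ≤ α * |e z| := mul_nonneg hα.le (abs_nonneg _)
    have hpos : (0:ℝ) < 1 + α * |e z| + (α * |e z|) ^ 2 / 2 := by nlinarith
    have h1 : Real.exp (ψ (α * |e z|)) ≤ 1 + α * |e z| + (α * |e z|) ^ 2 / 2 :=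
      (Real.exp_le_exp.2 (hψub _)).trans_eq (Real.exp_log hpos)
    have hx2 : (α * |e z|) ^ 2 = α ^ 2 * e z ^ 2 := by rw [mul_pow, sq_abs]
    have h3 : α ^ 2 / 2 * e z ^ 2 = (α * |e z|) ^ 2 / 2 := by rw [hx2]; ring
    show Real.exp (ψ (α * |e z|)) ≤ 1 + (α * |e z| + α ^ 2 / 2 * e z ^ 2)
    linarith [h1, h3]
  have hprod_int : Integrable (fun ω : Fin n → H × ℝ => ∏ i, f (ω i)) μ :=
    Integrable.fintype_prod (ι := Fin n) (f := fun _ : Fin n => f) (fun _ => hf_int)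
  have hg_le : ∀ ω, g ω ≤ ∏ i, f (ω i) := by
    intro ω
    show Real.exp (∑ i, ψ (α * |e (ω i)|)) ≤ _
    rw [Real.exp_sum]
    exact Finset.prod_le_prod (fun i _ => (Real.exp_pos _).le) fun i _ => hptwise (ω i)
  have hg_nonneg : ∀ ω, 0 ≤ g ω := fun ω => (Real.exp_pos _).le
  have hg_int : Integrable g μ := by
    apply hprod_int.mono' hgmeas.aestronglyMeasurable
    filter_upwards with ω
    rw [Real.norm_eq_abs, abs_of_nonneg (hg_nonneg ω)]
    exact hg_le ω
  have hint_g : ∫ ω, g ω ∂μ ≤ E ^ n := by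
    calc ∫ ω, g ω ∂μ ≤ ∫ ω, ∏ i, f (ω i) ∂μ := integral_mono hg_int hprod_int hg_le
      _ = E ^ n := by
          have h := integral_fintype_prod_eq_pow (ι := Fin n) f (μ := (volume : Measure (H × ℝ)))
          rw [hμ, volume_pi, h, Fintype.card_fin]
          rfl
  have hEn_pos : (0:ℝ) < E ^ n := pow_pos hEpos n
  set A := E ^ n / δ with hA
  have hApos : 0 < A := div_pos hEn_pos hδ
  -- Markov
  have hmarkov : (μ {ω | A ≤ g ω}).toReal ≤ δ := by
    have h := mul_meas_ge_le_integral_of_nonneg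
      (Filter.Eventually.of_forall hg_nonneg) hg_int A
    have h2 : A * (μ {ω | A ≤ g ω}).toReal ≤ E ^ n := le_trans h hint_g
    have h3 : (μ {ω | A ≤ g ω}).toReal ≤ E ^ n / A := by
      rw [le_div_iff₀ hApos]
      linarith [h2, mul_comm A (μ {ω | A ≤ g ω}).toReal]
    calc (μ {ω | A ≤ g ω}).toReal ≤ E ^ n / A := h3
      _ = δ := by rw [hA]; field_simp
  have hmeas_bad : MeasurableSet {ω | A ≤ g ω} := measurableSet_le measurable_const hgmeas
  have hbad : μ {ω | A ≤ g ω} ≤ ENNReal.ofReal δ :=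
    (ENNReal.le_ofReal_iff_toReal_le (measure_ne_top μ _) hδ.le).2 hmarkov
  -- inclusion: g < A implies the desired bound
  have hincl : {ω | g ω < A} ⊆
      {ω | truncEmpRisk ψ α n ω wstar ≤ R1 + α / 2 * R2 + 1 / (n * α) * Real.log (1 / δ)} := by
    intro ω hω
    simp only [Set.mem_setOf_eq] at hω ⊢
    have hSω : S ω < Real.log A := (Real.lt_log_iff_exp_lt hApos).2 hω
    have hlogA : Real.log A = n * Real.log E + Real.log (1 / δ) := by
      rw [hA, Real.log_div (ne_of_gt hEn_pos) (ne_of_gt hδ), Real.log_pow,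
        Real.log_div one_ne_zero (ne_of_gt hδ), Real.log_one]
      ring
    have hbound : S ω ≤ n * (α * R1 + α ^ 2 / 2 * R2) + Real.log (1 / δ) := by
      have hc : (n:ℝ) * Real.log E ≤ n * (α * R1 + α ^ 2 / 2 * R2) :=
        mul_le_mul_of_nonneg_left hlogE (Nat.cast_nonneg n)
      have hSω' : S ω < (n:ℝ) * Real.log E + Real.log (1 / δ) := hlogA ▸ hSω
      linarith
    have hnα : (0:ℝ) < (n:ℝ) * α := mul_pos (Nat.cast_pos.2 hn) hα
    have htrunc : truncEmpRisk ψ α n ω wstar = (1 / ((n:ℝ) * α)) * S ω := rfl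
    rw [htrunc]
    have h1 : (1 / ((n:ℝ) * α)) * S ω ≤
        (1 / ((n:ℝ) * α)) * ((n:ℝ) * (α * R1 + α ^ 2 / 2 * R2) + Real.log (1 / δ)) :=
      mul_le_mul_of_nonneg_left hbound (by positivity)
    have h2 : (1 / ((n:ℝ) * α)) * ((n:ℝ) * (α * R1 + α ^ 2 / 2 * R2) + Real.log (1 / δ))
        = R1 + α / 2 * R2 + 1 / ((n:ℝ) * α) * Real.log (1 / δ) := by
      field_simp
    calc (1 / ((n:ℝ) * α)) * S ω
        ≤ (1 / ((n:ℝ) * α)) * ((n:ℝ) * (α * R1 + α ^ 2 / 2 * R2) + Real.log (1 / δ)) := h1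
      _ = R1 + α / 2 * R2 + 1 / ((n:ℝ) * α) * Real.log (1 / δ) := h2
  -- conclude
  have hcompl : μ {ω | g ω < A} = 1 - μ {ω | A ≤ g ω} := by
    have hs : {ω | g ω < A} = {ω | A ≤ g ω}ᶜ := by
      ext ω; simp [not_le]
    rw [hs, measure_compl hmeas_bad (measure_ne_top μ _), measure_univ]
  have hlow : ENNReal.ofReal (1 - δ) ≤ μ {ω | g ω < A} := by
    rw [hcompl]
    have h4 : ENNReal.ofReal (1 - δ) = 1 - ENNReal.ofReal δ := by
      rw [ENNReal.ofReal_sub _ hδ.le, ENNReal.ofReal_one]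
    rw [h4]
    exact tsub_le_tsub le_rfl hbad
  have hfin : Measure.pi (fun _ : Fin n => P) = μ := rfl
  rw [hfin]
  exact le_trans hlow (measure_mono hincl)
end

section
/- Let ŵ be any minimizer over W of the truncated empirical risk R̂_{ψ∘ℓ1}. Then for every ε > 0 and every 0 < δ < 1, with probability at least 1 − δ over the i.i.d. sample, R_{ℓ1}(ŵ) ≤ R̂_{ψ∘ℓ1}(ŵ) + 2ε·E[‖x‖] + α·sup_{w∈W} R_{ℓ2}(w) + α·ε²·E[‖x‖²] + (1/(nα))·log(N(W,ε)/δ). -/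
open MeasureTheory Real

open scoped ENNReal
set_option synthInstance.maxHeartbeats 1000000
set_option maxHeartbeats 1000000

lemma lintegral_pi_prod_const {Z : Type*} [MeasurableSpace Z] (P : Measure Z) [SigmaFinite P]
    {f : Z → ℝ≥0∞} (hf : Measurable f) (n : ℕ) :
    ∫⁻ ω : Fin n → Z, ∏ i, f (ω i) ∂Measure.pi (fun _ : Fin n => P)
      = (∫⁻ z, f z ∂P) ^ n := by
  induction n with
  | zero => simp [lintegral_one, Measure.pi_univ]
  | succ n ih =>
    have hmp := measurePreserving_piFinSuccAbove (fun _ : Fin (n+1) => P) 0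
    have hg : Measurable (fun p : Z × (Fin n → Z) => f p.1 * ∏ i, f (p.2 i)) :=
      (hf.comp measurable_fst).mul
        (Finset.measurable_prod _ fun i _ => hf.comp ((measurable_pi_apply i).comp measurable_snd))
    calc ∫⁻ ω : Fin (n+1) → Z, ∏ i, f (ω i) ∂Measure.pi (fun _ => P)
        = ∫⁻ p : Z × (Fin n → Z), f p.1 * ∏ i, f (p.2 i)
            ∂(P.prod (Measure.pi fun _ : Fin n => P)) := by
          rw [← hmp.lintegral_comp hg]
          congr 1
          funext ω
          simp [MeasurableEquiv.piFinSuccAbove, Fin.prod_univ_succ, Fin.zero_succAbove, Fin.tail]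
      _ = (∫⁻ z, f z ∂P) * (∫⁻ z, f z ∂P) ^ n := by
          rw [lintegral_prod_mul (f := f) (g := fun y : Fin n → Z => ∏ i, f (y i)) hf.aemeasurable
            (Finset.measurable_prod _ fun i _ => hf.comp (measurable_pi_apply i)).aemeasurable, ih]
      _ = (∫⁻ z, f z ∂P) ^ (n + 1) := (pow_succ' _ _).symm

lemma net_point_bound {H : Type*} [NormedAddCommGroup H] [InnerProductSpace ℝ H]
    [MeasurableSpace H] [BorelSpace H]
    (P : Measure (H × ℝ)) [IsProbabilityMeasure P]
    (ψ : ℝ → ℝ) (hψmono : Monotone ψ)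
    (hψlb : ∀ x : ℝ, -Real.log (1 - x + x ^ 2 / 2) ≤ ψ x)
    (n : ℕ) (α ε : ℝ) (hα : 0 < α) (hε : 0 < ε) (v : H)
    (hxInt : Integrable (fun z : H × ℝ => ‖z.1‖) P)
    (hA2 : Integrable (fun z : H × ℝ => ‖z.1‖ ^ 2) P)
    (hI1 : Integrable (fun z : H × ℝ => |z.2 - (inner ℝ z.1 v : ℝ)|) P)
    (hI2 : Integrable (fun z : H × ℝ => (z.2 - (inner ℝ z.1 v : ℝ)) ^ 2) P)
    (c : ℝ) :
    Measure.pi (fun _ : Fin n => P)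
      {ω | ∑ i, ψ (α * (|(ω i).2 - (inner ℝ (ω i).1 v : ℝ)| - ε * ‖(ω i).1‖))
          < (n : ℝ) * (α * l1Risk P v - α * ε * (∫ z, ‖z.1‖ ∂P)
              - α ^ 2 * l2Risk P v / 2 - α ^ 2 * ε ^ 2 * (∫ z, ‖z.1‖ ^ 2 ∂P) / 2) - c }
      ≤ ENNReal.ofReal (Real.exp (-c)) := by
  set θ : ℝ := α * l1Risk P v - α * ε * (∫ z, ‖z.1‖ ∂P)
      - α ^ 2 * l2Risk P v / 2 - α ^ 2 * ε ^ 2 * (∫ z, ‖z.1‖ ^ 2 ∂P) / 2 with hθdef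
  -- measurability
  have hlmeas : Measurable (fun z : H × ℝ => |z.2 - (inner ℝ z.1 v : ℝ)|) :=
    (measurable_snd.sub (Continuous.measurable (continuous_fst.inner continuous_const))).abs
  have humeas : Measurable (fun z : H × ℝ => α * (|z.2 - (inner ℝ z.1 v : ℝ)| - ε * ‖z.1‖)) :=
    ((hlmeas.sub (measurable_fst.norm.const_mul ε)).const_mul α)
  have hhmeas : Measurable (fun z : H × ℝ =>
      ψ (α * (|z.2 - (inner ℝ z.1 v : ℝ)| - ε * ‖z.1‖))) := hψmono.measurable.comp humeas
  have hfmeas : Measurable (fun z : H × ℝ =>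
      ENNReal.ofReal (Real.exp (-(ψ (α * (|z.2 - (inner ℝ z.1 v : ℝ)| - ε * ‖z.1‖)))))) :=
    ENNReal.measurable_ofReal.comp (Real.measurable_exp.comp hhmeas.neg)
  -- pointwise bound exp(-ψ x) ≤ 1 - x + x²/2
  have hq_pos : ∀ x : ℝ, 0 < 1 - x + x ^ 2 / 2 := fun x => by nlinarith [sq_nonneg (x - 1)]
  have hexp_le : ∀ x : ℝ, Real.exp (-(ψ x)) ≤ 1 - x + x ^ 2 / 2 := by
    intro x
    have h := hψlb x
    calc Real.exp (-(ψ x)) ≤ Real.exp (Real.log (1 - x + x ^ 2 / 2)) :=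
          Real.exp_le_exp.mpr (by linarith)
      _ = 1 - x + x ^ 2 / 2 := Real.exp_log (hq_pos x)
  -- the integrable dominating function
  set b : H × ℝ → ℝ := fun z =>
    ((1 - α * |z.2 - (inner ℝ z.1 v : ℝ)|) + (α * ε) * ‖z.1‖)
      + ((α ^ 2 / 2) * (z.2 - (inner ℝ z.1 v : ℝ)) ^ 2 + (α ^ 2 * ε ^ 2 / 2) * ‖z.1‖ ^ 2)
    with hbdef
  have i1a : Integrable (fun z : H × ℝ => 1 - α * |z.2 - (inner ℝ z.1 v : ℝ)|) P := by
    exact (integrable_const (1 : ℝ)).sub (hI1.const_mul α)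
  have i1 : Integrable (fun z : H × ℝ =>
      1 - α * |z.2 - (inner ℝ z.1 v : ℝ)| + α * ε * ‖z.1‖) P := by
    exact i1a.add (hxInt.const_mul (α * ε))
  have i2 : Integrable (fun z : H × ℝ =>
      α ^ 2 / 2 * (z.2 - (inner ℝ z.1 v : ℝ)) ^ 2 + α ^ 2 * ε ^ 2 / 2 * ‖z.1‖ ^ 2) P := by
    exact (hI2.const_mul _).add (hA2.const_mul _)
  have hbInt : Integrable b P := by
    rw [hbdef]; exact i1.add i2
  have hqb : ∀ z : H × ℝ,
      Real.exp (-(ψ (α * (|z.2 - (inner ℝ z.1 v : ℝ)| - ε * ‖z.1‖)))) ≤ b z := by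
    intro z
    refine (hexp_le _).trans ?_
    have ha : (0:ℝ) ≤ |z.2 - (inner ℝ z.1 v : ℝ)| := abs_nonneg _
    have hm : (0:ℝ) ≤ ‖z.1‖ := norm_nonneg _
    have hsq : (z.2 - (inner ℝ z.1 v : ℝ)) ^ 2 = |z.2 - (inner ℝ z.1 v : ℝ)| ^ 2 := (sq_abs _).symm
    simp only [hbdef]
    rw [hsq]
    nlinarith [mul_nonneg (mul_nonneg (mul_nonneg (sq_nonneg α) hε.le) ha) hm]
  have hb_nonneg : ∀ z, 0 ≤ b z := fun z => le_trans (Real.exp_pos _).le (hqb z)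
  have hbint_val : ∫ z, b z ∂P = 1 - θ := by
    simp only [hbdef]
    rw [integral_add i1 i2, integral_add i1a (hxInt.const_mul (α * ε)),
      integral_sub (integrable_const _) (hI1.const_mul α),
      integral_add (hI2.const_mul _) (hA2.const_mul _),
      integral_const, integral_const_mul, integral_const_mul, integral_const_mul,
      integral_const_mul]
    simp only [measure_univ, probReal_univ, ENNReal.toReal_one, smul_eq_mul, one_mul, hθdef, l1Risk, l2Risk]
    ring
  -- one-sample mgf bound
  have hone : ∫⁻ z, ENNReal.ofReal
        (Real.exp (-(ψ (α * (|z.2 - (inner ℝ z.1 v : ℝ)| - ε * ‖z.1‖))))) ∂P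
      ≤ ENNReal.ofReal (Real.exp (-θ)) := by
    calc ∫⁻ z, ENNReal.ofReal
          (Real.exp (-(ψ (α * (|z.2 - (inner ℝ z.1 v : ℝ)| - ε * ‖z.1‖))))) ∂P
        ≤ ∫⁻ z, ENNReal.ofReal (b z) ∂P :=
          lintegral_mono fun z => ENNReal.ofReal_le_ofReal (hqb z)
      _ = ENNReal.ofReal (∫ z, b z ∂P) :=
          (ofReal_integral_eq_lintegral_ofReal hbInt (Filter.Eventually.of_forall hb_nonneg)).symm
      _ ≤ ENNReal.ofReal (Real.exp (-θ)) := by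
          apply ENNReal.ofReal_le_ofReal
          rw [hbint_val]
          have := Real.add_one_le_exp (-θ)
          linarith
  -- product bound
  have hΩmeas : Measurable (fun ω : Fin n → H × ℝ => ENNReal.ofReal (Real.exp
      (-(∑ i, ψ (α * (|(ω i).2 - (inner ℝ (ω i).1 v : ℝ)| - ε * ‖(ω i).1‖)))))) :=
    ENNReal.measurable_ofReal.comp (Real.measurable_exp.comp
      (Finset.measurable_sum _ fun i _ => hhmeas.comp (measurable_pi_apply i)).neg)
  have hprod : ∫⁻ ω : Fin n → H × ℝ, ENNReal.ofReal (Real.exp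
        (-(∑ i, ψ (α * (|(ω i).2 - (inner ℝ (ω i).1 v : ℝ)| - ε * ‖(ω i).1‖)))))
        ∂Measure.pi (fun _ : Fin n => P)
      ≤ ENNReal.ofReal (Real.exp (-((n : ℝ) * θ))) := by
    have heq : ∀ ω : Fin n → H × ℝ, ENNReal.ofReal (Real.exp
          (-(∑ i, ψ (α * (|(ω i).2 - (inner ℝ (ω i).1 v : ℝ)| - ε * ‖(ω i).1‖)))))
        = ∏ i, ENNReal.ofReal (Real.exp
          (-(ψ (α * (|(ω i).2 - (inner ℝ (ω i).1 v : ℝ)| - ε * ‖(ω i).1‖))))) := by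
      intro ω
      rw [← ENNReal.ofReal_prod_of_nonneg (fun i _ => (Real.exp_pos _).le), ← Real.exp_sum]
      congr 2
      rw [← Finset.sum_neg_distrib]
    calc ∫⁻ ω : Fin n → H × ℝ, ENNReal.ofReal (Real.exp
          (-(∑ i, ψ (α * (|(ω i).2 - (inner ℝ (ω i).1 v : ℝ)| - ε * ‖(ω i).1‖)))))
          ∂Measure.pi (fun _ : Fin n => P)
        = (∫⁻ z, ENNReal.ofReal
            (Real.exp (-(ψ (α * (|z.2 - (inner ℝ z.1 v : ℝ)| - ε * ‖z.1‖))))) ∂P) ^ n := by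
          simp_rw [heq]
          exact lintegral_pi_prod_const P hfmeas n
      _ ≤ (ENNReal.ofReal (Real.exp (-θ))) ^ n := pow_le_pow_left₀ zero_le hone n
      _ = ENNReal.ofReal (Real.exp (-((n : ℝ) * θ))) := by
          rw [← ENNReal.ofReal_pow (Real.exp_pos _).le, ← Real.exp_nat_mul]
          ring_nf
  -- Markov
  have hmarkov := mul_meas_ge_le_lintegral₀ (μ := Measure.pi (fun _ : Fin n => P))
    hΩmeas.aemeasurable (ENNReal.ofReal (Real.exp (c - (n : ℝ) * θ)))
  have hsub : {ω : Fin n → H × ℝ | ∑ i, ψ (α * (|(ω i).2 - (inner ℝ (ω i).1 v : ℝ)|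
        - ε * ‖(ω i).1‖)) < (n : ℝ) * θ - c}
      ⊆ {ω : Fin n → H × ℝ | ENNReal.ofReal (Real.exp (c - (n : ℝ) * θ))
        ≤ ENNReal.ofReal (Real.exp
          (-(∑ i, ψ (α * (|(ω i).2 - (inner ℝ (ω i).1 v : ℝ)| - ε * ‖(ω i).1‖)))))} := by
    intro ω hω
    simp only [Set.mem_setOf_eq] at hω ⊢
    exact ENNReal.ofReal_le_ofReal (Real.exp_le_exp.mpr (by linarith))
  have hc0 : ENNReal.ofReal (Real.exp (c - (n : ℝ) * θ)) ≠ 0 := by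
    simp [ENNReal.ofReal_eq_zero, not_le, Real.exp_pos]
  calc Measure.pi (fun _ : Fin n => P)
        {ω | ∑ i, ψ (α * (|(ω i).2 - (inner ℝ (ω i).1 v : ℝ)| - ε * ‖(ω i).1‖))
          < (n : ℝ) * θ - c}
      ≤ Measure.pi (fun _ : Fin n => P)
        {ω | ENNReal.ofReal (Real.exp (c - (n : ℝ) * θ))
          ≤ ENNReal.ofReal (Real.exp
            (-(∑ i, ψ (α * (|(ω i).2 - (inner ℝ (ω i).1 v : ℝ)| - ε * ‖(ω i).1‖)))))} :=
        measure_mono hsub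
    _ ≤ ENNReal.ofReal (Real.exp (-((n : ℝ) * θ))) / ENNReal.ofReal (Real.exp (c - (n : ℝ) * θ)) := by
        rw [ENNReal.le_div_iff_mul_le (Or.inl hc0) (Or.inl ENNReal.ofReal_ne_top)]
        rw [mul_comm]
        exact hmarkov.trans hprod
    _ = ENNReal.ofReal (Real.exp (-c)) := by
        rw [← ENNReal.ofReal_div_of_pos (Real.exp_pos _), ← Real.exp_sub]
        ring_nf

/-- Lemma 2 of the paper: with probability at least `1 − δ`,
`R_{ℓ1}(ŵ) ≤ R̂_{ψ∘ℓ1}(ŵ) + 2ε E‖x‖ + α sup_{w∈W} R_{ℓ2}(w) + αε² E‖x‖²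
  + (1/(nα)) log(N(W,ε)/δ)`. -/
theorem l1_risk_lower_bound_minimizer
    {H : Type*} [NormedAddCommGroup H] [InnerProductSpace ℝ H] [CompleteSpace H]
    [MeasurableSpace H] [BorelSpace H]
    (P : Measure (H × ℝ)) [IsProbabilityMeasure P]
    (W : Set H) (ψ : ℝ → ℝ)
    (hψmono : Monotone ψ)
    (hψlb : ∀ x : ℝ, -Real.log (1 - x + x ^ 2 / 2) ≤ ψ x)
    (hψub : ∀ x : ℝ, ψ x ≤ Real.log (1 + x + x ^ 2 / 2))
    (n : ℕ) (hn : 0 < n) (α : ℝ) (hα : 0 < α)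
    -- (A1): W is totally bounded: for every ε > 0 there is a finite ε-net of W
    (hA1 : ∀ ε' > (0 : ℝ), ∃ N : Finset H, ↑N ⊆ W ∧ ∀ w ∈ W, ∃ v ∈ N, ‖w - v‖ ≤ ε')
    -- (A2): E‖x‖² < ∞ (and hence E‖x‖ < ∞)
    (hxInt : Integrable (fun z : H × ℝ => ‖z.1‖) P)
    (hA2 : Integrable (fun z : H × ℝ => ‖z.1‖ ^ 2) P)
    -- risks are well defined on W
    (hInt1 : ∀ w ∈ W, Integrable (fun z : H × ℝ => |z.2 - (inner ℝ z.1 w : ℝ)|) P)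
    (hInt2 : ∀ w ∈ W, Integrable (fun z : H × ℝ => (z.2 - (inner ℝ z.1 w : ℝ)) ^ 2) P)
    -- (A3): sup_{w ∈ W} R_{ℓ2}(w) < ∞
    (hA3 : BddAbove (l2Risk P '' W))
    -- ŵ : any minimizer of the truncated empirical risk over W
    (what : (Fin n → H × ℝ) → H)
    (hwhatW : ∀ ω, what ω ∈ W)
    (hwhatMin : ∀ ω, ∀ w ∈ W, truncEmpRisk ψ α n ω (what ω) ≤ truncEmpRisk ψ α n ω w)
    (ε δ : ℝ) (hε : 0 < ε) (hδ : 0 < δ) (hδ' : δ < 1) :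
    ENNReal.ofReal (1 - δ) ≤
      Measure.pi (fun _ : Fin n => P)
        {ω | l1Risk P (what ω) ≤ truncEmpRisk ψ α n ω (what ω)
          + 2 * ε * (∫ z, ‖z.1‖ ∂P) + α * sSup (l2Risk P '' W)
          + α * ε ^ 2 * (∫ z, ‖z.1‖ ^ 2 ∂P)
          + 1 / (n * α) * Real.log ((coveringNumber W ε : ℝ) / δ)} := by
  classical
  have hn' : (0 : ℝ) < n := by exact_mod_cast hn
  have hnα : (0 : ℝ) < (n : ℝ) * α := mul_pos hn' hα
  -- a minimal ε-net
  obtain ⟨Net, hNetW, hNetcard, hNetnet⟩ :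
      ∃ N : Finset H, ↑N ⊆ W ∧ N.card = coveringNumber W ε ∧
        ∀ w ∈ W, ∃ v ∈ N, ‖w - v‖ ≤ ε := by
    have hne : {k | ∃ N : Finset H, ↑N ⊆ W ∧ N.card = k ∧
        ∀ w ∈ W, ∃ v ∈ N, ‖w - v‖ ≤ ε}.Nonempty := by
      obtain ⟨N, h1, h2⟩ := hA1 ε hε
      exact ⟨N.card, N, h1, rfl, h2⟩
    obtain ⟨N, h1, h2, h3⟩ := Nat.sInf_mem hne
    exact ⟨N, h1, h2, h3⟩
  have hK1 : 1 ≤ coveringNumber W ε := by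
    rw [← hNetcard]
    obtain ⟨v, hv, -⟩ := hNetnet _ (hwhatW (fun _ => (0, 0)))
    exact Finset.card_pos.mpr ⟨v, hv⟩
  have hKpos : (0 : ℝ) < (coveringNumber W ε : ℝ) := by exact_mod_cast hK1
  have hKδ : (0 : ℝ) < (coveringNumber W ε : ℝ) / δ := div_pos hKpos hδ
  set μ := Measure.pi (fun _ : Fin n => P) with hμdef
  set L : ℝ := Real.log ((coveringNumber W ε : ℝ) / δ) with hLdef
  set Ex1 : ℝ := ∫ z, ‖z.1‖ ∂P with hEx1def
  set Ex2 : ℝ := ∫ z, ‖z.1‖ ^ 2 ∂P with hEx2def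
  set S : ℝ := sSup (l2Risk P '' W) with hSdef
  -- measurability of the one-sample functions
  have hlmeas : ∀ v : H, Measurable (fun z : H × ℝ => |z.2 - (inner ℝ z.1 v : ℝ)|) := fun v =>
    (measurable_snd.sub (Continuous.measurable (continuous_fst.inner continuous_const))).abs
  have hhmeas : ∀ v : H, Measurable (fun z : H × ℝ =>
      ψ (α * (|z.2 - (inner ℝ z.1 v : ℝ)| - ε * ‖z.1‖))) := fun v =>
    hψmono.measurable.comp (((hlmeas v).sub (measurable_fst.norm.const_mul ε)).const_mul α)
  -- the good events
  set A : H → Set (Fin n → H × ℝ) := fun v =>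
    {ω | (n : ℝ) * (α * l1Risk P v - α * ε * Ex1
        - α ^ 2 * l2Risk P v / 2 - α ^ 2 * ε ^ 2 * Ex2 / 2) - L
      ≤ ∑ i, ψ (α * (|(ω i).2 - (inner ℝ (ω i).1 v : ℝ)| - ε * ‖(ω i).1‖))} with hAdef
  have hAmeas : ∀ v : H, MeasurableSet (A v) := fun v =>
    measurableSet_le measurable_const
      (Finset.measurable_sum _ fun i _ => (hhmeas v).comp (measurable_pi_apply i))
  -- per-point bad-event bound
  have hbad : ∀ v ∈ Net, μ (A v)ᶜ ≤ ENNReal.ofReal (δ / (coveringNumber W ε : ℝ)) := by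
    intro v hv
    have hvW : v ∈ W := hNetW hv
    have hle := net_point_bound P ψ hψmono hψlb n α ε hα hε v hxInt hA2
      (hInt1 v hvW) (hInt2 v hvW) L
    have hceq : (A v)ᶜ = {ω : Fin n → H × ℝ |
        ∑ i, ψ (α * (|(ω i).2 - (inner ℝ (ω i).1 v : ℝ)| - ε * ‖(ω i).1‖))
          < (n : ℝ) * (α * l1Risk P v - α * ε * Ex1
            - α ^ 2 * l2Risk P v / 2 - α ^ 2 * ε ^ 2 * Ex2 / 2) - L} := by
      ext ω
      simp only [hAdef, Set.mem_compl_iff, Set.mem_setOf_eq, not_le]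
    rw [hceq]
    refine hle.trans (le_of_eq ?_)
    rw [hLdef, Real.exp_neg, Real.exp_log hKδ, inv_div]
  -- the good event
  set G : Set (Fin n → H × ℝ) := ⋂ v ∈ Net, A v with hGdef
  have hGmeas : MeasurableSet G :=
    MeasurableSet.biInter Net.countable_toSet (fun v _ => hAmeas v)
  have hGc : μ Gᶜ ≤ ENNReal.ofReal δ := by
    have hceq : Gᶜ = ⋃ v ∈ Net, (A v)ᶜ := by
      rw [hGdef, Set.compl_iInter]
      simp [Set.compl_iInter]
    rw [hceq]
    calc μ (⋃ v ∈ Net, (A v)ᶜ) ≤ ∑ v ∈ Net, μ (A v)ᶜ := measure_biUnion_finset_le Net _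
      _ ≤ ∑ _v ∈ Net, ENNReal.ofReal (δ / (coveringNumber W ε : ℝ)) :=
          Finset.sum_le_sum fun v hv => hbad v hv
      _ = Net.card • ENNReal.ofReal (δ / (coveringNumber W ε : ℝ)) := Finset.sum_const _
      _ = ENNReal.ofReal δ := by
          rw [hNetcard, nsmul_eq_mul, ← ENNReal.ofReal_natCast (coveringNumber W ε),
            ← ENNReal.ofReal_mul hKpos.le]
          congr 1
          field_simp
  have hG : ENNReal.ofReal (1 - δ) ≤ μ G := by
    have hGeq : μ G = 1 - μ Gᶜ := by
      rw [prob_compl_eq_one_sub hGmeas, ENNReal.sub_sub_cancel ENNReal.one_ne_top prob_le_one]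
    rw [hGeq]
    calc ENNReal.ofReal (1 - δ) = 1 - ENNReal.ofReal δ := by
          rw [ENNReal.ofReal_sub _ hδ.le, ENNReal.ofReal_one]
      _ ≤ 1 - μ Gᶜ := tsub_le_tsub_left hGc 1
  -- the good event is contained in the target event
  refine le_trans hG (measure_mono ?_)
  intro ω hω
  simp only [hGdef, Set.mem_iInter] at hω
  obtain ⟨v, hvN, hvdist⟩ := hNetnet (what ω) (hwhatW ω)
  have hωv := hω v hvN
  simp only [hAdef, Set.mem_setOf_eq] at hωv
  have hvW : v ∈ W := hNetW hvN
  -- pointwise comparisons between the losses at `what ω` and at `v`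
  have hptw : ∀ z : H × ℝ,
      |z.2 - (inner ℝ z.1 v : ℝ)| - ε * ‖z.1‖ ≤ |z.2 - (inner ℝ z.1 (what ω) : ℝ)| ∧
      |z.2 - (inner ℝ z.1 (what ω) : ℝ)| ≤ |z.2 - (inner ℝ z.1 v : ℝ)| + ε * ‖z.1‖ := by
    intro z
    have hinner : |(inner ℝ z.1 (what ω) : ℝ) - (inner ℝ z.1 v : ℝ)| ≤ ε * ‖z.1‖ := by
      rw [← inner_sub_right]
      calc |(inner ℝ z.1 (what ω - v) : ℝ)| ≤ ‖z.1‖ * ‖what ω - v‖ := abs_real_inner_le_norm _ _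
        _ ≤ ‖z.1‖ * ε := mul_le_mul_of_nonneg_left hvdist (norm_nonneg _)
        _ = ε * ‖z.1‖ := mul_comm _ _
    constructor
    · have h1 : |z.2 - (inner ℝ z.1 v : ℝ)| ≤ |z.2 - (inner ℝ z.1 (what ω) : ℝ)|
          + |(inner ℝ z.1 (what ω) : ℝ) - (inner ℝ z.1 v : ℝ)| := abs_sub_le _ _ _
      linarith
    · have h1 : |z.2 - (inner ℝ z.1 (what ω) : ℝ)| ≤ |z.2 - (inner ℝ z.1 v : ℝ)|
          + |(inner ℝ z.1 v : ℝ) - (inner ℝ z.1 (what ω) : ℝ)| := abs_sub_le _ _ _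
      have hinner' : |(inner ℝ z.1 v : ℝ) - (inner ℝ z.1 (what ω) : ℝ)| ≤ ε * ‖z.1‖ := by
        rw [abs_sub_comm]; exact hinner
      linarith
  -- the empirical sums compare
  have hsum : ∑ i, ψ (α * (|(ω i).2 - (inner ℝ (ω i).1 v : ℝ)| - ε * ‖(ω i).1‖))
      ≤ ∑ i, ψ (α * |(ω i).2 - (inner ℝ (ω i).1 (what ω) : ℝ)|) :=
    Finset.sum_le_sum fun i _ =>
      hψmono (mul_le_mul_of_nonneg_left (hptw (ω i)).1 hα.le)
  have htrunc : ∑ i, ψ (α * |(ω i).2 - (inner ℝ (ω i).1 (what ω) : ℝ)|)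
      = ((n : ℝ) * α) * truncEmpRisk ψ α n ω (what ω) := by
    rw [truncEmpRisk]
    field_simp
  -- the true risks compare
  have hR1 : l1Risk P (what ω) ≤ l1Risk P v + ε * Ex1 := by
    have heq : l1Risk P v + ε * Ex1
        = ∫ z, (|z.2 - (inner ℝ z.1 v : ℝ)| + ε * ‖z.1‖) ∂P := by
      rw [hEx1def, l1Risk, ← integral_const_mul,
        ← integral_add (hInt1 v hvW) (hxInt.const_mul ε)]
    rw [heq, l1Risk]
    exact integral_mono (hInt1 _ (hwhatW ω))
      ((hInt1 v hvW).add (hxInt.const_mul ε)) fun z => (hptw z).2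
  have hR2S : l2Risk P v ≤ S := le_csSup hA3 ⟨v, hvW, rfl⟩
  have hR2nn : 0 ≤ l2Risk P v := integral_nonneg fun z => sq_nonneg _
  have hSnn : 0 ≤ S := hR2nn.trans hR2S
  have hEx1nn : 0 ≤ Ex1 := integral_nonneg fun z => norm_nonneg _
  have hEx2nn : 0 ≤ Ex2 := integral_nonneg fun z => sq_nonneg _
  -- put everything together
  have key : (n : ℝ) * (α * l1Risk P v - α * ε * Ex1
      - α ^ 2 * l2Risk P v / 2 - α ^ 2 * ε ^ 2 * Ex2 / 2) - L
      ≤ ((n : ℝ) * α) * truncEmpRisk ψ α n ω (what ω) :=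
    hωv.trans (hsum.trans_eq htrunc)
  have goal' : (n : ℝ) * α * l1Risk P (what ω)
      ≤ (n : ℝ) * α * (truncEmpRisk ψ α n ω (what ω)
          + 2 * ε * Ex1 + α * S + α * ε ^ 2 * Ex2) + L := by
    nlinarith [key, mul_le_mul_of_nonneg_left hR1 hnα.le,
      mul_le_mul_of_nonneg_left hR2S (by positivity : (0:ℝ) ≤ (n : ℝ) * α ^ 2 / 2),
      mul_nonneg (mul_nonneg (mul_nonneg hn'.le (sq_nonneg α)) (sq_nonneg ε)) hEx2nn,
      mul_nonneg (mul_nonneg hn'.le (sq_nonneg α)) hSnn]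
  show l1Risk P (what ω) ≤ truncEmpRisk ψ α n ω (what ω)
      + 2 * ε * Ex1 + α * S + α * ε ^ 2 * Ex2 + 1 / ((n : ℝ) * α) * L
  have h3 : (n : ℝ) * α * l1Risk P (what ω)
      ≤ (n : ℝ) * α * (truncEmpRisk ψ α n ω (what ω)
          + 2 * ε * Ex1 + α * S + α * ε ^ 2 * Ex2 + 1 / ((n : ℝ) * α) * L) := by
    have hLcancel : (n : ℝ) * α * (1 / ((n : ℝ) * α) * L) = L := by
      field_simp
    calc (n : ℝ) * α * l1Risk P (what ω)
        ≤ (n : ℝ) * α * (truncEmpRisk ψ α n ω (what ω)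
            + 2 * ε * Ex1 + α * S + α * ε ^ 2 * Ex2) + L := goal'
      _ = _ := by
          rw [mul_add ((n : ℝ) * α) (truncEmpRisk ψ α n ω (what ω)
            + 2 * ε * Ex1 + α * S + α * ε ^ 2 * Ex2) (1 / ((n : ℝ) * α) * L), hLcancel]
  exact le_of_mul_le_mul_left h3 hnα
end

section
/- Fix ε > 0 and let N(W,ε) be an ε-net of W with minimal cardinality N(W,ε). Then for every 0 < δ < 1, with probability at least 1 − δ over the i.i.d. sample, simultaneously for all w̃ ∈ N(W,ε): (1/(nα)) Σ_{i=1}^n ψ( α|y_i − ⟨x_i,w̃⟩| − α·ε·‖x_i‖ ) ≥ R_{ℓ1}(w̃) − [ ε·E[‖x‖] + α·sup_{w∈W} R_{ℓ2}(w) + α·ε²·E[‖x‖²] + (1/(nα))·log(N(W,ε)/δ) ]. -/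
open MeasureTheory Real

set_option maxHeartbeats 1000000 in
set_option synthInstance.maxHeartbeats 400000 in
lemma aux_markov {H : Type*} [NormedAddCommGroup H] [InnerProductSpace ℝ H]
    [MeasurableSpace H] [BorelSpace H]
    (P : Measure (H × ℝ)) [IsProbabilityMeasure P] (ψ : ℝ → ℝ)
    (hψmono : Monotone ψ)
    (hψlb : ∀ x : ℝ, -Real.log (1 - x + x ^ 2 / 2) ≤ ψ x)
    (n : ℕ) (α ε : ℝ) (hα : 0 < α) (hε : 0 < ε) (wt : H)
    (h1 : Integrable (fun z : H × ℝ => |z.2 - (inner ℝ z.1 wt : ℝ)|) P)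
    (h2 : Integrable (fun z : H × ℝ => (z.2 - (inner ℝ z.1 wt : ℝ)) ^ 2) P)
    (hxInt : Integrable (fun z : H × ℝ => ‖z.1‖) P)
    (hA2 : Integrable (fun z : H × ℝ => ‖z.1‖ ^ 2) P)
    (t : ℝ) :
    Measure.pi (fun _ : Fin n => P)
      {ω | ∑ i, ψ (α * (|(ω i).2 - (inner ℝ (ω i).1 wt : ℝ)| - ε * ‖(ω i).1‖)) < t} ≤
    ENNReal.ofReal (Real.exp (n * (-α * (l1Risk P wt - ε * ∫ z, ‖z.1‖ ∂P)
      + α ^ 2 * (l2Risk P wt + ε ^ 2 * ∫ z, ‖z.1‖ ^ 2 ∂P)) + t)) := by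
  set u : H × ℝ → ℝ := fun z => |z.2 - (inner ℝ z.1 wt : ℝ)| - ε * ‖z.1‖ with hu_def
  set g : H × ℝ → ℝ := fun z => Real.exp (-(ψ (α * u z))) with hg_def
  set c₀ : ℝ := -α * (l1Risk P wt - ε * ∫ z, ‖z.1‖ ∂P)
      + α ^ 2 * (l2Risk P wt + ε ^ 2 * ∫ z, ‖z.1‖ ^ 2 ∂P) with hc0
  -- measurability
  have hcont : Continuous fun x : H => (inner ℝ x wt : ℝ) :=
    (innerSL ℝ).continuous₂.comp₂ continuous_id continuous_const
  have hmeas_u : Measurable u := by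
    apply Measurable.sub
    · exact (measurable_snd.sub ((hcont.measurable).comp measurable_fst)).abs
    · exact (measurable_fst.norm).const_mul ε
  have hmeas_g : Measurable g :=
    Real.continuous_exp.measurable.comp ((hψmono.measurable.comp (hmeas_u.const_mul α)).neg)
  -- pointwise bound
  have hpt : ∀ z, g z ≤ 1 - α * u z + (α * u z) ^ 2 / 2 := by
    intro z
    set X := α * u z
    have hp : 0 < 1 - X + X ^ 2 / 2 := by nlinarith [sq_nonneg (X - 1)]
    calc g z ≤ Real.exp (Real.log (1 - X + X ^ 2 / 2)) := by
          apply Real.exp_le_exp.2; have := hψlb X; linarith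
      _ = 1 - X + X ^ 2 / 2 := Real.exp_log hp
  have hg_pos : ∀ z, 0 < g z := fun z => Real.exp_pos _
  -- pointwise square bound
  have husq : ∀ z : H × ℝ, u z ^ 2 ≤ (z.2 - (inner ℝ z.1 wt : ℝ)) ^ 2 + ε ^ 2 * ‖z.1‖ ^ 2 := by
    intro z
    have ha : 0 ≤ |z.2 - (inner ℝ z.1 wt : ℝ)| := abs_nonneg _
    have hb : 0 ≤ ‖z.1‖ := norm_nonneg _
    have hsq : |z.2 - (inner ℝ z.1 wt : ℝ)| ^ 2 = (z.2 - (inner ℝ z.1 wt : ℝ)) ^ 2 := sq_abs _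
    simp only [u]
    nlinarith [mul_nonneg (mul_nonneg hε.le ha) hb]
  -- integrabilities
  have hu_int : Integrable u P := h1.sub (hxInt.const_mul ε)
  have hau_int : Integrable (fun z => α * u z) P := hu_int.const_mul α
  have hB_int : Integrable (fun z : H × ℝ =>
      (z.2 - (inner ℝ z.1 wt : ℝ)) ^ 2 + ε ^ 2 * ‖z.1‖ ^ 2) P := h2.add (hA2.const_mul (ε ^ 2))
  have hu2_int : Integrable (fun z => u z ^ 2) P := by
    refine Integrable.mono' hB_int (hmeas_u.pow_const 2).aestronglyMeasurable ?_
    filter_upwards with z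
    rw [Real.norm_eq_abs, abs_of_nonneg (sq_nonneg _)]
    exact husq z
  have hone_int : Integrable (fun _ : H × ℝ => (1 : ℝ)) P := integrable_const 1
  have he1 : Integrable (fun z => 1 - α * u z) P := hone_int.sub hau_int
  have he2 : Integrable (fun z => α ^ 2 / 2 * u z ^ 2) P := hu2_int.const_mul (α ^ 2 / 2)
  have hh_int : Integrable (fun z => 1 - α * u z + α ^ 2 / 2 * u z ^ 2) P := he1.add he2
  have hg_int : Integrable g P := by
    refine Integrable.mono' hh_int hmeas_g.aestronglyMeasurable ?_
    filter_upwards with z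
    rw [Real.norm_eq_abs, abs_of_nonneg (hg_pos z).le]
    have := hpt z; nlinarith
  -- bound on ∫ g
  have hIu : ∫ z, u z ∂P = l1Risk P wt - ε * ∫ z, ‖z.1‖ ∂P := by
    rw [hu_def]
    rw [integral_sub h1 (hxInt.const_mul ε), integral_const_mul]; rfl
  have hIu2_nonneg : 0 ≤ ∫ z, u z ^ 2 ∂P := integral_nonneg fun z => sq_nonneg _
  have hIu2 : ∫ z, u z ^ 2 ∂P ≤ l2Risk P wt + ε ^ 2 * ∫ z, ‖z.1‖ ^ 2 ∂P := by
    rw [show l2Risk P wt + ε ^ 2 * ∫ z, ‖z.1‖ ^ 2 ∂P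
        = ∫ z, ((z.2 - (inner ℝ z.1 wt : ℝ)) ^ 2 + ε ^ 2 * ‖z.1‖ ^ 2) ∂P by
      rw [integral_add h2 (hA2.const_mul (ε ^ 2)), integral_const_mul]; rfl]
    exact integral_mono hu2_int hB_int husq
  have hR2_nonneg : 0 ≤ l2Risk P wt := integral_nonneg fun z => sq_nonneg _
  have hE2_nonneg : 0 ≤ ∫ z, ‖z.1‖ ^ 2 ∂P := integral_nonneg fun z => sq_nonneg _
  have hIg : ∫ z, g z ∂P ≤ Real.exp c₀ := by
    have h1' : ∫ z, g z ∂P ≤ ∫ z, (1 - α * u z + α ^ 2 / 2 * u z ^ 2) ∂P := by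
      refine integral_mono hg_int hh_int fun z => ?_
      have := hpt z; nlinarith
    have h2' : ∫ z, (1 - α * u z + α ^ 2 / 2 * u z ^ 2) ∂P
        = 1 - α * ∫ z, u z ∂P + α ^ 2 / 2 * ∫ z, u z ^ 2 ∂P := by
      rw [integral_add he1 he2, integral_sub hone_int hau_int, integral_const,
        integral_const_mul, integral_const_mul]
      simp
    have h3' : 1 - α * ∫ z, u z ∂P + α ^ 2 / 2 * ∫ z, u z ^ 2 ∂P ≤ 1 + c₀ := by
      rw [hc0, hIu]
      nlinarith [hIu2, hIu2_nonneg, sq_nonneg α]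
    calc ∫ z, g z ∂P ≤ 1 + c₀ := by linarith [h1', h2', h3']
      _ ≤ Real.exp c₀ := by linarith [Real.add_one_le_exp c₀]
  have hIg_nonneg : 0 ≤ ∫ z, g z ∂P := integral_nonneg fun z => (hg_pos z).le
  -- product measure
  haveI hsfP : SigmaFinite P := inferInstance
  letI : MeasureSpace (H × ℝ) := ⟨P⟩
  haveI : IsProbabilityMeasure (volume : Measure (H × ℝ)) := ‹IsProbabilityMeasure P›
  haveI hsf : SigmaFinite (volume : Measure (H × ℝ)) := hsfP
  have hvol : Measure.pi (fun _ : Fin n => P) = (volume : Measure (Fin n → H × ℝ)) :=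
    (volume_pi).symm
  rw [hvol]
  have hF_int : Integrable (fun ω : Fin n → H × ℝ => ∏ i, g (ω i)) :=
    Integrable.fin_nat_prod (f := fun _ : Fin n => g) fun _ => hg_int
  have hF_nonneg : ∀ ω : Fin n → H × ℝ, (0:ℝ) ≤ ∏ i, g (ω i) :=
    fun ω => Finset.prod_nonneg fun i _ => (hg_pos _).le
  have hIF : ∫ ω : Fin n → H × ℝ, ∏ i, g (ω i) = (∫ z, g z ∂P) ^ n := by
    rw [← hvol, MeasureTheory.integral_fintype_prod_eq_pow (ι := Fin n) g, Fintype.card_fin]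
  have hIF_le : ∫ ω : Fin n → H × ℝ, ∏ i, g (ω i) ≤ Real.exp (n * c₀) := by
    rw [hIF, Real.exp_nat_mul]
    exact pow_le_pow_left₀ hIg_nonneg hIg n
  have hmarkov := mul_meas_ge_le_integral_of_nonneg (μ := volume)
    (Filter.Eventually.of_forall hF_nonneg) hF_int (Real.exp (-t))
  have hsub : {ω : Fin n → H × ℝ |
      ∑ i, ψ (α * (|(ω i).2 - (inner ℝ (ω i).1 wt : ℝ)| - ε * ‖(ω i).1‖)) < t}
      ⊆ {ω | Real.exp (-t) ≤ ∏ i, g (ω i)} := by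
    intro ω hω
    simp only [Set.mem_setOf_eq] at hω ⊢
    have hFω : ∏ i, g (ω i) = Real.exp (∑ i, -(ψ (α * u (ω i)))) := by
      rw [Real.exp_sum]
    rw [hFω]
    apply Real.exp_le_exp.2
    rw [Finset.sum_neg_distrib]
    exact neg_le_neg hω.le
  refine le_trans (measure_mono hsub) ?_
  have hfin : (volume : Measure (Fin n → H × ℝ)) {ω | Real.exp (-t) ≤ ∏ i, g (ω i)} ≠ ⊤ :=
    measure_ne_top _ _
  rw [ENNReal.le_ofReal_iff_toReal_le hfin (Real.exp_nonneg _)]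
  rw [show (n : ℝ) * c₀ + t = n * c₀ - (-t) by ring, Real.exp_sub,
    le_div_iff₀ (Real.exp_pos _)]
  calc ((volume : Measure (Fin n → H × ℝ)) {ω | Real.exp (-t) ≤ ∏ i, g (ω i)}).toReal * Real.exp (-t)
      = Real.exp (-t) * ((volume : Measure (Fin n → H × ℝ)) {ω | Real.exp (-t) ≤ ∏ i, g (ω i)}).toReal := by ring
    _ ≤ ∫ ω : Fin n → H × ℝ, ∏ i, g (ω i) := hmarkov
    _ ≤ Real.exp (n * c₀) := hIF_le

set_option maxHeartbeats 4000000 in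
set_option synthInstance.maxHeartbeats 1000000 in
/-- Lemma 3 of the paper: for a minimal ε-net `N` of `W`, with probability at least `1 − δ`,
simultaneously for all `w̃ ∈ N`:
`(1/(nα)) Σ_i ψ(α|y_i − ⟨x_i,w̃⟩| − αε‖x_i‖)
  ≥ R_{ℓ1}(w̃) − [ε E‖x‖ + α sup_{w∈W} R_{ℓ2}(w) + αε² E‖x‖² + (1/(nα)) log(N(W,ε)/δ)]`. -/
theorem truncated_sum_lower_bound_on_net
    {H : Type*} [NormedAddCommGroup H] [InnerProductSpace ℝ H] [CompleteSpace H]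
    [MeasurableSpace H] [BorelSpace H]
    (P : Measure (H × ℝ)) [IsProbabilityMeasure P]
    (W : Set H) (ψ : ℝ → ℝ)
    (hψmono : Monotone ψ)
    (hψlb : ∀ x : ℝ, -Real.log (1 - x + x ^ 2 / 2) ≤ ψ x)
    (hψub : ∀ x : ℝ, ψ x ≤ Real.log (1 + x + x ^ 2 / 2))
    (n : ℕ) (hn : 0 < n) (α : ℝ) (hα : 0 < α)
    -- (A1): W is totally bounded
    (hA1 : ∀ ε' > (0 : ℝ), ∃ N : Finset H, ↑N ⊆ W ∧ ∀ w ∈ W, ∃ v ∈ N, ‖w - v‖ ≤ ε')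
    -- (A2): E‖x‖² < ∞ (and hence E‖x‖ < ∞)
    (hxInt : Integrable (fun z : H × ℝ => ‖z.1‖) P)
    (hA2 : Integrable (fun z : H × ℝ => ‖z.1‖ ^ 2) P)
    -- risks are well defined on W
    (hInt1 : ∀ w ∈ W, Integrable (fun z : H × ℝ => |z.2 - (inner ℝ z.1 w : ℝ)|) P)
    (hInt2 : ∀ w ∈ W, Integrable (fun z : H × ℝ => (z.2 - (inner ℝ z.1 w : ℝ)) ^ 2) P)
    -- (A3): sup_{w ∈ W} R_{ℓ2}(w) < ∞
    (hA3 : BddAbove (l2Risk P '' W))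
    (ε : ℝ) (hε : 0 < ε)
    -- N : an ε-net of W of minimal cardinality N(W, ε)
    (N : Finset H) (hNsub : ↑N ⊆ W)
    (hNnet : ∀ w ∈ W, ∃ v ∈ N, ‖w - v‖ ≤ ε)
    (hNcard : N.card = coveringNumber W ε)
    (δ : ℝ) (hδ : 0 < δ) (hδ' : δ < 1) :
    ENNReal.ofReal (1 - δ) ≤
      Measure.pi (fun _ : Fin n => P)
        {ω | ∀ wt ∈ N,
          1 / (n * α) * ∑ i, ψ (α * |(ω i).2 - (inner ℝ (ω i).1 wt : ℝ)| - α * ε * ‖(ω i).1‖) ≥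
            l1Risk P wt -
              (ε * (∫ z, ‖z.1‖ ∂P) + α * sSup (l2Risk P '' W)
                + α * ε ^ 2 * (∫ z, ‖z.1‖ ^ 2 ∂P)
                + 1 / (n * α) * Real.log ((coveringNumber W ε : ℝ) / δ))} := by
  classical
  rcases N.eq_empty_or_nonempty with hNe | hNe
  · have : ∀ ω : Fin n → H × ℝ, ω ∈ {ω : Fin n → H × ℝ | ∀ wt ∈ N,
        1 / (n * α) * ∑ i, ψ (α * |(ω i).2 - (inner ℝ (ω i).1 wt : ℝ)| - α * ε * ‖(ω i).1‖) ≥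
          l1Risk P wt -
            (ε * (∫ z, ‖z.1‖ ∂P) + α * sSup (l2Risk P '' W)
              + α * ε ^ 2 * (∫ z, ‖z.1‖ ^ 2 ∂P)
              + 1 / (n * α) * Real.log ((coveringNumber W ε : ℝ) / δ))} := by
      intro ω wt hwt
      rw [hNe] at hwt
      exact absurd hwt (Finset.notMem_empty wt)
    rw [Set.eq_univ_of_forall this, measure_univ]
    exact ENNReal.ofReal_le_one.2 (by linarith)
  · set E1 := ∫ z : H × ℝ, ‖z.1‖ ∂P with hE1
    set E2 := ∫ z : H × ℝ, ‖z.1‖ ^ 2 ∂P with hE2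
    set S := sSup (l2Risk P '' W) with hS
    set K := ε * E1 + α * S + α * ε ^ 2 * E2
        + 1 / (n * α) * Real.log ((coveringNumber W ε : ℝ) / δ) with hK
    set μ := Measure.pi (fun _ : Fin n => P) with hμ
    set G := {ω : Fin n → H × ℝ | ∀ wt ∈ N,
        1 / (n * α) * ∑ i, ψ (α * |(ω i).2 - (inner ℝ (ω i).1 wt : ℝ)| - α * ε * ‖(ω i).1‖) ≥
          l1Risk P wt - K} with hG
    have hcard : 0 < N.card := Finset.card_pos.2 hNe
    have hcardR : (0:ℝ) < N.card := by exact_mod_cast hcard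
    have hnR : (0:ℝ) < n := by exact_mod_cast hn
    have hnα : 0 < (n:ℝ) * α := mul_pos hnR hα
    set Bad : H → Set (Fin n → H × ℝ) := fun wt =>
      {ω | ∑ i, ψ (α * (|(ω i).2 - (inner ℝ (ω i).1 wt : ℝ)| - ε * ‖(ω i).1‖))
        < n * α * (l1Risk P wt - K)} with hBad
    have hGc : Gᶜ ⊆ ⋃ wt ∈ N, Bad wt := by
      intro ω hω
      simp only [hG, Set.mem_compl_iff, Set.mem_setOf_eq] at hω
      push_neg at hω
      obtain ⟨wt, hwt, hlt⟩ := hω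
      refine Set.mem_biUnion hwt ?_
      simp only [hBad, Set.mem_setOf_eq]
      have hsum_eq : ∑ i, ψ (α * (|(ω i).2 - (inner ℝ (ω i).1 wt : ℝ)| - ε * ‖(ω i).1‖))
          = ∑ i, ψ (α * |(ω i).2 - (inner ℝ (ω i).1 wt : ℝ)| - α * ε * ‖(ω i).1‖) :=
        Finset.sum_congr rfl fun i _ => by rw [mul_sub, ← mul_assoc]
      rw [hsum_eq]
      rw [one_div_mul_eq_div] at hlt
      have := (div_lt_iff₀ hnα).1 hlt
      linarith
    have hbound : ∀ wt ∈ N, μ (Bad wt) ≤ ENNReal.ofReal (δ / N.card) := by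
      intro wt hwt
      have hw : wt ∈ W := hNsub hwt
      refine le_trans (aux_markov P ψ hψmono hψlb n α ε hα hε wt (hInt1 wt hw)
        (hInt2 wt hw) hxInt hA2 (n * α * (l1Risk P wt - K))) ?_
      apply ENNReal.ofReal_le_ofReal
      have hδc : (0:ℝ) < δ / N.card := div_pos hδ hcardR
      rw [← Real.exp_log hδc]
      apply Real.exp_le_exp.2
      have hR2le : l2Risk P wt ≤ S := le_csSup hA3 ⟨wt, hw, rfl⟩
      have hlog : Real.log (δ / N.card) = Real.log δ - Real.log N.card :=
        Real.log_div hδ.ne' hcardR.ne'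
      have hlog2 : Real.log ((coveringNumber W ε : ℝ) / δ) = Real.log N.card - Real.log δ := by
        rw [← hNcard]; exact Real.log_div hcardR.ne' hδ.ne'
      have key : (n:ℝ) * (-α * (l1Risk P wt - ε * E1) + α ^ 2 * (l2Risk P wt + ε ^ 2 * E2))
          + n * α * (l1Risk P wt - K)
          = n * α ^ 2 * (l2Risk P wt - S) + (Real.log δ - Real.log N.card) := by
        rw [hK, hlog2]
        field_simp
        ring
      have hterm : (n:ℝ) * α ^ 2 * (l2Risk P wt - S) ≤ 0 :=
        mul_nonpos_of_nonneg_of_nonpos (mul_nonneg hnR.le (sq_nonneg α)) (by linarith)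
      rw [key, hlog]
      linarith
    have hunion : μ Gᶜ ≤ ENNReal.ofReal δ := by
      calc μ Gᶜ ≤ μ (⋃ wt ∈ N, Bad wt) := measure_mono hGc
        _ ≤ ∑ wt ∈ N, μ (Bad wt) := measure_biUnion_finset_le N Bad
        _ ≤ ∑ wt ∈ N, ENNReal.ofReal (δ / N.card) := Finset.sum_le_sum hbound
        _ = ENNReal.ofReal δ := by
            rw [Finset.sum_const, nsmul_eq_mul, ← ENNReal.ofReal_natCast,
              ← ENNReal.ofReal_mul (Nat.cast_nonneg _), mul_div_cancel₀ _ hcardR.ne']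
    have hone : (1:ENNReal) ≤ μ G + μ Gᶜ := by
      rw [show (1:ENNReal) = μ Set.univ from (measure_univ).symm,
        ← Set.union_compl_self G]
      exact measure_union_le G Gᶜ
    have : ENNReal.ofReal (1 - δ) = 1 - ENNReal.ofReal δ := by
      rw [← ENNReal.ofReal_one, ← ENNReal.ofReal_sub _ hδ.le]
    rw [this]
    refine tsub_le_iff_right.2 ?_
    calc (1:ENNReal) ≤ μ G + μ Gᶜ := hone
      _ ≤ μ G + ENNReal.ofReal δ := add_le_add_right hunion _
end

section
/- Let w̃ ∈ W be a fixed vector (independent of the sample) and fix ε > 0. Then for every 0 < δ < 1, with probability at least 1 − δ over the i.i.d. sample, (1/(nα)) Σ_{i=1}^n ψ( α|y_i − ⟨x_i,w̃⟩| − α·ε·‖x_i‖ ) ≥ R_{ℓ1}(w̃) − [ ε·E[‖x‖] + α·R_{ℓ2}(w̃) + α·ε²·E[‖x‖²] + (1/(nα))·log(1/δ) ]. -/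
open MeasureTheory Real

/-- helper: from a bound on the complement's probability get a lower bound. -/
lemma aux_prob_lower {Ω : Type*} [MeasurableSpace Ω] (μ : Measure Ω) [IsProbabilityMeasure μ]
    (S : Set Ω) (hS : MeasurableSet S) (δ : ℝ) (hδ : 0 ≤ δ)
    (h : (μ Sᶜ).toReal ≤ δ) : ENNReal.ofReal (1 - δ) ≤ μ S := by
  have h1 : μ Sᶜ ≤ ENNReal.ofReal δ :=
    (ENNReal.le_ofReal_iff_toReal_le (measure_ne_top _ _) hδ).2 h
  have h2 : μ S = 1 - μ Sᶜ := by
    have := measure_compl (μ := μ) hS.compl (measure_ne_top _ _)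
    rw [compl_compl, measure_univ] at this
    exact this
  calc ENNReal.ofReal (1 - δ) = 1 - ENNReal.ofReal δ := by
        rw [ENNReal.ofReal_sub _ hδ, ENNReal.ofReal_one]
    _ ≤ 1 - μ Sᶜ := tsub_le_tsub_left h1 1
    _ = μ S := h2.symm

set_option maxHeartbeats 1000000 in
set_option synthInstance.maxHeartbeats 400000 in
/-- The fixed-vector version of Lemma 3 of the paper: for a fixed `w̃ ∈ W`, with probability
at least `1 − δ`,
`(1/(nα)) Σ_i ψ(α|y_i − ⟨x_i,w̃⟩| − αε‖x_i‖)
  ≥ R_{ℓ1}(w̃) − [ε E‖x‖ + α R_{ℓ2}(w̃) + αε² E‖x‖² + (1/(nα)) log(1/δ)]`. -/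
theorem truncated_sum_lower_bound_fixed
    {H : Type*} [NormedAddCommGroup H] [InnerProductSpace ℝ H] [CompleteSpace H]
    [MeasurableSpace H] [BorelSpace H]
    (P : Measure (H × ℝ)) [IsProbabilityMeasure P]
    (W : Set H) (ψ : ℝ → ℝ)
    (hψmono : Monotone ψ)
    (hψlb : ∀ x : ℝ, -Real.log (1 - x + x ^ 2 / 2) ≤ ψ x)
    (hψub : ∀ x : ℝ, ψ x ≤ Real.log (1 + x + x ^ 2 / 2))
    (n : ℕ) (hn : 0 < n) (α : ℝ) (hα : 0 < α)
    -- (A2): E‖x‖² < ∞ (and hence E‖x‖ < ∞)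
    (hxInt : Integrable (fun z : H × ℝ => ‖z.1‖) P)
    (hA2 : Integrable (fun z : H × ℝ => ‖z.1‖ ^ 2) P)
    -- w̃ : a fixed vector of W, independent of the sample, with R_{ℓ2}(w̃) < ∞
    (wt : H) (hwtW : wt ∈ W)
    (hInt1 : Integrable (fun z : H × ℝ => |z.2 - (inner ℝ z.1 wt : ℝ)|) P)
    (hInt2 : Integrable (fun z : H × ℝ => (z.2 - (inner ℝ z.1 wt : ℝ)) ^ 2) P)
    (ε : ℝ) (hε : 0 < ε)
    (δ : ℝ) (hδ : 0 < δ) (hδ' : δ < 1) :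
    ENNReal.ofReal (1 - δ) ≤
      Measure.pi (fun _ : Fin n => P)
        {ω | 1 / (n * α) *
              ∑ i, ψ (α * |(ω i).2 - (inner ℝ (ω i).1 wt : ℝ)| - α * ε * ‖(ω i).1‖) ≥
            l1Risk P wt -
              (ε * (∫ z, ‖z.1‖ ∂P) + α * l2Risk P wt
                + α * ε ^ 2 * (∫ z, ‖z.1‖ ^ 2 ∂P)
                + 1 / (n * α) * Real.log (1 / δ))} := by
  classical
  letI : MeasureSpace (H × ℝ) := { volume := P }
  have hPvol : (volume : Measure (H × ℝ)) = P := rfl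
  haveI : SigmaFinite (volume : Measure (H × ℝ)) := by
    rw [hPvol]; infer_instance
  have hnα : (0:ℝ) < (n:ℝ) * α := by positivity
  -- scalars
  set R1 : ℝ := l1Risk P wt with hR1
  set R2 : ℝ := l2Risk P wt with hR2
  set Ex : ℝ := ∫ z : H × ℝ, ‖z.1‖ ∂P with hEx
  set Ex2 : ℝ := ∫ z : H × ℝ, ‖z.1‖ ^ 2 ∂P with hEx2
  set B : ℝ := ε * Ex + α * R2 + α * ε ^ 2 * Ex2 + 1 / (n * α) * Real.log (1 / δ) with hB
  -- functions
  have hcont : Continuous fun z : H × ℝ => z.2 - (inner ℝ z.1 wt : ℝ) :=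
    continuous_snd.sub (continuous_fst.inner continuous_const)
  have hfm : Measurable fun z : H × ℝ =>
      α * |z.2 - (inner ℝ z.1 wt : ℝ)| - α * ε * ‖z.1‖ :=
    (measurable_const.mul hcont.measurable.abs).sub
      (measurable_const.mul continuous_fst.norm.measurable)
  have hgm : Measurable fun z : H × ℝ =>
      ψ (α * |z.2 - (inner ℝ z.1 wt : ℝ)| - α * ε * ‖z.1‖) :=
    hψmono.measurable.comp hfm
  have hEm : Measurable fun z : H × ℝ =>
      Real.exp (-(ψ (α * |z.2 - (inner ℝ z.1 wt : ℝ)| - α * ε * ‖z.1‖))) :=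
    Real.measurable_exp.comp hgm.neg
  have hpos : ∀ x : ℝ, 0 < 1 - x + x ^ 2 / 2 := fun x => by nlinarith [sq_nonneg (x - 1)]
  have hEle : ∀ z : H × ℝ,
      Real.exp (-(ψ (α * |z.2 - (inner ℝ z.1 wt : ℝ)| - α * ε * ‖z.1‖))) ≤
        1 - (α * |z.2 - (inner ℝ z.1 wt : ℝ)| - α * ε * ‖z.1‖)
          + (α * |z.2 - (inner ℝ z.1 wt : ℝ)| - α * ε * ‖z.1‖) ^ 2 / 2 := by
    intro z
    set x := α * |z.2 - (inner ℝ z.1 wt : ℝ)| - α * ε * ‖z.1‖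
    have h1 : -(ψ x) ≤ Real.log (1 - x + x ^ 2 / 2) := by have := hψlb x; linarith
    calc Real.exp (-(ψ x)) ≤ Real.exp (Real.log (1 - x + x ^ 2 / 2)) := Real.exp_le_exp.2 h1
      _ = 1 - x + x ^ 2 / 2 := Real.exp_log (hpos _)
  -- integrabilities
  have hIa : Integrable (fun z : H × ℝ => α * |z.2 - (inner ℝ z.1 wt : ℝ)|) P := hInt1.const_mul α
  have hIb : Integrable (fun z : H × ℝ => α * ε * ‖z.1‖) P := hxInt.const_mul (α * ε)
  have hIf : Integrable (fun z : H × ℝ =>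
      α * |z.2 - (inner ℝ z.1 wt : ℝ)| - α * ε * ‖z.1‖) P := hIa.sub hIb
  have hIsqmaj : Integrable (fun z : H × ℝ =>
      2 * α ^ 2 * (z.2 - (inner ℝ z.1 wt : ℝ)) ^ 2 + 2 * (α * ε) ^ 2 * ‖z.1‖ ^ 2) P :=
    (hInt2.const_mul _).add (hA2.const_mul _)
  have hptw : ∀ z : H × ℝ,
      (α * |z.2 - (inner ℝ z.1 wt : ℝ)| - α * ε * ‖z.1‖) ^ 2 ≤
        2 * α ^ 2 * (z.2 - (inner ℝ z.1 wt : ℝ)) ^ 2 + 2 * (α * ε) ^ 2 * ‖z.1‖ ^ 2 := by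
    intro z
    have h1 : |z.2 - (inner ℝ z.1 wt : ℝ)| ^ 2 = (z.2 - (inner ℝ z.1 wt : ℝ)) ^ 2 := sq_abs _
    nlinarith [sq_nonneg (α * |z.2 - (inner ℝ z.1 wt : ℝ)| + α * ε * ‖z.1‖)]
  have hIf2 : Integrable (fun z : H × ℝ =>
      (α * |z.2 - (inner ℝ z.1 wt : ℝ)| - α * ε * ‖z.1‖) ^ 2) P := by
    refine hIsqmaj.mono' (hfm.pow_const 2).aestronglyMeasurable (ae_of_all _ fun z => ?_)
    rw [Real.norm_eq_abs, abs_of_nonneg (sq_nonneg _)]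
    exact hptw z
  have hIh : Integrable (fun z : H × ℝ =>
      1 - (α * |z.2 - (inner ℝ z.1 wt : ℝ)| - α * ε * ‖z.1‖)
        + (α * |z.2 - (inner ℝ z.1 wt : ℝ)| - α * ε * ‖z.1‖) ^ 2 / 2) P :=
    ((integrable_const 1).sub hIf).add (hIf2.div_const 2)
  have hIE : Integrable (fun z : H × ℝ =>
      Real.exp (-(ψ (α * |z.2 - (inner ℝ z.1 wt : ℝ)| - α * ε * ‖z.1‖)))) P := by
    refine hIh.mono' hEm.aestronglyMeasurable (ae_of_all _ fun z => ?_)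
    rw [Real.norm_eq_abs, abs_of_nonneg (Real.exp_pos _).le]
    exact hEle z
  -- integral identities
  have hIntf : ∫ z : H × ℝ, (α * |z.2 - (inner ℝ z.1 wt : ℝ)| - α * ε * ‖z.1‖) ∂P
      = α * R1 - α * ε * Ex := by
    rw [integral_sub hIa hIb, integral_const_mul, integral_const_mul, hR1, hEx, l1Risk]
  have hIntf2 : ∫ z : H × ℝ, (α * |z.2 - (inner ℝ z.1 wt : ℝ)| - α * ε * ‖z.1‖) ^ 2 ∂P
      ≤ 2 * α ^ 2 * R2 + 2 * (α * ε) ^ 2 * Ex2 := by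
    have hR2' : (∫ z : H × ℝ, (z.2 - (inner ℝ z.1 wt : ℝ)) ^ 2 ∂P) = R2 := by
      rw [hR2, l2Risk]
    have hEx2' : (∫ z : H × ℝ, ‖z.1‖ ^ 2 ∂P) = Ex2 := hEx2.symm
    have h1 := integral_mono hIf2 hIsqmaj hptw
    rwa [integral_add (hInt2.const_mul _) (hA2.const_mul _), integral_const_mul,
      integral_const_mul, hR2', hEx2'] at h1
  set s : ℝ := -(α * R1 - α * ε * Ex) + (2 * α ^ 2 * R2 + 2 * (α * ε) ^ 2 * Ex2) / 2 with hs
  set I : ℝ := ∫ z : H × ℝ,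
      Real.exp (-(ψ (α * |z.2 - (inner ℝ z.1 wt : ℝ)| - α * ε * ‖z.1‖))) ∂P with hI
  have hI0 : 0 ≤ I := integral_nonneg fun z => (Real.exp_pos _).le
  have hIle : I ≤ Real.exp s := by
    have hc1 : Integrable (fun z : H × ℝ =>
        1 - (α * |z.2 - (inner ℝ z.1 wt : ℝ)| - α * ε * ‖z.1‖)) P := (integrable_const 1).sub hIf
    have hc2 : Integrable (fun z : H × ℝ =>
        (α * |z.2 - (inner ℝ z.1 wt : ℝ)| - α * ε * ‖z.1‖) ^ 2 / 2) P := hIf2.div_const 2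
    have h1 : I ≤ ∫ z : H × ℝ,
        (1 - (α * |z.2 - (inner ℝ z.1 wt : ℝ)| - α * ε * ‖z.1‖)
          + (α * |z.2 - (inner ℝ z.1 wt : ℝ)| - α * ε * ‖z.1‖) ^ 2 / 2) ∂P :=
      integral_mono hIE hIh hEle
    rw [integral_add hc1 hc2, integral_sub (integrable_const 1) hIf, integral_const,
      integral_div, hIntf] at h1
    simp only [measure_univ, ENNReal.toReal_one, smul_eq_mul, one_mul, probReal_univ, mul_one] at h1
    have h2 : (∫ z : H × ℝ, (α * |z.2 - (inner ℝ z.1 wt : ℝ)| - α * ε * ‖z.1‖) ^ 2 ∂P) / 2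
        ≤ (2 * α ^ 2 * R2 + 2 * (α * ε) ^ 2 * Ex2) / 2 := by linarith [hIntf2]
    have h3 : I ≤ 1 + s := by rw [hs]; linarith
    have h4 := Real.add_one_le_exp s
    linarith
  -- product structure
  set μ : Measure (Fin n → H × ℝ) := Measure.pi (fun _ : Fin n => P) with hμ
  haveI : IsProbabilityMeasure μ := by rw [hμ]; infer_instance
  have hvol : (volume : Measure (Fin n → H × ℝ)) = μ := by
    rw [MeasureTheory.volume_pi, hμ]
    simp only [hPvol]
  have hProdInt : ∫ ω : Fin n → H × ℝ,
      ∏ i, Real.exp (-(ψ (α * |(ω i).2 - (inner ℝ (ω i).1 wt : ℝ)| - α * ε * ‖(ω i).1‖))) ∂μ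
      = I ^ n := by
    rw [← hvol]
    simpa [MeasureTheory.volume_pi, hPvol] using MeasureTheory.integral_fintype_prod_eq_pow (𝕜 := ℝ) (ι := Fin n) (μ := P)
      (fun z : H × ℝ => Real.exp (-(ψ (α * |z.2 - (inner ℝ z.1 wt : ℝ)| - α * ε * ‖z.1‖))))
  have hIntProd : Integrable (fun ω : Fin n → H × ℝ =>
      ∏ i, Real.exp (-(ψ (α * |(ω i).2 - (inner ℝ (ω i).1 wt : ℝ)| - α * ε * ‖(ω i).1‖)))) μ := by
    rw [← hvol]
    exact MeasureTheory.Integrable.fintype_prod (𝕜 := ℝ) (fun _ => hIE)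
  -- Markov
  set c : ℝ := (n : ℝ) * α * (R1 - B) with hc
  set T : Set (Fin n → H × ℝ) := {ω | Real.exp (-c) ≤
      ∏ i, Real.exp (-(ψ (α * |(ω i).2 - (inner ℝ (ω i).1 wt : ℝ)| - α * ε * ‖(ω i).1‖)))} with hT
  have hMarkov := mul_meas_ge_le_integral_of_nonneg (μ := μ)
    (ae_of_all _ fun ω => Finset.prod_nonneg fun i _ => (Real.exp_pos _).le)
    hIntProd (Real.exp (-c))
  rw [hProdInt] at hMarkov
  have hcs : c + (n : ℝ) * s = Real.log δ := by
    have hlog : Real.log (1 / δ) = -Real.log δ := by rw [one_div, Real.log_inv]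
    rw [hc, hs, hB, hlog]
    field_simp
    ring
  have hTbound : (μ T).toReal ≤ δ := by
    have h2 : I ^ n ≤ Real.exp ((n : ℝ) * s) := by
      rw [Real.exp_nat_mul]
      exact pow_le_pow_left₀ hI0 hIle n
    have h3 : Real.exp (-c) * (μ T).toReal ≤ Real.exp ((n : ℝ) * s) := le_trans hMarkov h2
    have h4 : (μ T).toReal ≤ Real.exp c * Real.exp ((n : ℝ) * s) := by
      have h5 : Real.exp c * (Real.exp (-c) * (μ T).toReal) ≤
          Real.exp c * Real.exp ((n : ℝ) * s) :=
        mul_le_mul_of_nonneg_left h3 (Real.exp_pos c).le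
      rwa [← mul_assoc, ← Real.exp_add, add_neg_cancel, Real.exp_zero, one_mul] at h5
    rwa [← Real.exp_add, hcs, Real.exp_log hδ] at h4
  -- conclude
  have hGm : Measurable fun ω : Fin n → H × ℝ =>
      ∑ i, ψ (α * |(ω i).2 - (inner ℝ (ω i).1 wt : ℝ)| - α * ε * ‖(ω i).1‖) :=
    Finset.measurable_sum _ fun i _ => hgm.comp (measurable_pi_apply i)
  refine aux_prob_lower μ _ (measurableSet_le measurable_const (measurable_const.mul hGm))
    δ hδ.le ?_
  refine le_trans (ENNReal.toReal_mono (measure_ne_top _ _) (measure_mono ?_)) hTbound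
  intro ω hω
  simp only [Set.mem_compl_iff, Set.mem_setOf_eq, not_le, ge_iff_le] at hω
  show Real.exp (-c) ≤ _
  have hprodeq : (∏ i, Real.exp
      (-(ψ (α * |(ω i).2 - (inner ℝ (ω i).1 wt : ℝ)| - α * ε * ‖(ω i).1‖)))) =
      Real.exp (-(∑ i, ψ (α * |(ω i).2 - (inner ℝ (ω i).1 wt : ℝ)| - α * ε * ‖(ω i).1‖))) := by
    rw [← Real.exp_sum, ← Finset.sum_neg_distrib]
  rw [hprodeq]
  apply Real.exp_le_exp.2
  have hG : (∑ i, ψ (α * |(ω i).2 - (inner ℝ (ω i).1 wt : ℝ)| - α * ε * ‖(ω i).1‖)) < c := by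
    have h1 := mul_lt_mul_of_pos_left hω hnα
    rw [hc]
    calc (∑ i, ψ (α * |(ω i).2 - (inner ℝ (ω i).1 wt : ℝ)| - α * ε * ‖(ω i).1‖))
        = (n : ℝ) * α * (1 / ((n : ℝ) * α) *
          ∑ i, ψ (α * |(ω i).2 - (inner ℝ (ω i).1 wt : ℝ)| - α * ε * ‖(ω i).1‖)) := by
          field_simp
      _ < (n : ℝ) * α * (R1 - B) := h1
  linarith
end
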